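/- arXiv:1510.03378 — 7 statements merged into one kernel-verified Lean document; each statement's English description precedes it below -/
import Mathlib

section
/- Let (V, P) be a C¹ homogeneous solution of degree −α of the stationary Euler equations on ℝ³ ∖ {0}. If |v(σ)|² + 2α p(σ) = 0 for every σ on the unit sphere S², where v(σ) = V(σ) − (V(σ)·σ)σ and p(σ) = P(σ), then the solution is tangential: V(x) · x = 0 for all x ≠ 0. -/
noncomputable section

open Real MeasureTheory Metric

/-- Three-dimensional Euclidean space. -/
abbrev E3 : Type := EuclideanSpace ℝ (Fin 3)

/-- The `i`-th standard basis vector of `ℝ³`. -/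
def e3 (i : Fin 3) : E3 := EuclideanSpace.single i 1

/-- Make a vector in `ℝ³` out of three coordinates. -/
def vec3 (a b c : ℝ) : E3 := (WithLp.equiv 2 (Fin 3 → ℝ)).symm ![a, b, c]

/-- Divergence of a vector field on `ℝ³`. -/
def div3 (V : E3 → E3) (x : E3) : ℝ := ∑ i, fderiv ℝ V x (e3 i) i

/-- Curl (vorticity) of a vector field on `ℝ³`. -/
def curl3 (V : E3 → E3) (x : E3) : E3 :=
  vec3 (fderiv ℝ V x (e3 1) 2 - fderiv ℝ V x (e3 2) 1)
       (fderiv ℝ V x (e3 2) 0 - fderiv ℝ V x (e3 0) 2)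
       (fderiv ℝ V x (e3 0) 1 - fderiv ℝ V x (e3 1) 0)

/-- Cross product on `ℝ³`. -/
def cross3 (u v : E3) : E3 :=
  vec3 (u 1 * v 2 - u 2 * v 1) (u 2 * v 0 - u 0 * v 2) (u 0 * v 1 - u 1 * v 0)

/-- `(V, P)` is a `C¹` homogeneous solution of degree `-α` of the stationary
Euler equations on `ℝ³ \ {0}`: `V`, `P` are `C¹` away from the origin,
positively homogeneous of degrees `-α` and `-2α` respectively, and
`(V·∇)V + ∇P = 0`, `div V = 0` hold pointwise away from the origin. -/
structure IsHomogEuler (α : ℝ) (V : E3 → E3) (P : E3 → ℝ) : Prop where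
  contV : ContDiffOn ℝ 1 V {(0 : E3)}ᶜ
  contP : ContDiffOn ℝ 1 P {(0 : E3)}ᶜ
  homV : ∀ l : ℝ, 0 < l → ∀ x : E3, x ≠ 0 → V (l • x) = l ^ (-α) • V x
  homP : ∀ l : ℝ, 0 < l → ∀ x : E3, x ≠ 0 → P (l • x) = l ^ (-(2 * α)) * P x
  euler : ∀ x : E3, x ≠ 0 → fderiv ℝ V x (V x) + gradient P x = 0
  divFree : ∀ x : E3, x ≠ 0 → div3 V x = 0

local notation "⟪" x ", " y "⟫" => @inner ℝ _ _ x y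

lemma euler_ident {u : E3 → ℝ} {β : ℝ} {x : E3}
    (hd : DifferentiableAt ℝ u x)
    (hh : ∀ l : ℝ, 0 < l → u (l • x) = l ^ β * u x) :
    fderiv ℝ u x x = β * u x := by
  have h1 : HasDerivAt (fun l : ℝ => l • x) ((1:ℝ) • x) 1 :=
    (hasDerivAt_id (1:ℝ)).smul_const x
  have h2 : HasDerivAt (fun l : ℝ => u (l • x)) (fderiv ℝ u x x) 1 := by
    have hu : HasFDerivAt u (fderiv ℝ u x) ((1:ℝ) • x) := by
      rw [one_smul]; exact hd.hasFDerivAt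
    have h := hu.comp_hasDerivAt 1 h1
    rw [one_smul] at h
    exact h
  have h3 : HasDerivAt (fun l : ℝ => l ^ β * u x) (β * u x) 1 := by
    simpa using (Real.hasDerivAt_rpow_const (x := (1:ℝ)) (p := β)
      (Or.inl one_ne_zero)).mul_const (u x)
  have heq : (fun l : ℝ => l ^ β * u x) =ᶠ[nhds 1] fun l : ℝ => u (l • x) := by
    filter_upwards [Ioi_mem_nhds one_pos] with l hl
    exact (hh l hl).symm
  exact (h2.congr_of_eventuallyEq heq).unique h3

lemma diffAt_cdo {F : Type*} [NormedAddCommGroup F] [NormedSpace ℝ F] {f : E3 → F}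
    (hf : ContDiffOn ℝ 1 f {(0:E3)}ᶜ) {x : E3} (hx : x ≠ 0) :
    DifferentiableAt ℝ f x := by
  have hxm : x ∈ ({(0:E3)} : Set E3)ᶜ := by simpa using hx
  exact ((hf x hxm).contDiffAt (isOpen_compl_singleton.mem_nhds hxm)).differentiableAt one_ne_zero

lemma g_fderiv (V : E3 → E3) {x : E3} (hV : DifferentiableAt ℝ V x) (w : E3) :
    fderiv ℝ (fun y => ⟪V y, y⟫) x w = ⟪fderiv ℝ V x w, x⟫ + ⟪V x, w⟫ := by
  have h : HasFDerivAt (fun y => ⟪V y, y⟫)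
      ((fderivInnerCLM ℝ (V x, x)).comp ((fderiv ℝ V x).prod (ContinuousLinearMap.id ℝ E3))) x :=
    hV.hasFDerivAt.inner ℝ (hasFDerivAt_id x)
  rw [h.fderiv]
  simp [fderivInnerCLM_apply, add_comm]

lemma sum_basis (σ : E3) : ∑ i, σ i • e3 i = σ := by
  ext j
  simp [e3, Fin.sum_univ_three, EuclideanSpace.single_apply]
  fin_cases j <;> simp

/-- Homogeneity of `g y = ⟪V y, y⟫`. -/
lemma g_hom {α : ℝ} {V : E3 → E3} {P : E3 → ℝ} (h : IsHomogEuler α V P)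
    {x : E3} (hx : x ≠ 0) {l : ℝ} (hl : 0 < l) :
    ⟪V (l • x), l • x⟫ = l ^ (1 - α) * ⟪V x, x⟫ := by
  rw [h.homV l hl x hx, real_inner_smul_left, real_inner_smul_right,
    show (1 - α) = -α + 1 by ring, Real.rpow_add hl, Real.rpow_one]
  ring

/-- Key pointwise identity `V·∇(V·x) = |V|² + 2αP`. -/
lemma key_ident {α : ℝ} {V : E3 → E3} {P : E3 → ℝ} (h : IsHomogEuler α V P)
    {x : E3} (hx : x ≠ 0) :
    fderiv ℝ (fun y => ⟪V y, y⟫) x (V x) = ‖V x‖ ^ 2 + 2 * α * P x := by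
  have hV := diffAt_cdo h.contV hx
  have hP := diffAt_cdo h.contP hx
  have h1 := g_fderiv V hV (V x)
  have h2 : fderiv ℝ V x (V x) = - gradient P x := by
    have := h.euler x hx
    exact eq_neg_of_add_eq_zero_left this
  have h3 : ⟪gradient P x, x⟫ = fderiv ℝ P x x := InnerProductSpace.toDual_symm_apply
  have h4 : fderiv ℝ P x x = (-(2 * α)) * P x :=
    euler_ident hP (fun l hl => h.homP l hl x hx)
  rw [h1, h2, inner_neg_left, h3, h4, real_inner_self_eq_norm_sq]
  ring

/-- If `α ≠ 0` and the Bernoulli-type relation holds, then `V·σ ≤ 0` on the sphere. -/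
lemma sphere_nonpos {α : ℝ} {V : E3 → E3} {P : E3 → ℝ} (h : IsHomogEuler α V P) (hα : α ≠ 0)
    (hyp : ∀ σ : E3, ‖σ‖ = 1 → ‖V σ‖ ^ 2 + 2 * α * P σ = ⟪V σ, σ⟫ ^ 2) :
    ∀ σ : E3, ‖σ‖ = 1 → ⟪V σ, σ⟫ ≤ 0 := by
  set g : E3 → ℝ := fun y => ⟪V y, y⟫ with hg_def
  set nsq : E3 → ℝ := fun y => ⟪y, y⟫ with hnsq_def
  set G : E3 → ℝ := fun y => nsq y ^ ((α - 1) / 2) * g y with hG_def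
  have hnsq_pos : ∀ x : E3, x ≠ 0 → 0 < nsq x := by
    intro x hx
    have hh : nsq x = ‖x‖ ^ 2 := real_inner_self_eq_norm_sq x
    rw [hh]
    exact pow_pos (norm_pos_iff.2 hx) 2
  have hnsq_diff : ∀ x : E3, DifferentiableAt ℝ nsq x := fun x =>
    differentiableAt_id.inner ℝ differentiableAt_id
  have hg_diff : ∀ x : E3, x ≠ 0 → DifferentiableAt ℝ g x := fun x hx =>
    (diffAt_cdo h.contV hx).inner ℝ differentiableAt_id
  have hG_diff : ∀ x : E3, x ≠ 0 → DifferentiableAt ℝ G x := fun x hx =>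
    (((hnsq_diff x).rpow_const (Or.inl (hnsq_pos x hx).ne'))).mul (hg_diff x hx)
  have hG_hom : ∀ x : E3, x ≠ 0 → ∀ l : ℝ, 0 < l → G (l • x) = G x := by
    intro x hx l hl
    have h1 : nsq (l • x) = l ^ (2:ℕ) * nsq x := by
      simp only [hnsq_def, real_inner_smul_left, real_inner_smul_right]
      ring
    have h2 : (l ^ (2:ℕ) * nsq x) ^ ((α - 1) / 2)
        = l ^ (α - 1) * nsq x ^ ((α - 1) / 2) := by
      rw [Real.mul_rpow (by positivity) (hnsq_pos x hx).le, ← Real.rpow_natCast l 2,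
        ← Real.rpow_mul hl.le]
      congr 1
      ring
    have h3 : g (l • x) = l ^ (1 - α) * g x := g_hom h hx hl
    rw [hG_def]
    simp only [h1, h2, h3]
    rw [show l ^ (α - 1) * nsq x ^ ((α - 1) / 2) * (l ^ (1 - α) * g x)
        = (l ^ (α - 1) * l ^ (1 - α)) * (nsq x ^ ((α - 1) / 2) * g x) by ring,
      ← Real.rpow_add hl]
    norm_num
  -- maximum over the sphere
  have hne : (sphere (0:E3) 1).Nonempty := by
    refine ⟨e3 0, ?_⟩
    simp [e3, mem_sphere_zero_iff_norm, EuclideanSpace.norm_single]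
  have hcont : ContinuousOn G (sphere (0:E3) 1) := by
    intro x hx
    have hx0 : x ≠ 0 := by
      rw [mem_sphere_zero_iff_norm] at hx
      intro hc; rw [hc] at hx; simp at hx
    exact (hG_diff x hx0).continuousAt.continuousWithinAt
  obtain ⟨σ₀, hσ₀mem, hmax⟩ := (isCompact_sphere (0:E3) 1).exists_isMaxOn hne hcont
  have hσ₀ : ‖σ₀‖ = 1 := mem_sphere_zero_iff_norm.1 hσ₀mem
  have hσ₀ne : σ₀ ≠ 0 := by intro hc; rw [hc] at hσ₀; simp at hσ₀
  -- global max on ℝ³ \ {0}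
  have hmax' : ∀ x : E3, x ≠ 0 → G x ≤ G σ₀ := by
    intro x hx
    have hnx : (0:ℝ) < ‖x‖ := norm_pos_iff.2 hx
    set u : E3 := ‖x‖⁻¹ • x with hu_def
    have hu1 : ‖u‖ = 1 := by
      rw [hu_def, norm_smul, norm_inv, norm_norm, inv_mul_cancel₀ hnx.ne']
    have hune : u ≠ 0 := by intro hc; rw [hc] at hu1; simp at hu1
    have hxu : ‖x‖ • u = x := by
      rw [hu_def, smul_smul, mul_inv_cancel₀ hnx.ne', one_smul]
    calc G x = G (‖x‖ • u) := by rw [hxu]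
    _ = G u := hG_hom u hune ‖x‖ hnx
    _ ≤ G σ₀ := hmax (mem_sphere_zero_iff_norm.2 hu1)
  have hloc : IsLocalMax G σ₀ := by
    have hmem : σ₀ ∈ ({(0:E3)} : Set E3)ᶜ := by simpa using hσ₀ne
    filter_upwards [isOpen_compl_singleton.mem_nhds hmem] with x hx
    exact hmax' x (by simpa using hx)
  have hder0 : fderiv ℝ G σ₀ = 0 := hloc.fderiv_eq_zero
  -- compute the derivative of G at σ₀
  set f : ℝ := ⟪V σ₀, σ₀⟫ with hf_def
  set v : E3 := V σ₀ - f • σ₀ with hv_def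
  have hσv : ⟪σ₀, v⟫ = 0 := by
    rw [hv_def, inner_sub_right, real_inner_smul_right, real_inner_comm (V σ₀) σ₀,
      ← hf_def, real_inner_self_eq_norm_sq, hσ₀]
    norm_num
  have hnsq1 : nsq σ₀ = 1 := by
    have hh : nsq σ₀ = ‖σ₀‖ ^ 2 := real_inner_self_eq_norm_sq σ₀
    rw [hh, hσ₀]; norm_num
  have hDn : HasFDerivAt nsq
      ((fderivInnerCLM ℝ (σ₀, σ₀)).comp ((ContinuousLinearMap.id ℝ E3).prod
        (ContinuousLinearMap.id ℝ E3))) σ₀ :=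
    (hasFDerivAt_id σ₀).inner ℝ (hasFDerivAt_id σ₀)
  have hr : HasFDerivAt (fun y => nsq y ^ ((α - 1) / 2))
      (((α - 1) / 2 * nsq σ₀ ^ ((α - 1) / 2 - 1)) •
        ((fderivInnerCLM ℝ (σ₀, σ₀)).comp ((ContinuousLinearMap.id ℝ E3).prod
          (ContinuousLinearMap.id ℝ E3)))) σ₀ :=
    hDn.rpow_const (Or.inl (by rw [hnsq1]; norm_num))
  have hgσ : HasFDerivAt g (fderiv ℝ g σ₀) σ₀ := (hg_diff σ₀ hσ₀ne).hasFDerivAt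
  have hGσ : HasFDerivAt G
      ((nsq σ₀ ^ ((α - 1) / 2)) • (fderiv ℝ g σ₀) + g σ₀ •
        (((α - 1) / 2 * nsq σ₀ ^ ((α - 1) / 2 - 1)) •
          ((fderivInnerCLM ℝ (σ₀, σ₀)).comp ((ContinuousLinearMap.id ℝ E3).prod
            (ContinuousLinearMap.id ℝ E3))))) σ₀ := hr.mul hgσ
  have hv0 : fderiv ℝ g σ₀ v = 0 := by
    have := hGσ.fderiv
    rw [hder0] at this
    have happ := congrArg (fun (L : E3 →L[ℝ] ℝ) => L v) this.symm
    simp only [ContinuousLinearMap.zero_apply, ContinuousLinearMap.add_apply,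
      ContinuousLinearMap.smul_apply, ContinuousLinearMap.comp_apply,
      ContinuousLinearMap.prod_apply, ContinuousLinearMap.coe_id', id_eq,
      fderivInnerCLM_apply, hnsq1, Real.one_rpow, one_smul, smul_eq_mul] at happ
    rw [real_inner_comm σ₀ v, hσv] at happ
    linarith [happ]
  have hgσσ : fderiv ℝ g σ₀ σ₀ = (1 - α) * g σ₀ :=
    euler_ident (hg_diff σ₀ hσ₀ne) (fun l hl => g_hom h hσ₀ne hl)
  have hVdecomp : V σ₀ = f • σ₀ + v := by rw [hv_def]; abel
  have hkey : fderiv ℝ g σ₀ (V σ₀) = ‖V σ₀‖ ^ 2 + 2 * α * P σ₀ := key_ident h hσ₀ne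
  have hlhs : fderiv ℝ g σ₀ (V σ₀) = f * ((1 - α) * g σ₀) := by
    rw [hVdecomp, map_add, _root_.map_smul, hv0, hgσσ]
    simp
  have hgf : g σ₀ = f := rfl
  have hαf : α * f ^ 2 = 0 := by
    have hhyp := hyp σ₀ hσ₀
    rw [hlhs, hgf] at hkey
    rw [← hf_def] at hhyp
    nlinarith [hkey, hhyp]
  have hf0 : f = 0 := by
    have : f ^ 2 = 0 := by
      rcases mul_eq_zero.1 hαf with h' | h'
      · exact absurd h' hα
      · exact h'
    exact pow_eq_zero_iff two_ne_zero |>.mp this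
  intro σ hσ
  have hσne : σ ≠ 0 := by intro hc; rw [hc] at hσ; simp at hσ
  have h1 : G σ ≤ G σ₀ := hmax' σ hσne
  have hGσ' : G σ = g σ := by
    have h1 : nsq σ = 1 := by
      have hh : nsq σ = ‖σ‖ ^ 2 := real_inner_self_eq_norm_sq σ
      rw [hh, hσ]; norm_num
    show nsq σ ^ ((α - 1) / 2) * g σ = g σ
    rw [h1, Real.one_rpow, one_mul]
  have hGσ₀' : G σ₀ = g σ₀ := by
    show nsq σ₀ ^ ((α - 1) / 2) * g σ₀ = g σ₀
    rw [hnsq1, Real.one_rpow, one_mul]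
  rw [hGσ', hGσ₀', hgf, hf0] at h1
  exact h1

lemma neg_isHomogEuler {α : ℝ} {V : E3 → E3} {P : E3 → ℝ} (h : IsHomogEuler α V P) :
    IsHomogEuler α (fun y => -V y) P := by
  constructor
  · exact h.contV.neg
  · exact h.contP
  · intro l hl x hx; rw [h.homV l hl x hx, smul_neg]
  · exact h.homP
  · intro x hx
    have hd : fderiv ℝ (fun y => -V y) x = -fderiv ℝ V x := fderiv_neg
    rw [hd]
    simp only [ContinuousLinearMap.neg_apply, map_neg, neg_neg]
    exact h.euler x hx
  · intro x hx
    have hd : fderiv ℝ (fun y => -V y) x = -fderiv ℝ V x := fderiv_neg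
    have hdv : div3 V x = 0 := h.divFree x hx
    show ∑ i, fderiv ℝ (fun y => -V y) x (e3 i) i = 0
    rw [hd]
    have : ∀ i : Fin 3, ((-fderiv ℝ V x) (e3 i)) i = -(fderiv ℝ V x (e3 i) i) := by
      intro i
      simp [ContinuousLinearMap.neg_apply]
    rw [Finset.sum_congr rfl (fun i _ => this i)]
    rw [Finset.sum_neg_distrib]
    have : ∑ i, fderiv ℝ V x (e3 i) i = 0 := hdv
    rw [this, neg_zero]

lemma sphere_zero {α : ℝ} {V : E3 → E3} {P : E3 → ℝ} (h : IsHomogEuler α V P) (hα : α ≠ 0)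
    (hyp : ∀ σ : E3, ‖σ‖ = 1 →
      ‖V σ - (⟪V σ, σ⟫ : ℝ) • σ‖ ^ 2 + 2 * α * P σ = 0) :
    ∀ σ : E3, ‖σ‖ = 1 → ⟪V σ, σ⟫ = 0 := by
  have hyp' : ∀ σ : E3, ‖σ‖ = 1 → ‖V σ‖ ^ 2 + 2 * α * P σ = ⟪V σ, σ⟫ ^ 2 := by
    intro σ hσ
    have h1 := hyp σ hσ
    have h2 : ‖V σ - (⟪V σ, σ⟫ : ℝ) • σ‖ ^ 2 = ‖V σ‖ ^ 2 - ⟪V σ, σ⟫ ^ 2 := by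
      rw [norm_sub_sq_real, real_inner_smul_right, norm_smul, hσ, mul_one,
        Real.norm_eq_abs, sq_abs]
      ring
    rw [h2] at h1
    linarith
  have hyp'' : ∀ σ : E3, ‖σ‖ = 1 →
      ‖(fun y => -V y) σ‖ ^ 2 + 2 * α * P σ = (⟪(fun y => -V y) σ, σ⟫ : ℝ) ^ 2 := by
    intro σ hσ
    have := hyp' σ hσ
    simp only [norm_neg, inner_neg_left, neg_sq]
    exact this
  have h1 := sphere_nonpos h hα hyp'
  have h2 := sphere_nonpos (neg_isHomogEuler h) hα hyp''
  intro σ hσ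
  have := h2 σ hσ
  simp only [inner_neg_left, neg_nonpos] at this
  exact le_antisymm (h1 σ hσ) this

lemma sphere_zero_alpha0 {V : E3 → E3} {P : E3 → ℝ} (h : IsHomogEuler 0 V P)
    (hyp : ∀ σ : E3, ‖σ‖ = 1 → V σ = (⟪V σ, σ⟫ : ℝ) • σ) :
    ∀ σ : E3, ‖σ‖ = 1 → ⟪V σ, σ⟫ = 0 := by
  set hfun : E3 → ℝ := fun y => ⟪V y, y⟫ * (⟪y, y⟫)⁻¹ with hfun_def
  have hVeq : ∀ x : E3, x ≠ 0 → V x = hfun x • x := by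
    intro x hx
    have hnx : (0:ℝ) < ‖x‖ := norm_pos_iff.2 hx
    set u : E3 := ‖x‖⁻¹ • x with hu_def
    have hu1 : ‖u‖ = 1 := by
      rw [hu_def, norm_smul, norm_inv, norm_norm, inv_mul_cancel₀ hnx.ne']
    have hune : u ≠ 0 := fun hc => by rw [hc] at hu1; simp at hu1
    have hxu : x = ‖x‖ • u := by
      rw [hu_def, smul_smul, mul_inv_cancel₀ hnx.ne', one_smul]
    have h1 : V x = V u := by
      conv_lhs => rw [hxu]
      rw [h.homV ‖x‖ hnx u hune]
      norm_num
    have h2 := hyp u hu1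
    set c : ℝ := ⟪V u, u⟫ with hc_def
    have hVx : V x = c • u := by rw [h1, h2]
    have huu : (⟪u, u⟫ : ℝ) = 1 := by rw [real_inner_self_eq_norm_sq, hu1]; norm_num
    have hVxx : (⟪V x, x⟫ : ℝ) = c * ‖x‖ := by
      conv_lhs => rw [hVx, hxu]
      rw [real_inner_smul_left, real_inner_smul_right, huu]
      ring
    have hxx : (⟪x, x⟫ : ℝ) = ‖x‖ ^ 2 := real_inner_self_eq_norm_sq x
    have hfx : hfun x = c / ‖x‖ := by
      rw [hfun_def]
      dsimp only
      rw [hVxx, hxx]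
      field_simp
    rw [hVx, hfx, hu_def, smul_smul, div_eq_mul_inv]
  intro σ hσ
  have hσne : σ ≠ 0 := fun hc => by rw [hc] at hσ; simp at hσ
  have hnsqσ : (⟪σ, σ⟫ : ℝ) = 1 := by
    rw [real_inner_self_eq_norm_sq, hσ]; norm_num
  have hg_diff : DifferentiableAt ℝ (fun y => (⟪V y, y⟫ : ℝ)) σ :=
    (diffAt_cdo h.contV hσne).inner ℝ differentiableAt_id
  have hn_diff : DifferentiableAt ℝ (fun y : E3 => (⟪y, y⟫ : ℝ)) σ :=
    differentiableAt_id.inner ℝ differentiableAt_id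
  have hfun_diff : DifferentiableAt ℝ hfun σ := by
    rw [hfun_def]
    exact hg_diff.mul (hn_diff.inv (show (⟪σ, σ⟫ : ℝ) ≠ 0 by rw [hnsqσ]; norm_num))
  have hfun_hom : ∀ l : ℝ, 0 < l → hfun (l • σ) = l ^ (-1 : ℝ) * hfun σ := by
    intro l hl
    have hg2 : (⟪V (l • σ), l • σ⟫ : ℝ) = l * ⟪V σ, σ⟫ := by
      rw [g_hom h hσne hl, show (1 - (0:ℝ)) = 1 by norm_num, Real.rpow_one]
    have hn2 : (⟪(l • σ : E3), (l • σ : E3)⟫ : ℝ) = l * (l * ⟪σ, σ⟫) := by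
      rw [real_inner_smul_left, real_inner_smul_right]
    have hnn : (⟪σ, σ⟫ : ℝ) ≠ 0 := by rw [hnsqσ]; norm_num
    rw [hfun_def]
    dsimp only
    rw [hg2, hn2, Real.rpow_neg_one]
    generalize (⟪V σ, σ⟫ : ℝ) = a
    generalize hσn : (⟪σ, σ⟫ : ℝ) = n at hnn ⊢
    field_simp
  have hE : fderiv ℝ hfun σ σ = (-1) * hfun σ := euler_ident hfun_diff hfun_hom
  have hev : V =ᶠ[nhds σ] fun y => hfun y • y := by
    have hmem : σ ∈ ({(0:E3)} : Set E3)ᶜ := by simpa using hσne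
    filter_upwards [isOpen_compl_singleton.mem_nhds hmem] with y hy
    exact hVeq y (by simpa using hy)
  have hHF : HasFDerivAt (fun y => hfun y • y)
      (hfun σ • ContinuousLinearMap.id ℝ E3 + (fderiv ℝ hfun σ).smulRight σ) σ :=
    hfun_diff.hasFDerivAt.smul (hasFDerivAt_id σ)
  have hfd : fderiv ℝ V σ
      = hfun σ • ContinuousLinearMap.id ℝ E3 + (fderiv ℝ hfun σ).smulRight σ := by
    rw [hev.fderiv_eq]
    exact hHF.fderiv
  have hdiv : ∑ i, fderiv ℝ V σ (e3 i) i = 0 := h.divFree σ hσne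
  have hterm : ∀ i : Fin 3,
      ((hfun σ • ContinuousLinearMap.id ℝ E3 + (fderiv ℝ hfun σ).smulRight σ) (e3 i)) i
      = hfun σ + fderiv ℝ hfun σ (e3 i) * σ i := by
    intro i
    simp [ContinuousLinearMap.add_apply, ContinuousLinearMap.smul_apply,
      ContinuousLinearMap.smulRight_apply, PiLp.add_apply, PiLp.smul_apply,
      smul_eq_mul, e3, EuclideanSpace.single_apply, mul_comm]
  have hsum : ∑ i, fderiv ℝ V σ (e3 i) i = 2 * hfun σ := by
    rw [hfd, Finset.sum_congr rfl (fun i _ => hterm i), Finset.sum_add_distrib]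
    have h1 : ∑ _i : Fin 3, hfun σ = 3 * hfun σ := by
      simp [Finset.sum_const]
    have h2 : ∑ i : Fin 3, fderiv ℝ hfun σ (e3 i) * σ i = fderiv ℝ hfun σ σ := by
      calc ∑ i : Fin 3, fderiv ℝ hfun σ (e3 i) * σ i
          = ∑ i : Fin 3, fderiv ℝ hfun σ (σ i • e3 i) := by
            refine Finset.sum_congr rfl fun i _ => ?_
            rw [_root_.map_smul, smul_eq_mul]
            ring
        _ = fderiv ℝ hfun σ (∑ i, σ i • e3 i) := by rw [map_sum]
        _ = fderiv ℝ hfun σ σ := by rw [sum_basis σ]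
    rw [h1, h2, hE]
    ring
  rw [hsum] at hdiv
  have hf0 : hfun σ = 0 := by linarith
  have hval : (⟪V σ, σ⟫ : ℝ) * (⟪σ, σ⟫)⁻¹ = 0 := hf0
  rw [hnsqσ] at hval
  simpa using hval

/-- if `|v|² + 2αp = 0` on the unit sphere then the flow is
tangential (rotational). -/
theorem stmt6 (α : ℝ) (V : E3 → E3) (P : E3 → ℝ) (h : IsHomogEuler α V P)
    (hyp : ∀ σ : E3, ‖σ‖ = 1 →
      ‖V σ - (inner ℝ (V σ) σ : ℝ) • σ‖ ^ 2 + 2 * α * P σ = 0) :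
    ∀ x : E3, x ≠ 0 → (inner ℝ (V x) x : ℝ) = 0 := by
  have hsph : ∀ σ : E3, ‖σ‖ = 1 → (⟪V σ, σ⟫ : ℝ) = 0 := by
    by_cases hα : α = 0
    · subst hα
      refine sphere_zero_alpha0 h ?_
      intro σ hσ
      have h1 := hyp σ hσ
      rw [show (2:ℝ) * 0 * P σ = 0 by ring, add_zero] at h1
      have h2 : V σ - (⟪V σ, σ⟫ : ℝ) • σ = 0 :=
        norm_eq_zero.mp (pow_eq_zero_iff two_ne_zero |>.mp h1)
      exact (sub_eq_zero.mp h2)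
    · exact sphere_zero h hα hyp
  intro x hx
  have hnx : (0:ℝ) < ‖x‖ := norm_pos_iff.2 hx
  set u : E3 := ‖x‖⁻¹ • x with hu_def
  have hu1 : ‖u‖ = 1 := by
    rw [hu_def, norm_smul, norm_inv, norm_norm, inv_mul_cancel₀ hnx.ne']
  have hune : u ≠ 0 := fun hc => by rw [hc] at hu1; simp at hu1
  have hxu : x = ‖x‖ • u := by
    rw [hu_def, smul_smul, mul_inv_cancel₀ hnx.ne', one_smul]
  have h1 : (⟪V x, x⟫ : ℝ) = ‖x‖ ^ (1 - α) * ⟪V u, u⟫ := by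
    conv_lhs => rw [hxu]
    exact g_hom h hune hnx
  rw [h1, hsph u hu1, mul_zero]
end
end

section
/- Let α > 0 and let (V, P) be a C¹ homogeneous solution of degree −α of the stationary Euler equations on ℝ³ ∖ {0}. If P(x) ≥ 0 for all x ≠ 0, then V and P vanish identically on ℝ³ ∖ {0}. -/
noncomputable section

open Real MeasureTheory Metric

open InnerProductSpace RealInnerProductSpace Filter Set Topology

/-- Euler's relation for a function positively homogeneous of degree `β` that is
differentiable at `x`. -/
lemma homog_fderiv_self {f : E3 → ℝ} {β : ℝ} {x : E3}
    (hf : DifferentiableAt ℝ f x) (hhom : ∀ l : ℝ, 0 < l → f (l • x) = l ^ β * f x) :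
    fderiv ℝ f x x = β * f x := by
  have hsm : HasDerivAt (fun l : ℝ => l • x) x 1 := by
    simpa using (hasDerivAt_id (1 : ℝ)).smul_const x
  have h1 : HasDerivAt (fun l : ℝ => f (l • x)) (fderiv ℝ f x x) 1 := by
    have hfA : HasFDerivAt f (fderiv ℝ f x) ((1 : ℝ) • x) := by
      rw [one_smul]; exact hf.hasFDerivAt
    have := hfA.comp_hasDerivAt (1 : ℝ) hsm
    exact this
  have h2 : HasDerivAt (fun l : ℝ => l ^ β * f x) (β * f x) 1 := by
    have := (Real.hasDerivAt_rpow_const (x := (1 : ℝ)) (p := β)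
      (Or.inl one_ne_zero)).mul_const (f x)
    simpa using this
  have heq : (fun l : ℝ => l ^ β * f x) =ᶠ[nhds (1 : ℝ)] (fun l : ℝ => f (l • x)) := by
    filter_upwards [eventually_gt_nhds zero_lt_one] with l hl
    exact (hhom l hl).symm
  exact ((h2.congr_of_eventuallyEq heq.symm).unique h1).symm

set_option maxHeartbeats 1000000 in
/-- for `α > 0`, nonnegative pressure forces the solution
to be trivial. -/
theorem stmt8 (α : ℝ) (hα : 0 < α) (V : E3 → E3) (P : E3 → ℝ)
    (h : IsHomogEuler α V P) (hP : ∀ x : E3, x ≠ 0 → 0 ≤ P x) :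
    ∀ x : E3, x ≠ 0 → V x = 0 ∧ P x = 0 := by
  have hopen : IsOpen ({(0 : E3)}ᶜ) := isOpen_compl_singleton
  set g : E3 → ℝ := fun y => ⟪V y, y⟫_ℝ with hg
  have hVd : ∀ x : E3, x ≠ 0 → DifferentiableAt ℝ V x := fun x hx =>
    ((h.contV.contDiffAt (hopen.mem_nhds hx)).differentiableAt one_ne_zero)
  have hPd : ∀ x : E3, x ≠ 0 → DifferentiableAt ℝ P x := fun x hx =>
    ((h.contP.contDiffAt (hopen.mem_nhds hx)).differentiableAt one_ne_zero)
  -- the derivative of g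
  have hgD : ∀ x : E3, x ≠ 0 → HasFDerivAt g
      ((fderivInnerCLM ℝ (V x, x)).comp ((fderiv ℝ V x).prod (ContinuousLinearMap.id ℝ E3))) x :=
    fun x hx => (hVd x hx).hasFDerivAt.inner ℝ (hasFDerivAt_id x)
  -- Euler relation for P
  have hPrel : ∀ x : E3, x ≠ 0 → fderiv ℝ P x x = -(2 * α) * P x := fun x hx =>
    homog_fderiv_self (hPd x hx) (fun l hl => h.homP l hl x hx)
  -- gradient vs fderiv
  have hgrad : ∀ x : E3, x ≠ 0 → ∀ v : E3, ⟪gradient P x, v⟫_ℝ = fderiv ℝ P x v := by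
    intro x hx v
    rw [gradient]
    exact InnerProductSpace.toDual_symm_apply
  -- key identity: V·∇g = ‖V‖² + 2αP
  have key : ∀ x : E3, x ≠ 0 →
      fderiv ℝ g x (V x) = ‖V x‖ ^ 2 + 2 * α * P x := by
    intro x hx
    rw [(hgD x hx).fderiv]
    have hE : fderiv ℝ V x (V x) = -gradient P x := by
      have := h.euler x hx
      linear_combination (norm := module) this
    simp only [ContinuousLinearMap.comp_apply, ContinuousLinearMap.prod_apply,
      ContinuousLinearMap.id_apply, fderivInnerCLM_apply, hE]
    rw [inner_neg_left, hgrad x hx x, hPrel x hx, real_inner_self_eq_norm_sq]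
    ring
  -- homogeneity of g
  have hghom : ∀ x : E3, x ≠ 0 → ∀ l : ℝ, 0 < l → g (l • x) = l ^ (1 - α) * g x := by
    intro x hx l hl
    simp only [hg]
    rw [h.homV l hl x hx, real_inner_smul_left, real_inner_smul_right]
    rw [show (1 : ℝ) - α = -α + 1 by ring, Real.rpow_add hl, Real.rpow_one]
    ring
  -- g is C¹ hence strictly differentiable away from 0
  have hgC : ∀ x : E3, x ≠ 0 → ContDiffAt ℝ 1 g x := fun x hx =>
    (h.contV.contDiffAt (hopen.mem_nhds hx)).inner ℝ contDiffAt_id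
  -- at any local extremum of g on the unit sphere, g vanishes
  have hextr0 : ∀ x₀ : E3, ‖x₀‖ = 1 → IsLocalExtrOn g (sphere (0 : E3) 1) x₀ → g x₀ = 0 := by
    intro x₀ hx₀n hext
    have hx₀ : x₀ ≠ 0 := by intro h0; rw [h0, norm_zero] at hx₀n; norm_num at hx₀n
    have hset : (sphere (0 : E3) 1) = {y : E3 | (fun y : E3 => ⟪y, y⟫_ℝ) y
        = (fun y : E3 => ⟪y, y⟫_ℝ) x₀} := by
      ext y
      simp only [mem_sphere_zero_iff_norm, Set.mem_setOf_eq, real_inner_self_eq_norm_sq, hx₀n]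
      constructor <;> intro hy <;> nlinarith [norm_nonneg y]
    rw [hset] at hext
    have hf' : HasStrictFDerivAt (fun y : E3 => ⟪y, y⟫_ℝ)
        ((fderivInnerCLM ℝ (x₀, x₀)).comp ((ContinuousLinearMap.id ℝ E3).prod
          (ContinuousLinearMap.id ℝ E3))) x₀ :=
      (hasStrictFDerivAt_id x₀).inner ℝ (hasStrictFDerivAt_id x₀)
    have hφ' : HasStrictFDerivAt g (fderiv ℝ g x₀) x₀ :=
      (hgC x₀ hx₀).hasStrictFDerivAt one_ne_zero
    obtain ⟨a, b, hab, hsum⟩ := hext.exists_multipliers_of_hasStrictFDerivAt_1d hf' hφ'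
    -- evaluate at x₀ and at V x₀
    have hx₀self : ⟪x₀, x₀⟫_ℝ = 1 := by
      rw [real_inner_self_eq_norm_sq, hx₀n]; norm_num
    have hgx : fderiv ℝ g x₀ x₀ = (1 - α) * g x₀ :=
      homog_fderiv_self ((hgC x₀ hx₀).differentiableAt one_ne_zero)
        (fun l hl => hghom x₀ hx₀ l hl)
    have e1 : a * 2 + b * ((1 - α) * g x₀) = 0 := by
      have := DFunLike.congr_fun hsum x₀
      simp only [ContinuousLinearMap.add_apply, ContinuousLinearMap.coe_smul',
        Pi.smul_apply, smul_eq_mul, ContinuousLinearMap.comp_apply,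
        ContinuousLinearMap.prod_apply, ContinuousLinearMap.id_apply,
        fderivInnerCLM_apply, ContinuousLinearMap.zero_apply, hx₀self, hgx] at this
      linarith
    have e2 : a * (2 * g x₀) + b * (‖V x₀‖ ^ 2 + 2 * α * P x₀) = 0 := by
      have := DFunLike.congr_fun hsum (V x₀)
      simp only [ContinuousLinearMap.add_apply, ContinuousLinearMap.coe_smul',
        Pi.smul_apply, smul_eq_mul, ContinuousLinearMap.comp_apply,
        ContinuousLinearMap.prod_apply, ContinuousLinearMap.id_apply,
        fderivInnerCLM_apply, ContinuousLinearMap.zero_apply, key x₀ hx₀] at this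
      have hcomm : ⟪x₀, V x₀⟫_ℝ = g x₀ := real_inner_comm _ _
      have hg' : ⟪V x₀, x₀⟫_ℝ = g x₀ := rfl
      rw [hcomm, hg'] at this
      linarith
    have hb : b ≠ 0 := by
      intro hb0
      have ha : a ≠ 0 := by
        intro ha0
        exact hab (by simp [ha0, hb0, Prod.ext_iff])
      rw [hb0] at e1
      have : a = 0 := by linarith
      exact ha this
    -- Cauchy-Schwarz
    have hCS : g x₀ ^ 2 ≤ ‖V x₀‖ ^ 2 := by
      have := abs_real_inner_le_norm (V x₀) x₀
      rw [hx₀n, mul_one] at this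
      calc g x₀ ^ 2 = |⟪V x₀, x₀⟫_ℝ| ^ 2 := by rw [sq_abs]
        _ ≤ ‖V x₀‖ ^ 2 := by nlinarith [abs_nonneg (⟪V x₀, x₀⟫_ℝ), norm_nonneg (V x₀)]
    -- from e1: a = -b (1-α) g x₀ / 2; substitute in e2
    have hkey : ‖V x₀‖ ^ 2 + 2 * α * P x₀ = (1 - α) * g x₀ ^ 2 := by
      have ha : a = -(b * ((1 - α) * g x₀)) / 2 := by linarith
      rw [ha] at e2
      field_simp at e2
      have h' : b * ((‖V x₀‖ ^ 2 + 2 * α * P x₀) - (1 - α) * g x₀ ^ 2) = 0 := by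
        linear_combination e2
      rcases mul_eq_zero.mp h' with h'' | h''
      · exact absurd h'' hb
      · linarith
    have hPx : 0 ≤ P x₀ := hP x₀ hx₀
    have hsq : g x₀ ^ 2 = 0 := by
      nlinarith [sq_nonneg (g x₀), mul_nonneg hα.le hPx, mul_nonneg hα.le (sq_nonneg (g x₀))]
    exact pow_eq_zero_iff two_ne_zero |>.mp hsq
  -- g vanishes on the unit sphere
  have hsphere : ∀ y : E3, ‖y‖ = 1 → g y = 0 := by
    have hcomp : IsCompact (sphere (0 : E3) 1) := isCompact_sphere _ _
    have hne : (sphere (0 : E3) 1).Nonempty := NormedSpace.sphere_nonempty.2 zero_le_one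
    have hcont : ContinuousOn g (sphere (0 : E3) 1) := by
      intro y hy
      have hy0 : y ≠ 0 := by
        intro h0
        rw [mem_sphere_zero_iff_norm, h0, norm_zero] at hy
        norm_num at hy
      exact (((hgC y hy0).differentiableAt one_ne_zero).continuousAt).continuousWithinAt
    obtain ⟨x₀, hx₀mem, hmax⟩ := hcomp.exists_isMaxOn hne hcont
    obtain ⟨x₁, hx₁mem, hmin⟩ := hcomp.exists_isMinOn hne hcont
    have hmax0 : g x₀ = 0 :=
      hextr0 x₀ (mem_sphere_zero_iff_norm.1 hx₀mem)
        (Or.inr (hmax.filter_mono inf_le_right))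
    have hmin0 : g x₁ = 0 :=
      hextr0 x₁ (mem_sphere_zero_iff_norm.1 hx₁mem)
        (Or.inl (hmin.filter_mono inf_le_right))
    intro y hy
    have h1 : g y ≤ g x₀ := hmax (mem_sphere_zero_iff_norm.2 hy)
    have h2 : g x₁ ≤ g y := hmin (mem_sphere_zero_iff_norm.2 hy)
    rw [hmax0] at h1
    rw [hmin0] at h2
    linarith
  -- g vanishes on ℝ³ \ {0}
  have hg0 : ∀ x : E3, x ≠ 0 → g x = 0 := by
    intro x hx
    have hn : (0 : ℝ) < ‖x‖ := norm_pos_iff.2 hx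
    set u : E3 := ‖x‖⁻¹ • x with hu
    have hun : ‖u‖ = 1 := by
      rw [hu, norm_smul, norm_inv, norm_norm, inv_mul_cancel₀ (ne_of_gt hn)]
    have hux : (‖x‖ : ℝ) • u = x := by
      rw [hu, smul_smul, mul_inv_cancel₀ (ne_of_gt hn), one_smul]
    have hu0 : u ≠ 0 := by
      intro h0; rw [h0, norm_zero] at hun; norm_num at hun
    have := hghom u hu0 ‖x‖ hn
    rw [hux, hsphere u hun, mul_zero] at this
    exact this
  -- conclude
  intro x hx
  have hfz : fderiv ℝ g x = 0 := by
    have hev : g =ᶠ[nhds x] (fun _ => (0 : ℝ)) := by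
      filter_upwards [hopen.mem_nhds hx] with y hy
      exact hg0 y hy
    rw [hev.fderiv_eq]
    exact fderiv_const_apply 0
  have h0 : ‖V x‖ ^ 2 + 2 * α * P x = 0 := by
    have hk := key x hx
    rw [hfz] at hk
    simpa using hk.symm
  have hPx := hP x hx
  have hV : ‖V x‖ ^ 2 = 0 := by nlinarith [sq_nonneg ‖V x‖]
  constructor
  · simpa [pow_eq_zero_iff] using hV
  · nlinarith
end
end

section
/- Let 0 < α < 1 and let (V, P) be a C¹ homogeneous solution of degree −α of the stationary Euler equations on ℝ³ ∖ {0}. Then the Bernoulli function is nonpositive everywhere: |V(x)|² + 2P(x) ≤ 0 for all x ≠ 0; in particular P(x) ≤ 0 for all x ≠ 0. -/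
noncomputable section

open Real MeasureTheory Metric

open Set Filter Topology InnerProductSpace

lemma hdw_nmem {f : ℝ → E3} {f' : E3} {s : Set ℝ} {x : ℝ} (h : x ∉ closure s) :
    HasDerivWithinAt f f' s x := HasFDerivWithinAt.of_notMem_closure h

lemma hdw_Ici {F : Type*} [NormedAddCommGroup F] [NormedSpace ℝ F]
    {f : ℝ → F} {f' : F} {a b s : ℝ} (hs : s ∈ Ico a b)
    (h : HasDerivWithinAt f f' (Icc a b) s) : HasDerivWithinAt f f' (Ici s) s := by
  refine h.mono_of_mem_nhdsWithin ?_
  refine Filter.mem_of_superset (inter_mem_nhdsWithin (Ici s) (Iio_mem_nhds hs.2)) ?_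
  rintro y ⟨hy1, hy2⟩
  exact ⟨hs.1.trans hy1, hy2.le⟩


/-- If `u' ≥ 0` on `Icc 0 t` then `u 0 ≤ u s`. -/
lemma mono_of_derivWithin_nonneg {t : ℝ} {u : ℝ → ℝ} {u' : ℝ → ℝ}
    (hu : ∀ s ∈ Icc (0:ℝ) t, HasDerivWithinAt u (u' s) (Icc 0 t) s)
    (h0 : ∀ s ∈ Icc (0:ℝ) t, 0 ≤ u' s) :
    ∀ s ∈ Icc (0:ℝ) t, u 0 ≤ u s := by
  intro s hs
  have hcont : ContinuousOn u (Icc 0 t) := fun y hy => (hu y hy).continuousWithinAt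
  have hda : ∀ y ∈ interior (Icc (0:ℝ) t), HasDerivAt u (u' y) y := by
    intro y hy
    rw [interior_Icc] at hy
    exact (hu y (Ioo_subset_Icc_self hy)).hasDerivAt (Icc_mem_nhds hy.1 hy.2)
  have hmono : MonotoneOn u (Icc 0 t) := by
    refine monotoneOn_of_deriv_nonneg (convex_Icc 0 t) hcont
      (fun y hy => (hda y hy).differentiableAt.differentiableWithinAt) ?_
    intro y hy
    rw [(hda y hy).deriv]
    rw [interior_Icc] at hy
    exact h0 y (Ioo_subset_Icc_self hy)
  exact hmono (left_mem_Icc.2 (hs.1.trans hs.2)) hs hs.1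

/-- If `u' = 0` on `Icc 0 t` then `u` is constant. -/
lemma const_of_derivWithin_zero' {t : ℝ} {u : ℝ → ℝ}
    (hu : ∀ s ∈ Icc (0:ℝ) t, HasDerivWithinAt u 0 (Icc 0 t) s) :
    ∀ s ∈ Icc (0:ℝ) t, u s = u 0 := by
  intro s hs
  have h1 := mono_of_derivWithin_nonneg (u' := fun _ => 0) hu (fun _ _ => le_rfl) s hs
  have h2 := mono_of_derivWithin_nonneg (u := fun y => -u y) (u' := fun _ => 0)
    (fun y hy => (hu y hy).neg.congr_deriv neg_zero) (fun _ _ => le_rfl) s hs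
  simp at h2
  linarith

section main
variable {α : ℝ} {V : E3 → E3} {P : E3 → ℝ}

lemma diffV (h : IsHomogEuler α V P) {y : E3} (hy : y ≠ 0) : DifferentiableAt ℝ V y :=
  (h.contV.contDiffAt ((isOpen_compl_singleton).mem_nhds hy)).differentiableAt one_ne_zero

lemma diffP (h : IsHomogEuler α V P) {y : E3} (hy : y ≠ 0) : DifferentiableAt ℝ P y :=
  (h.contP.contDiffAt ((isOpen_compl_singleton).mem_nhds hy)).differentiableAt one_ne_zero

lemma grad_inner (h : IsHomogEuler α V P) (y v : E3) :
    ⟪gradient P y, v⟫_ℝ = fderiv ℝ P y v := by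
  rw [gradient, InnerProductSpace.toDual_symm_apply]

/-- key consequence of Euler's equation -/
lemma euler_inner (h : IsHomogEuler α V P) {y : E3} (hy : y ≠ 0) (v : E3) :
    ⟪fderiv ℝ V y (V y), v⟫_ℝ + fderiv ℝ P y v = 0 := by
  have := h.euler y hy
  have h2 : fderiv ℝ V y (V y) = -gradient P y := by
    rw [← eq_neg_iff_add_eq_zero] at this; exact this
  rw [h2, inner_neg_left, grad_inner h, neg_add_cancel]

/-- Euler's relation for the homogeneous function `P`. -/
lemma euler_relation_P (h : IsHomogEuler α V P) (hα : (0:ℝ) < α) {y : E3} (hy : y ≠ 0) :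
    fderiv ℝ P y y = -(2 * α) * P y := by
  have hc : HasDerivAt (fun l : ℝ => l • y) ((1:ℝ) • y) 1 := (hasDerivAt_id 1).smul_const y
  have hP : HasFDerivAt P (fderiv ℝ P y) y := (diffP h hy).hasFDerivAt
  have h1 : HasDerivAt (fun l : ℝ => P (l • y)) (fderiv ℝ P y y) 1 := by
    have hP' : HasFDerivAt P (fderiv ℝ P y) ((1:ℝ) • y) := by simpa [one_smul] using hP
    have := hP'.comp_hasDerivAt (x := (1:ℝ)) hc
    rw [one_smul] at this; exact this
  have h2 : HasDerivAt (fun l : ℝ => l ^ (-(2*α)) * P y) ((-(2*α)) * 1 ^ ((-(2*α))-1) * P y) 1 :=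
    (Real.hasDerivAt_rpow_const (Or.inl one_ne_zero)).mul_const (P y)
  have heq : (fun l : ℝ => P (l • y)) =ᶠ[𝓝 (1:ℝ)] fun l : ℝ => l ^ (-(2*α)) * P y := by
    filter_upwards [Ioi_mem_nhds (zero_lt_one)] with l hl
    exact h.homP l hl y hy
  have h3 := h1.congr_of_eventuallyEq heq.symm
  have h4 := h3.unique h2
  rw [h4, Real.one_rpow, mul_one]

/-- Uniform bounds from homogeneity. -/
lemma homog_bound (h : IsHomogEuler α V P) :
    ∃ M : ℝ, 0 < M ∧ ∀ x : E3, x ≠ 0 →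
      ‖V x‖ ≤ M * ‖x‖ ^ (-α) ∧ |P x| ≤ M * ‖x‖ ^ (-(2*α)) := by
  have hsph : IsCompact (sphere (0:E3) 1) := isCompact_sphere 0 1
  have hsub : sphere (0:E3) 1 ⊆ {(0:E3)}ᶜ := by
    intro u hu; simp only [mem_sphere_iff_norm, sub_zero] at hu
    simp only [mem_compl_iff, mem_singleton_iff]
    intro h0; rw [h0, norm_zero] at hu; exact one_ne_zero hu.symm
  have hcont : ContinuousOn (fun u => ‖V u‖ + |P u|) (sphere (0:E3) 1) := by
    refine ContinuousOn.add ?_ ?_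
    · exact ((h.contV.continuousOn).mono hsub).norm
    · exact ((h.contP.continuousOn).mono hsub).abs
  obtain ⟨M₀, hM₀⟩ := hsph.exists_bound_of_continuousOn hcont
  refine ⟨max M₀ 1, lt_of_lt_of_le zero_lt_one (le_max_right _ _), ?_⟩
  intro x hx
  set l : ℝ := ‖x‖ with hl
  have hl0 : 0 < l := norm_pos_iff.2 hx
  set u : E3 := l⁻¹ • x with hu
  have hun : ‖u‖ = 1 := by
    rw [hu, norm_smul, norm_inv, norm_norm, ← hl, inv_mul_cancel₀ hl0.ne']
  have hu0 : u ≠ 0 := by intro h0; rw [h0, norm_zero] at hun; exact one_ne_zero hun.symm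
  have hxu : x = l • u := by rw [hu, smul_smul, mul_inv_cancel₀ hl0.ne', one_smul]
  have husph : u ∈ sphere (0:E3) 1 := by simpa [mem_sphere_iff_norm] using hun
  have hbd := hM₀ u husph
  have hVu : ‖V u‖ ≤ max M₀ 1 := by
    have : ‖V u‖ + |P u| ≤ M₀ := le_trans (le_abs_self _) (by simpa using hbd)
    have := le_trans (le_add_of_nonneg_right (abs_nonneg (P u))) this
    exact this.trans (le_max_left _ _)
  have hPu : |P u| ≤ max M₀ 1 := by
    have : ‖V u‖ + |P u| ≤ M₀ := le_trans (le_abs_self _) (by simpa using hbd)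
    have := le_trans (le_add_of_nonneg_left (norm_nonneg (V u))) this
    exact this.trans (le_max_left _ _)
  constructor
  · calc ‖V x‖ = ‖V (l • u)‖ := by rw [← hxu]
    _ = ‖l ^ (-α) • V u‖ := by rw [h.homV l hl0 u hu0]
    _ = l ^ (-α) * ‖V u‖ := by
        rw [norm_smul, Real.norm_eq_abs, abs_of_pos (Real.rpow_pos_of_pos hl0 _)]
    _ ≤ l ^ (-α) * (max M₀ 1) :=
        mul_le_mul_of_nonneg_left hVu (Real.rpow_nonneg hl0.le _)
    _ = (max M₀ 1) * l ^ (-α) := mul_comm _ _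
  · calc |P x| = |P (l • u)| := by rw [← hxu]
    _ = |l ^ (-(2*α)) * P u| := by rw [h.homP l hl0 u hu0]
    _ = l ^ (-(2*α)) * |P u| := by
        rw [abs_mul, abs_of_pos (Real.rpow_pos_of_pos hl0 _)]
    _ ≤ l ^ (-(2*α)) * (max M₀ 1) :=
        mul_le_mul_of_nonneg_left hPu (Real.rpow_nonneg hl0.le _)
    _ = (max M₀ 1) * l ^ (-(2*α)) := mul_comm _ _

/-- A solution of the ODE `γ' = V ∘ γ` on `[0, t]`, starting at `x₀`, avoiding `0`. -/
def SolOn (V : E3 → E3) (x₀ : E3) (γ : ℝ → E3) (t : ℝ) : Prop :=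
  γ 0 = x₀ ∧ (∀ s ∈ Icc (0:ℝ) t, HasDerivWithinAt γ (V (γ s)) (Icc 0 t) s) ∧
    ∀ s ∈ Icc (0:ℝ) t, γ s ≠ 0

/-- Core invariants along a trajectory: the Bernoulli function is conserved and
`‖γ s‖²` grows at least quadratically. -/
lemma invariant (h : IsHomogEuler α V P) (hα0 : 0 < α) (hα1 : α < 1)
    {x₀ : E3} (hg0 : 0 ≤ ⟪x₀, V x₀⟫_ℝ)
    {c : ℝ} (hc : c = ‖V x₀‖^2 + 2 * P x₀) (hcpos : 0 < c)
    {γ : ℝ → E3} {t : ℝ} (hγ : SolOn V x₀ γ t) :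
    ∀ s ∈ Icc (0:ℝ) t,
      (‖V (γ s)‖^2 + 2 * P (γ s) = c) ∧ ‖x₀‖^2 + (α*c) * s^2 ≤ ‖γ s‖^2 := by
  obtain ⟨hγ0, hγd, hγn⟩ := hγ
  -- derivatives of V ∘ γ and P ∘ γ
  have hVd : ∀ s ∈ Icc (0:ℝ) t, HasDerivWithinAt (fun s => V (γ s))
      (fderiv ℝ V (γ s) (V (γ s))) (Icc 0 t) s := fun s hs =>
    ((diffV h (hγn s hs)).hasFDerivAt).comp_hasDerivWithinAt s (hγd s hs)
  have hPd : ∀ s ∈ Icc (0:ℝ) t, HasDerivWithinAt (fun s => P (γ s))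
      (fderiv ℝ P (γ s) (V (γ s))) (Icc 0 t) s := fun s hs =>
    ((diffP h (hγn s hs)).hasFDerivAt).comp_hasDerivWithinAt s (hγd s hs)
  -- Bernoulli function is constant
  set b : ℝ → ℝ := fun s => ⟪V (γ s), V (γ s)⟫_ℝ + 2 * P (γ s) with hb
  have hbd : ∀ s ∈ Icc (0:ℝ) t, HasDerivWithinAt b 0 (Icc 0 t) s := by
    intro s hs
    have h1 := ((hVd s hs).inner ℝ (hVd s hs)).add ((hPd s hs).const_mul 2)
    have h2 : ⟪V (γ s), fderiv ℝ V (γ s) (V (γ s))⟫_ℝ +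
        ⟪fderiv ℝ V (γ s) (V (γ s)), V (γ s)⟫_ℝ +
        2 * fderiv ℝ P (γ s) (V (γ s)) = 0 := by
      linarith [euler_inner h (hγn s hs) (V (γ s)),
        real_inner_comm (V (γ s)) (fderiv ℝ V (γ s) (V (γ s)))]
    rw [h2] at h1
    exact h1
  have hbconst : ∀ s ∈ Icc (0:ℝ) t, b s = c := by
    intro s hs
    have := const_of_derivWithin_zero' hbd s hs
    rw [this, hb]
    simp only [hγ0, real_inner_self_eq_norm_sq]
    linarith [hc]
  -- derivative of g = ⟪γ, V∘γ⟫
  set g : ℝ → ℝ := fun s => ⟪γ s, V (γ s)⟫_ℝ with hg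
  have hgd : ∀ s ∈ Icc (0:ℝ) t, HasDerivWithinAt g
      (⟪V (γ s), V (γ s)⟫_ℝ + 2 * α * P (γ s)) (Icc 0 t) s := by
    intro s hs
    have h1 := (hγd s hs).inner ℝ (hVd s hs)
    have h2 : ⟪γ s, fderiv ℝ V (γ s) (V (γ s))⟫_ℝ = 2 * α * P (γ s) := by
      have he := euler_inner h (hγn s hs) (γ s)
      have hrel := euler_relation_P h hα0 (hγn s hs)
      rw [real_inner_comm]
      linarith
    rw [h2] at h1
    have : 2 * α * P (γ s) + ⟪V (γ s), V (γ s)⟫_ℝ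
        = ⟪V (γ s), V (γ s)⟫_ℝ + 2 * α * P (γ s) := by ring
    rw [this] at h1
    exact h1
  -- g s ≥ g 0 + α c s
  have hglow : ∀ s ∈ Icc (0:ℝ) t, g 0 + (α*c) * s ≤ g s := by
    have hw : ∀ s ∈ Icc (0:ℝ) t, HasDerivWithinAt (fun s => g s - (α*c)*s)
        ((⟪V (γ s), V (γ s)⟫_ℝ + 2 * α * P (γ s)) - (α*c)) (Icc 0 t) s := by
      intro s hs
      exact (hgd s hs).sub ((hasDerivWithinAt_id s _).const_mul (α*c) |>.congr_deriv
        (by ring))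
    have hpos : ∀ s ∈ Icc (0:ℝ) t,
        0 ≤ (⟪V (γ s), V (γ s)⟫_ℝ + 2 * α * P (γ s)) - (α*c) := by
      intro s hs
      have hB := hbconst s hs
      rw [hb] at hB
      simp only [real_inner_self_eq_norm_sq] at hB ⊢
      nlinarith [sq_nonneg (‖V (γ s)‖), hα0, hα1]
    have := mono_of_derivWithin_nonneg hw hpos
    intro s hs
    have h1 := this s hs
    simp only [mul_zero, sub_zero] at h1
    linarith
  -- lower bound for ‖γ s‖²
  have hulow : ∀ s ∈ Icc (0:ℝ) t,
      ⟪x₀, x₀⟫_ℝ + (α*c) * s^2 + 2 * g 0 * s ≤ ⟪γ s, γ s⟫_ℝ := by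
    have hu : ∀ s ∈ Icc (0:ℝ) t, HasDerivWithinAt
        (fun s => ⟪γ s, γ s⟫_ℝ - (α*c)*s^2 - 2 * g 0 * s)
        ((2 * g s) - (α*c)*(2*s) - 2 * g 0) (Icc 0 t) s := by
      intro s hs
      have h1 := (hγd s hs).inner ℝ (hγd s hs)
      have h2 : ⟪γ s, V (γ s)⟫_ℝ + ⟪V (γ s), γ s⟫_ℝ = 2 * g s := by
        show ⟪γ s, V (γ s)⟫_ℝ + ⟪V (γ s), γ s⟫_ℝ = 2 * ⟪γ s, V (γ s)⟫_ℝ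
        linarith [real_inner_comm (V (γ s)) (γ s)]
      rw [h2] at h1
      have h3 : HasDerivWithinAt (fun s : ℝ => (α*c)*s^2) ((α*c)*(2*s)) (Icc 0 t) s := by
        have := ((hasDerivAt_pow 2 s).const_mul (α*c)).hasDerivWithinAt (s := Icc (0:ℝ) t)
        simpa using this
      have h4 : HasDerivWithinAt (fun s : ℝ => 2 * g 0 * s) (2 * g 0) (Icc 0 t) s := by
        simpa using (hasDerivWithinAt_id s (Icc (0:ℝ) t)).const_mul (2 * g 0)
      exact (h1.sub h3).sub h4
    have hpos : ∀ s ∈ Icc (0:ℝ) t, 0 ≤ (2 * g s) - (α*c)*(2*s) - 2 * g 0 := by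
      intro s hs
      have := hglow s hs
      linarith
    have := mono_of_derivWithin_nonneg hu hpos
    intro s hs
    have h1 := this s hs
    simp only [hγ0, mul_zero, sub_zero, zero_pow, ne_eq, OfNat.ofNat_ne_zero,
      not_false_eq_true] at h1
    linarith
  -- conclusion
  intro s hs
  have hB := hbconst s hs
  rw [hb] at hB
  simp only [real_inner_self_eq_norm_sq] at hB
  refine ⟨hB, ?_⟩
  have h1 := hulow s hs
  simp only [real_inner_self_eq_norm_sq] at h1
  have hg00 : 0 ≤ g 0 := by
    show 0 ≤ ⟪γ 0, V (γ 0)⟫_ℝ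
    rw [hγ0]; exact hg0
  nlinarith [hs.1]

lemma rpow_neg_anti {β r x : ℝ} (hβ : 0 ≤ β) (hr : 0 < r) (hx : r ≤ x) :
    x ^ (-β) ≤ r ^ (-β) := by
  have hx0 : 0 < x := hr.trans_le hx
  rw [Real.rpow_neg hx0.le, Real.rpow_neg hr.le]
  exact inv_anti₀ (Real.rpow_pos_of_pos hr β) (Real.rpow_le_rpow hr.le hx hβ)

/-- Speed bound away from the origin. -/
lemma speed_bound (h : IsHomogEuler α V P) {M : ℝ}
    (hM : ∀ x : E3, x ≠ 0 → ‖V x‖ ≤ M * ‖x‖ ^ (-α) ∧ |P x| ≤ M * ‖x‖ ^ (-(2*α)))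
    (hM0 : 0 < M) (hα0 : 0 < α) {r : ℝ} (hr : 0 < r) {z : E3} (hz : r ≤ ‖z‖) :
    ‖V z‖ ≤ M * r ^ (-α) := by
  have hz0 : z ≠ 0 := by
    intro h0; rw [h0, norm_zero] at hz; linarith
  exact (hM z hz0).1.trans (mul_le_mul_of_nonneg_left (rpow_neg_anti hα0.le hr hz) hM0.le)

/-- Upper bound on the trajectory. -/
lemma traj_upper {x₀ : E3} {γ : ℝ → E3} {t C : ℝ} (hC : 0 ≤ C)
    (hγ : SolOn V x₀ γ t)
    (hspeed : ∀ s ∈ Icc (0:ℝ) t, ‖V (γ s)‖ ≤ C) :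
    ∀ s ∈ Icc (0:ℝ) t, ‖γ s‖ ≤ ‖x₀‖ + C * s := by
  intro s hs
  obtain ⟨hγ0, hγd, _⟩ := hγ
  have h0 : (0:ℝ) ∈ Icc (0:ℝ) t := ⟨le_rfl, hs.1.trans hs.2⟩
  have := Convex.norm_image_sub_le_of_norm_hasDerivWithin_le
    (f := γ) (f' := fun s => V (γ s)) (s := Icc (0:ℝ) t) (C := C)
    hγd hspeed (convex_Icc 0 t) h0 hs
  have h1 : ‖γ s - γ 0‖ ≤ C * s := by
    simpa [abs_of_nonneg hs.1] using this
  calc ‖γ s‖ ≤ ‖γ 0‖ + ‖γ s - γ 0‖ := by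
        simpa using norm_add_le (γ 0) (γ s - γ 0)
  _ ≤ ‖x₀‖ + C * s := by rw [hγ0] at h1 ⊢; linarith

/-- Glue two solutions at a junction point. -/
lemma glue_sol {γ δ : ℝ → E3} {a ε : ℝ} (ha : 0 ≤ a) (hε : 0 ≤ ε)
    (hγ : ∀ s ∈ Icc (0:ℝ) a, HasDerivWithinAt γ (V (γ s)) (Icc 0 a) s)
    (hδ : ∀ s ∈ Icc a (a+ε), HasDerivWithinAt δ (V (δ s)) (Icc a (a+ε)) s)
    (hj : δ a = γ a) :
    ∀ s ∈ Icc (0:ℝ) (a+ε),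
      HasDerivWithinAt (fun s => if s ≤ a then γ s else δ s)
        (V (if s ≤ a then γ s else δ s)) (Icc 0 (a+ε)) s := by
  set η : ℝ → E3 := fun s => if s ≤ a then γ s else δ s with hη
  have eqγ : ∀ y ∈ Icc (0:ℝ) a, η y = γ y := by
    intro y hy; simp only [hη, if_pos hy.2]
  have eqδ : ∀ y ∈ Icc a (a+ε), η y = δ y := by
    intro y hy
    by_cases hya : y ≤ a
    · have : y = a := le_antisymm hya hy.1
      simp only [hη, this, if_pos le_rfl, hj]
    · simp only [hη, if_neg hya]
  intro s hs
  have H1 : HasDerivWithinAt η (V (η s)) (Icc 0 a) s := by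
    by_cases hsa : s ≤ a
    · have hs' : s ∈ Icc (0:ℝ) a := ⟨hs.1, hsa⟩
      have := (hγ s hs').congr eqγ (eqγ s hs')
      rwa [eqγ s hs']
    · refine HasFDerivWithinAt.of_notMem_closure ?_
      rw [isClosed_Icc.closure_eq]
      intro hmem; exact hsa hmem.2
  have H2 : HasDerivWithinAt η (V (η s)) (Icc a (a+ε)) s := by
    by_cases hsa : a ≤ s
    · have hs' : s ∈ Icc a (a+ε) := ⟨hsa, hs.2⟩
      have := (hδ s hs').congr eqδ (eqδ s hs')
      rwa [eqδ s hs']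
    · refine HasFDerivWithinAt.of_notMem_closure ?_
      rw [isClosed_Icc.closure_eq]
      intro hmem; exact hsa hmem.1
  exact (H1.union H2).mono (Icc_subset_Icc_union_Icc (b := a))

/-- Nonvanishing propagates to the whole interval of existence. -/
lemma nonvanish (h : IsHomogEuler α V P) (hα0 : 0 < α) (hα1 : α < 1)
    {x₀ : E3} (hx0 : x₀ ≠ 0) (hg0 : 0 ≤ ⟪x₀, V x₀⟫_ℝ)
    {c : ℝ} (hc : c = ‖V x₀‖^2 + 2 * P x₀) (hcpos : 0 < c)
    {γ : ℝ → E3} {a b : ℝ} (ha : 0 ≤ a) (hab : a ≤ b)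
    (hγ0 : γ 0 = x₀)
    (hγd : ∀ s ∈ Icc (0:ℝ) b, HasDerivWithinAt γ (V (γ s)) (Icc 0 b) s)
    (hnz : ∀ s ∈ Icc (0:ℝ) a, γ s ≠ 0) :
    ∀ s ∈ Icc (0:ℝ) b, γ s ≠ 0 := by
  have hr0 : 0 < ‖x₀‖ := norm_pos_iff.2 hx0
  have hcontγ : ContinuousOn γ (Icc 0 b) := fun y hy => (hγd y hy).continuousWithinAt
  set S : Set ℝ := {s | s ∈ Icc a b ∧ ∀ u ∈ Icc (0:ℝ) s, γ u ≠ 0} with hS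
  -- if γ is nonzero up to s, then its norm is at least ‖x₀‖ up to s
  have key : ∀ s ∈ Icc a b, (∀ u ∈ Icc (0:ℝ) s, γ u ≠ 0) →
      ∀ u ∈ Icc (0:ℝ) s, ‖x₀‖ ≤ ‖γ u‖ := by
    intro s hsab hsnz u hu
    have hsol : SolOn V x₀ γ s :=
      ⟨hγ0, fun y hy => (hγd y (Icc_subset_Icc_right (hsab.2) hy)).mono
        (Icc_subset_Icc_right (hsab.2)), hsnz⟩
    have := (invariant h hα0 hα1 hg0 hc hcpos hsol u hu).2
    nlinarith [norm_nonneg (γ u), norm_nonneg x₀, sq_nonneg u, mul_pos hα0 hcpos]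
  -- the sup of "good" times
  have hSne : S.Nonempty := ⟨a, ⟨le_rfl, hab⟩, hnz⟩
  have hSbdd : BddAbove S := ⟨b, fun s hs => hs.1.2⟩
  set c₀ : ℝ := sSup S with hc₀
  have hc₀a : a ≤ c₀ := le_csSup hSbdd ⟨⟨le_rfl, hab⟩, hnz⟩
  have hc₀b : c₀ ≤ b := csSup_le hSne fun s hs => hs.1.2
  have hc₀0 : 0 ≤ c₀ := ha.trans hc₀a
  -- γ is nonzero strictly below c₀
  have hlt : ∀ u, 0 ≤ u → u < c₀ → γ u ≠ 0 := by
    intro u hu0 huc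
    obtain ⟨s, hsS, hus⟩ := exists_lt_of_lt_csSup hSne huc
    exact hsS.2 u ⟨hu0, hus.le⟩
  -- norm bound strictly below c₀
  have hltnorm : ∀ u, 0 ≤ u → u < c₀ → ‖x₀‖ ≤ ‖γ u‖ := by
    intro u hu0 huc
    obtain ⟨s, hsS, hus⟩ := exists_lt_of_lt_csSup hSne huc
    exact key s hsS.1 hsS.2 u ⟨hu0, hus.le⟩
  -- γ c₀ ≠ 0
  have hγc₀ : γ c₀ ≠ 0 := by
    rcases eq_or_lt_of_le hc₀0 with h0 | h0
    · rw [← h0, hγ0]; exact hx0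
    · -- approach c₀ from the left
      have hne : (𝓝[Ioo (0:ℝ) c₀] c₀).NeBot := right_nhdsWithin_Ioo_neBot h0
      have htend : Filter.Tendsto (fun u => ‖γ u‖) (𝓝[Ioo (0:ℝ) c₀] c₀) (𝓝 ‖γ c₀‖) := by
        have hc₀mem : c₀ ∈ Icc (0:ℝ) b := ⟨hc₀0, hc₀b⟩
        have hsub : Ioo (0:ℝ) c₀ ⊆ Icc (0:ℝ) b :=
          fun y hy => ⟨le_of_lt hy.1, le_trans (le_of_lt hy.2) hc₀b⟩
        exact ((hcontγ c₀ hc₀mem).mono hsub).norm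
      have hev : ∀ᶠ u in 𝓝[Ioo (0:ℝ) c₀] c₀, ‖x₀‖ ≤ ‖γ u‖ := by
        filter_upwards [self_mem_nhdsWithin] with u hu
        exact hltnorm u hu.1.le hu.2
      have := ge_of_tendsto htend hev
      intro h0'
      rw [h0', norm_zero] at this
      linarith
  -- c₀ ∈ S
  have hc₀S : c₀ ∈ S := by
    refine ⟨⟨hc₀a, hc₀b⟩, ?_⟩
    intro u hu
    rcases eq_or_lt_of_le hu.2 with h0 | h0
    · rw [h0]; exact hγc₀
    · exact hlt u hu.1 h0
  -- c₀ must equal b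
  rcases eq_or_lt_of_le hc₀b with hc₀eq | hc₀lt
  · intro s hs
    exact hc₀S.2 s ⟨hs.1, hs.2.trans_eq hc₀eq.symm⟩
  · exfalso
    -- γ is nonzero on a neighborhood of c₀ within Icc 0 b
    have hc₀mem : c₀ ∈ Icc (0:ℝ) b := ⟨hc₀0, hc₀b⟩
    have hev : ∀ᶠ u in 𝓝[Icc (0:ℝ) b] c₀, γ u ≠ 0 := by
      have : {y : E3 | y ≠ 0} ∈ 𝓝 (γ c₀) :=
        (isOpen_compl_singleton (x := (0:E3))).mem_nhds hγc₀
      exact (hcontγ c₀ hc₀mem) this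
    rw [eventually_nhdsWithin_iff, Metric.eventually_nhds_iff] at hev
    obtain ⟨δ, hδ0, hδ⟩ := hev
    set s' : ℝ := min (c₀ + δ/2) b with hs'
    have hs'c₀ : c₀ < s' := lt_min (by linarith) hc₀lt
    have hs'b : s' ≤ b := min_le_right _ _
    have hs'S : s' ∈ S := by
      refine ⟨⟨hc₀a.trans hs'c₀.le, hs'b⟩, ?_⟩
      intro u hu
      by_cases huc : u ≤ c₀
      · exact hc₀S.2 u ⟨hu.1, huc⟩
      · push_neg at huc
        refine hδ ?_ ⟨hu.1, hu.2.trans hs'b⟩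
        rw [Real.dist_eq, abs_of_pos (by linarith)]
        have : u ≤ c₀ + δ/2 := hu.2.trans (min_le_left _ _)
        linarith
    have := le_csSup hSbdd hs'S
    rw [← hc₀] at this
    linarith

lemma sol_mono {x₀ : E3} {γ : ℝ → E3} {t t' : ℝ} (ht : t' ≤ t)
    (hγ : SolOn V x₀ γ t) : SolOn V x₀ γ t' :=
  ⟨hγ.1, fun s hs => (hγ.2.1 s (Icc_subset_Icc_right ht hs)).mono (Icc_subset_Icc_right ht),
    fun s hs => hγ.2.2 s (Icc_subset_Icc_right ht hs)⟩

set_option maxHeartbeats 1600000 in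
/-- Core argument: positivity of the Bernoulli function at a point with
outgoing radial velocity leads to a contradiction. -/
lemma core (h : IsHomogEuler α V P) (hα0 : 0 < α) (hα1 : α < 1)
    {x₀ : E3} (hx0 : x₀ ≠ 0) (hg0 : 0 ≤ ⟪x₀, V x₀⟫_ℝ)
    (hcpos : 0 < ‖V x₀‖^2 + 2 * P x₀) : False := by
  set c : ℝ := ‖V x₀‖^2 + 2 * P x₀ with hc
  have hc' : c = ‖V x₀‖^2 + 2 * P x₀ := hc
  have hr0 : 0 < ‖x₀‖ := norm_pos_iff.2 hx0
  set r₀ : ℝ := ‖x₀‖ with hr₀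
  obtain ⟨M, hM0, hM⟩ := homog_bound h
  -- target radius and time
  set K : ℝ := M^2 + 2*M with hK
  have hK0 : 0 < K := by nlinarith
  set ρ : ℝ := ((K + c)/c) ^ (1/(2*α)) with hρ
  have hρ0 : 0 < ρ := Real.rpow_pos_of_pos (by positivity) _
  have hρpow : ρ ^ (2*α) = (K + c)/c := by
    rw [hρ, ← Real.rpow_mul (by positivity), one_div, inv_mul_cancel₀ (by positivity),
      Real.rpow_one]
  have hρkey : K * ρ ^ (-(2*α)) < c := by
    rw [Real.rpow_neg hρ0.le, hρpow]
    have he : K * ((K + c)/c)⁻¹ = K*c/(K+c) := by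
      rw [inv_div]; ring
    rw [he, div_lt_iff₀ (by positivity)]
    nlinarith
  set T : ℝ := ρ / Real.sqrt (α*c) + 1 with hT
  have hsq : Real.sqrt (α*c) > 0 := Real.sqrt_pos.2 (by positivity)
  have hT0 : 0 < T := by positivity
  have hTkey : ρ^2 < α*c*T^2 := by
    have h1 : ρ / Real.sqrt (α*c) < T := by rw [hT]; linarith
    have h2 : ρ < Real.sqrt (α*c) * T := by
      rw [div_lt_iff₀ hsq] at h1; linarith [mul_comm (Real.sqrt (α*c)) T]
    have h3 : Real.sqrt (α*c) ^ 2 = α*c := Real.sq_sqrt (by positivity)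
    nlinarith [hρ0]
  -- speed bound constant along trajectories
  set C₀ : ℝ := M * r₀ ^ (-α) with hC₀
  have hC₀0 : 0 < C₀ := by
    apply mul_pos hM0 (Real.rpow_pos_of_pos hr0 _)
  set R : ℝ := r₀ + C₀ * T with hR
  have hRr : r₀ ≤ R := by nlinarith
  -- Lipschitz constant on a compact annulus
  set A' : Set E3 := {z : E3 | r₀/2 ≤ ‖z‖} ∩ Metric.closedBall 0 (R + r₀) with hA'
  have hA'c : IsCompact A' := by
    apply IsCompact.inter_left (isCompact_closedBall 0 (R + r₀))
    exact isClosed_le continuous_const continuous_norm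
  have hA'0 : ∀ z ∈ A', z ≠ 0 := by
    intro z hz h0
    have h1 : r₀/2 ≤ ‖z‖ := hz.1
    rw [h0, norm_zero] at h1
    linarith
  have hfc : ContinuousOn (fun z => fderiv ℝ V z) A' := by
    refine (h.contV.continuousOn_fderiv_of_isOpen isOpen_compl_singleton le_rfl).mono ?_
    intro z hz
    exact hA'0 z hz
  obtain ⟨L₀, hL₀⟩ := hA'c.exists_bound_of_continuousOn hfc
  set L : NNReal := L₀.toNNReal with hL
  have hL' : ∀ z ∈ A', ‖fderiv ℝ V z‖₊ ≤ L := by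
    intro z hz
    have h1 : ‖fderiv ℝ V z‖ ≤ L₀ := hL₀ z hz
    have h2 : (‖fderiv ℝ V z‖₊ : ℝ) ≤ (L : ℝ) := h1.trans (Real.le_coe_toNNReal L₀)
    exact_mod_cast h2
  -- Picard-Lindelöf constants
  set C' : ℝ := M * (r₀/2) ^ (-α) with hC'
  have hC'0 : 0 < C' := mul_pos hM0 (Real.rpow_pos_of_pos (by linarith) _)
  set ε : ℝ := (r₀/2)/C' with hε
  have hε0 : 0 < ε := by positivity
  clear_value c r₀ K ρ T C₀ R C' ε
  -- the extension step
  have step : ∀ a : ℝ, 0 ≤ a → a ≤ T → ∀ γ : ℝ → E3, SolOn V x₀ γ a →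
      ∃ γ' : ℝ → E3, SolOn V x₀ γ' (a + ε) := by
    intro a ha haT γ hγ
    have hinv := invariant h hα0 hα1 hg0 hc' hcpos hγ
    have hlow : ∀ s ∈ Icc (0:ℝ) a, r₀ ≤ ‖γ s‖ := by
      intro s hs
      have hge : 0 ≤ α*c*s^2 := mul_nonneg (mul_pos hα0 hcpos).le (sq_nonneg s)
      have h2 : r₀^2 ≤ ‖γ s‖^2 := by
        rw [hr₀]; linarith [(hinv s hs).2]
      exact le_of_pow_le_pow_left₀ two_ne_zero (norm_nonneg _) h2
    have hmema : a ∈ Icc (0:ℝ) a := ⟨ha, le_rfl⟩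
    have hya : r₀ ≤ ‖γ a‖ := hlow a hmema
    have hspeed : ∀ s ∈ Icc (0:ℝ) a, ‖V (γ s)‖ ≤ C₀ := fun s hs =>
      hC₀ ▸ speed_bound h hM hM0 hα0 hr0 (hlow s hs)
    have hyR : ‖γ a‖ ≤ R := by
      have := traj_upper hC₀0.le hγ hspeed a hmema
      have h2 : C₀ * a ≤ C₀ * T := mul_le_mul_of_nonneg_left haT hC₀0.le
      rw [hR]; rw [← hr₀] at this; linarith
    -- Picard-Lindelöf at γ a
    have hball : Metric.closedBall (γ a) (r₀/2) ⊆ A' := by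
      intro z hz
      rw [Metric.mem_closedBall, dist_eq_norm] at hz
      constructor
      · show r₀/2 ≤ ‖z‖
        have := norm_sub_norm_le (γ a) z
        have h2 : ‖γ a - z‖ = ‖z - γ a‖ := norm_sub_rev _ _
        linarith
      · rw [Metric.mem_closedBall, dist_zero_right]
        have := norm_le_norm_add_norm_sub' z (γ a)
        have h2 : ‖z - γ a‖ = ‖z - γ a‖ := rfl
        calc ‖z‖ ≤ ‖γ a‖ + ‖z - γ a‖ := by
              have := norm_sub_norm_le z (γ a); linarith
        _ ≤ R + r₀ := by linarith
    have hballpos : ∀ z ∈ Metric.closedBall (γ a) (r₀/2), r₀/2 ≤ ‖z‖ := fun z hz =>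
      (hball hz).1
    have hpl : IsPicardLindelof (fun _ : ℝ => V) (tmin := a) (tmax := a+ε)
        ⟨a, le_rfl, by linarith⟩ (γ a) ⟨r₀/2, by linarith⟩ 0 ⟨C', hC'0.le⟩ L := by
      refine IsPicardLindelof.of_time_independent ?_ ?_ ?_
      · intro z hz
        show ‖V z‖ ≤ C'
        exact (speed_bound h hM hM0 hα0 (by linarith : (0:ℝ) < r₀/2) (hballpos z hz)).trans_eq
          hC'.symm
      · refine Convex.lipschitzOnWith_of_nnnorm_hasFDerivWithin_le
          (f' := fun z => fderiv ℝ V z) ?_ ?_ (convex_closedBall _ _)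
        · intro z hz
          have hz0 : z ≠ 0 := hA'0 z (hball hz)
          exact (diffV h hz0).hasFDerivAt.hasFDerivWithinAt
        · intro z hz
          exact hL' z (hball hz)
      · have : max ((a+ε) - a) (a - a) = ε := by
          rw [add_sub_cancel_left, sub_self, max_eq_left hε0.le]
        simp only [NNReal.coe_mk, NNReal.coe_zero, sub_zero]
        show C' * max (a + ε - a) (a - a) ≤ r₀ / 2
        rw [this, hε, mul_div_cancel₀ _ hC'0.ne']
    obtain ⟨δf, hδ0, hδd⟩ := hpl.exists_eq_forall_mem_Icc_hasDerivWithinAt₀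
    have hδd' : ∀ s ∈ Icc a (a+ε), HasDerivWithinAt δf (V (δf s)) (Icc a (a+ε)) s :=
      fun s hs => hδd s hs
    have hj : δf a = γ a := hδ0
    have hglue := glue_sol ha hε0.le hγ.2.1 hδd' hj
    have hη0 : (fun s : ℝ => if s ≤ a then γ s else δf s) 0 = x₀ := by
      show (if (0:ℝ) ≤ a then γ 0 else δf 0) = x₀
      rw [if_pos ha]; exact hγ.1
    have hηnz : ∀ s ∈ Icc (0:ℝ) (a+ε),
        (fun s : ℝ => if s ≤ a then γ s else δf s) s ≠ 0 := by
      refine nonvanish h hα0 hα1 hx0 hg0 hc' hcpos ha (by linarith) hη0 hglue ?_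
      intro s hs
      show (if s ≤ a then γ s else δf s) ≠ 0
      rw [if_pos hs.2]
      exact hγ.2.2 s hs
    exact ⟨_, hη0, hglue, hηnz⟩
  -- iterate the extension step
  have main : ∀ n : ℕ, ∃ γ : ℝ → E3, SolOn V x₀ γ (min (n*ε) T) := by
    intro n
    induction n with
    | zero =>
      refine ⟨fun _ => x₀, ?_⟩
      have e0 : min (((0:ℕ):ℝ)*ε) T = 0 := by
        simp only [Nat.cast_zero, zero_mul]
        exact min_eq_left hT0.le
      rw [e0]
      refine ⟨rfl, ?_, ?_⟩
      · intro s hs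
        rw [Icc_self, mem_singleton_iff] at hs
        subst hs
        rw [Icc_self]
        apply HasFDerivWithinAt.of_not_accPt
        rw [accPt_iff_clusterPt, inf_principal]
        simp [ClusterPt]
      · intro s _; exact hx0
    | succ n ih =>
      obtain ⟨γ, hγ⟩ := ih
      by_cases hTle : T ≤ n*ε
      · refine ⟨γ, ?_⟩
        have h2 : min (((n+1:ℕ):ℝ)*ε) T = T := by
          apply min_eq_right
          push_cast
          nlinarith [hε0.le, Nat.cast_nonneg (α := ℝ) n]
        have h3 : min ((n:ℝ)*ε) T = T := min_eq_right hTle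
        rw [h2, ← h3]; exact hγ
      · push_neg at hTle
        have hmin : min ((n:ℝ)*ε) T = (n:ℝ)*ε := min_eq_left hTle.le
        have ha : (0:ℝ) ≤ (n:ℝ)*ε := mul_nonneg (Nat.cast_nonneg n) hε0.le
        obtain ⟨γ', hγ'⟩ := step ((n:ℝ)*ε) ha hTle.le γ (hmin ▸ hγ)
        refine ⟨γ', sol_mono ?_ hγ'⟩
        push_cast
        calc min (((n:ℝ)+1)*ε) T ≤ ((n:ℝ)+1)*ε := min_le_left _ _
        _ = (n:ℝ)*ε + ε := by ring
  -- conclude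
  obtain ⟨γ, hγ⟩ := main ⌈T/ε⌉₊
  have hceil : T ≤ (⌈T/ε⌉₊:ℝ) * ε := by
    rw [← div_le_iff₀ hε0]
    exact Nat.le_ceil _
  have hminT : min ((⌈T/ε⌉₊:ℝ)*ε) T = T := min_eq_right hceil
  rw [hminT] at hγ
  have hTmem : T ∈ Icc (0:ℝ) T := ⟨hT0.le, le_rfl⟩
  have hinv := invariant h hα0 hα1 hg0 hc' hcpos hγ T hTmem
  have hnzT : γ T ≠ 0 := hγ.2.2 T hTmem
  have hyT : 0 < ‖γ T‖ := norm_pos_iff.2 hnzT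
  have hρle : ρ ≤ ‖γ T‖ := by
    have h2 : ρ^2 ≤ ‖γ T‖^2 := by nlinarith [hinv.2, sq_nonneg ‖x₀‖, hTkey]
    exact le_of_pow_le_pow_left₀ two_ne_zero (norm_nonneg _) h2
  -- bound the Bernoulli function at γ T
  have hVb := (hM (γ T) hnzT).1
  have hPb := (hM (γ T) hnzT).2
  have hsq2 : (‖γ T‖ ^ (-α))^2 = ‖γ T‖ ^ (-(2*α)) := by
    rw [← Real.rpow_natCast (‖γ T‖ ^ (-α)) 2, ← Real.rpow_mul hyT.le]
    congr 1
    push_cast; ring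
  have hV2 : ‖V (γ T)‖^2 ≤ M^2 * ‖γ T‖ ^ (-(2*α)) := by
    have := Real.rpow_nonneg hyT.le (-α)
    nlinarith [norm_nonneg (V (γ T))]
  have hP2 : 2 * P (γ T) ≤ 2*M * ‖γ T‖ ^ (-(2*α)) := by
    have h1 : P (γ T) ≤ |P (γ T)| := le_abs_self _
    nlinarith
  have hanti : ‖γ T‖ ^ (-(2*α)) ≤ ρ ^ (-(2*α)) :=
    rpow_neg_anti (by positivity) hρ0 hρle
  have hfin : c ≤ K * ρ ^ (-(2*α)) := by
    have h1 : c = ‖V (γ T)‖^2 + 2 * P (γ T) := hinv.1.symm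
    have h2 : c ≤ K * ‖γ T‖ ^ (-(2*α)) := by rw [h1, hK]; nlinarith
    refine h2.trans ?_
    exact mul_le_mul_of_nonneg_left hanti hK0.le
  linarith

/-- The reversed vector field also solves the Euler equations. -/
lemma neg_homog (h : IsHomogEuler α V P) : IsHomogEuler α (fun y => -V y) P where
  contV := h.contV.neg
  contP := h.contP
  homV := by
    intro l hl x hx
    simp only [h.homV l hl x hx, smul_neg]
  homP := h.homP
  euler := by
    intro x hx
    have hd : fderiv ℝ (fun y => -V y) x = -fderiv ℝ V x := fderiv_neg
    simp only [hd, ContinuousLinearMap.neg_apply, map_neg, neg_neg]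
    exact h.euler x hx
  divFree := by
    intro x hx
    have hd : fderiv ℝ (fun y => -V y) x = -fderiv ℝ V x := fderiv_neg
    have h0 := h.divFree x hx
    rw [div3] at h0 ⊢
    rw [hd]
    have heq : ∀ i : Fin 3, ((-fderiv ℝ V x) (e3 i)) i = -((fderiv ℝ V x (e3 i)) i) :=
      fun i => rfl
    simp only [heq]
    rw [Finset.sum_neg_distrib, h0, neg_zero]

theorem stmt9' (α : ℝ) (hα0 : 0 < α) (hα1 : α < 1) (V : E3 → E3) (P : E3 → ℝ)
    (h : IsHomogEuler α V P) :
    ∀ x : E3, x ≠ 0 → ‖V x‖ ^ 2 + 2 * P x ≤ 0 ∧ P x ≤ 0 := by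
  intro x hx
  have hB : ‖V x‖ ^ 2 + 2 * P x ≤ 0 := by
    by_contra hpos
    push_neg at hpos
    rcases le_or_gt 0 ⟪x, V x⟫_ℝ with hg | hg
    · exact core h hα0 hα1 hx hg hpos
    · refine core (neg_homog h) hα0 hα1 hx ?_ ?_
      · simp only [inner_neg_right]
        linarith
      · simpa only [norm_neg] using hpos
  refine ⟨hB, ?_⟩
  nlinarith [sq_nonneg ‖V x‖]

/-- for `0 < α < 1` the Bernoulli function is nonpositive,
and in particular the pressure is nonpositive. -/
theorem stmt9 (α : ℝ) (hα0 : 0 < α) (hα1 : α < 1) (V : E3 → E3) (P : E3 → ℝ)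
    (h : IsHomogEuler α V P) :
    ∀ x : E3, x ≠ 0 → ‖V x‖ ^ 2 + 2 * P x ≤ 0 ∧ P x ≤ 0 := by
  exact stmt9' α hα0 hα1 V P h
end main
end
end

section
/- Let α = 2 and let (V, P) be a C¹ homogeneous solution of degree −2 of the stationary Euler equations on ℝ³ ∖ {0} that is axisymmetric. Then the solution is radial: there is a constant κ ∈ ℝ such that V(x) = κ x/|x|³ and P(x) = −κ²/(2|x|⁴) for all x ≠ 0. -/
noncomputable section

open Real MeasureTheory Metric

/-- Rotation of `ℝ³` about the `x₃`-axis by angle `θ`. -/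
def rotZ (θ : ℝ) (v : E3) : E3 :=
  vec3 (Real.cos θ * v 0 - Real.sin θ * v 1)
       (Real.sin θ * v 0 + Real.cos θ * v 1) (v 2)

/-- The solution `(V, P)` is axisymmetric: it is invariant under all
rotations about the `x₃`-axis. -/
def IsAxisymmetric (V : E3 → E3) (P : E3 → ℝ) : Prop :=
  ∀ θ : ℝ, ∀ x : E3, x ≠ 0 → V (rotZ θ x) = rotZ θ (V x) ∧ P (rotZ θ x) = P x

@[simp] lemma vec3_apply0 (a b c : ℝ) : vec3 a b c 0 = a := rfl
@[simp] lemma vec3_apply1 (a b c : ℝ) : vec3 a b c 1 = b := rfl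
@[simp] lemma vec3_apply2 (a b c : ℝ) : vec3 a b c 2 = c := rfl
@[simp] lemma e3_apply (i j : Fin 3) : e3 i j = if i = j then 1 else 0 := by
  simp [e3, EuclideanSpace.single_apply, eq_comm]
lemma E3_ext {x y : E3} (h0 : x 0 = y 0) (h1 : x 1 = y 1) (h2 : x 2 = y 2) : x = y := by
  refine PiLp.ext fun i => ?_; fin_cases i <;> assumption
@[simp] lemma E3_smul_apply (s : ℝ) (v : E3) (i : Fin 3) : (s • v) i = s * v i := rfl
@[simp] lemma E3_add_apply (u v : E3) (i : Fin 3) : (u + v) i = u i + v i := rfl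
@[simp] lemma E3_sub_apply (u v : E3) (i : Fin 3) : (u - v) i = u i - v i := rfl
@[simp] lemma E3_neg_apply (v : E3) (i : Fin 3) : (-v) i = - v i := rfl
@[simp] lemma E3_zero_apply (i : Fin 3) : (0 : E3) i = 0 := rfl

lemma vec3_eq_sum (a b c : ℝ) : vec3 a b c = a • e3 0 + b • e3 1 + c • e3 2 := by
  apply E3_ext <;> simp

lemma E3_norm_sq (x : E3) : ‖x‖^2 = x 0 ^2 + x 1 ^2 + x 2 ^2 := by
  rw [EuclideanSpace.norm_eq, Real.sq_sqrt (by positivity)]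
  simp [Fin.sum_univ_three]

lemma gradient_apply (P : E3 → ℝ) (x : E3) (i : Fin 3) :
    gradient P x i = fderiv ℝ P x (e3 i) := by
  have : gradient P x i = inner (𝕜 := ℝ) (gradient P x) (e3 i) := by
    rw [e3, EuclideanSpace.inner_single_right]; simp
  rw [this, gradient, InnerProductSpace.toDual_symm_apply]

/-- infinitesimal rotation -/
def omg (v : E3) : E3 := vec3 (-(v 1)) (v 0) 0

@[simp] lemma rotZ_zero (v : E3) : rotZ 0 v = v := by
  apply E3_ext <;> simp [rotZ]

lemma rotZ_smul (θ : ℝ) (s : ℝ) (v : E3) : rotZ θ (s • v) = s • rotZ θ v := by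
  apply E3_ext <;> simp [rotZ] <;> ring

lemma rotZ_ne_zero {θ : ℝ} {v : E3} (hv : v ≠ 0) : rotZ θ v ≠ 0 := by
  intro hc
  apply hv
  have h0 := congrArg (fun w : E3 => w 0) hc
  have h1 := congrArg (fun w : E3 => w 1) hc
  have h2 := congrArg (fun w : E3 => w 2) hc
  simp [rotZ] at h0 h1 h2
  have hv0 : v 0 = 0 := by
    linear_combination Real.cos θ * h0 + Real.sin θ * h1 - v 0 * Real.sin_sq_add_cos_sq θ
  have hv1 : v 1 = 0 := by
    linear_combination (-Real.sin θ) * h0 + Real.cos θ * h1 - v 1 * Real.sin_sq_add_cos_sq θ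
  apply E3_ext <;> simp [hv0, hv1, h2]
section
variable {V : E3 → E3} {P : E3 → ℝ}

lemma diffV_s11 (hV : ContDiffOn ℝ 1 V {(0:E3)}ᶜ) {x : E3} (hx : x ≠ 0) :
    DifferentiableAt ℝ V x :=
  (hV.differentiableOn one_ne_zero).differentiableAt
    (isOpen_compl_singleton.mem_nhds (by simpa using hx))

lemma diffP_s11 (hP : ContDiffOn ℝ 1 P {(0:E3)}ᶜ) {x : E3} (hx : x ≠ 0) :
    DifferentiableAt ℝ P x :=
  (hP.differentiableOn one_ne_zero).differentiableAt
    (isOpen_compl_singleton.mem_nhds (by simpa using hx))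

lemma contAtV (hV : ContDiffOn ℝ 1 V {(0:E3)}ᶜ) {x : E3} (hx : x ≠ 0) :
    ContinuousAt V x :=
  (diffV_s11 hV hx).continuousAt

/-- Euler's identity for `V`: radial derivative. -/
lemma radV (h : IsHomogEuler 2 V P) {x : E3} (hx : x ≠ 0) :
    fderiv ℝ V x x = (-2 : ℝ) • V x := by
  have hd : HasDerivAt (fun l : ℝ => V (l • x)) (fderiv ℝ V x x) 1 := by
    have h1 : HasDerivAt (fun l : ℝ => l • x) x 1 := by
      simpa using (hasDerivAt_id (1:ℝ)).smul_const x
    have h2 : HasFDerivAt V (fderiv ℝ V x) ((1:ℝ) • x) := by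
      rw [one_smul]; exact (diffV_s11 h.contV hx).hasFDerivAt
    exact h2.comp_hasDerivAt (1:ℝ) h1
  have hg : HasDerivAt (fun l : ℝ => (l ^ (-2 : ℤ)) • V x) ((-2 : ℝ) • V x) 1 := by
    have h0 := (hasDerivAt_zpow (-2) (1:ℝ) (Or.inl one_ne_zero)).smul_const (V x)
    exact h0.congr_deriv (by norm_num)
  have heq : (fun l : ℝ => (l ^ (-2:ℤ)) • V x) =ᶠ[nhds (1:ℝ)] (fun l : ℝ => V (l • x)) := by
    filter_upwards [lt_mem_nhds (show (0:ℝ) < 1 by norm_num)] with l hl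
    rw [h.homV l hl x hx]
    congr 1
    rw [← Real.rpow_intCast l (-2)]
    norm_num
  exact hd.unique (hg.congr_of_eventuallyEq heq.symm)

/-- Euler's identity for `P`. -/
lemma radP (h : IsHomogEuler 2 V P) {x : E3} (hx : x ≠ 0) :
    fderiv ℝ P x x = (-4 : ℝ) * P x := by
  have hd : HasDerivAt (fun l : ℝ => P (l • x)) (fderiv ℝ P x x) 1 := by
    have h1 : HasDerivAt (fun l : ℝ => l • x) x 1 := by
      simpa using (hasDerivAt_id (1:ℝ)).smul_const x
    have h2 : HasFDerivAt P (fderiv ℝ P x) ((1:ℝ) • x) := by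
      rw [one_smul]; exact (diffP_s11 h.contP hx).hasFDerivAt
    exact h2.comp_hasDerivAt (1:ℝ) h1
  have hg : HasDerivAt (fun l : ℝ => (l ^ (-4 : ℤ)) * P x) ((-4 : ℝ) * P x) 1 := by
    have h0 := (hasDerivAt_zpow (-4) (1:ℝ) (Or.inl one_ne_zero)).mul_const (P x)
    exact h0.congr_deriv (by norm_num)
  have heq : (fun l : ℝ => (l ^ (-4:ℤ)) * P x) =ᶠ[nhds (1:ℝ)] (fun l : ℝ => P (l • x)) := by
    filter_upwards [lt_mem_nhds (show (0:ℝ) < 1 by norm_num)] with l hl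
    rw [h.homP l hl x hx]
    congr 1
    rw [← Real.rpow_intCast l (-4)]
    norm_num
  exact hd.unique (hg.congr_of_eventuallyEq heq.symm)

lemma hasDerivAt_rotZ (v : E3) : HasDerivAt (fun θ => rotZ θ v) (omg v) 0 := by
  have hfun : (fun θ => rotZ θ v) = (fun θ : ℝ =>
      (Real.cos θ * v 0 - Real.sin θ * v 1) • e3 0 +
      (Real.sin θ * v 0 + Real.cos θ * v 1) • e3 1 + (v 2) • e3 2) :=
    funext fun θ => by rw [rotZ, vec3_eq_sum]
  rw [hfun, show omg v = (-(v 1)) • e3 0 + (v 0) • e3 1 + (0:ℝ) • e3 2 by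
    rw [omg, vec3_eq_sum]]
  have hc := Real.hasDerivAt_cos 0
  have hs := Real.hasDerivAt_sin 0
  have h1 : HasDerivAt (fun θ : ℝ => Real.cos θ * v 0 - Real.sin θ * v 1)
      (-(v 1)) 0 := by have h' := ((hc.mul_const (v 0)).sub (hs.mul_const (v 1))); simp at h'; exact h'
  have h2 : HasDerivAt (fun θ : ℝ => Real.sin θ * v 0 + Real.cos θ * v 1)
      (v 0) 0 := by have h' := ((hs.mul_const (v 0)).add (hc.mul_const (v 1))); simp at h'; exact h'
  exact ((h1.smul_const (e3 0)).add (h2.smul_const (e3 1))).add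
    ((hasDerivAt_const (0:ℝ) (v 2)).smul_const (e3 2))

lemma axiV (h : IsHomogEuler 2 V P) (haxi : IsAxisymmetric V P) {x : E3} (hx : x ≠ 0) :
    fderiv ℝ V x (omg x) = omg (V x) := by
  have h2 : HasFDerivAt V (fderiv ℝ V x) (rotZ 0 x) := by
    rw [rotZ_zero]; exact (diffV_s11 h.contV hx).hasFDerivAt
  have hd : HasDerivAt (fun θ => V (rotZ θ x)) (fderiv ℝ V x (omg x)) 0 := by
    exact h2.comp_hasDerivAt (0:ℝ) (hasDerivAt_rotZ x)
  have hfun : (fun θ => V (rotZ θ x)) = (fun θ => rotZ θ (V x)) :=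
    funext fun θ => (haxi θ x hx).1
  rw [hfun] at hd
  exact hd.unique (hasDerivAt_rotZ (V x))

lemma axiP (h : IsHomogEuler 2 V P) (haxi : IsAxisymmetric V P) {x : E3} (hx : x ≠ 0) :
    fderiv ℝ P x (omg x) = 0 := by
  have h2 : HasFDerivAt P (fderiv ℝ P x) (rotZ 0 x) := by
    rw [rotZ_zero]; exact (diffP_s11 h.contP hx).hasFDerivAt
  have hd : HasDerivAt (fun θ => P (rotZ θ x)) (fderiv ℝ P x (omg x)) 0 := by
    exact h2.comp_hasDerivAt (0:ℝ) (hasDerivAt_rotZ x)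
  have hfun : (fun θ => P (rotZ θ x)) = (fun _ => P x) :=
    funext fun θ => (haxi θ x hx).2
  rw [hfun] at hd
  exact hd.unique (hasDerivAt_const (0:ℝ) (P x))

end

/-! ### Meridian analysis -/

def gam (θ : ℝ) : E3 := vec3 (Real.sin θ) 0 (Real.cos θ)
def tau (θ : ℝ) : E3 := vec3 (Real.cos θ) 0 (-(Real.sin θ))

@[simp] lemma gam_apply0 (θ : ℝ) : gam θ 0 = Real.sin θ := rfl
@[simp] lemma gam_apply1 (θ : ℝ) : gam θ 1 = 0 := rfl
@[simp] lemma gam_apply2 (θ : ℝ) : gam θ 2 = Real.cos θ := rfl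
@[simp] lemma tau_apply0 (θ : ℝ) : tau θ 0 = Real.cos θ := rfl
@[simp] lemma tau_apply1 (θ : ℝ) : tau θ 1 = 0 := rfl
@[simp] lemma tau_apply2 (θ : ℝ) : tau θ 2 = -(Real.sin θ) := rfl

lemma gam_ne_zero (θ : ℝ) : gam θ ≠ 0 := by
  intro hc
  have h0 := congrArg (fun w : E3 => w 0) hc
  have h2 := congrArg (fun w : E3 => w 2) hc
  simp [gam] at h0 h2
  nlinarith [Real.sin_sq_add_cos_sq θ]

lemma hasDerivAt_gam (θ : ℝ) : HasDerivAt gam (tau θ) θ := by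
  have hfun : gam = (fun t : ℝ => Real.sin t • e3 0 + (0:ℝ) • e3 1 + Real.cos t • e3 2) :=
    funext fun t => by rw [gam, vec3_eq_sum]
  rw [hfun, show tau θ = Real.cos θ • e3 0 + (0:ℝ) • e3 1 + (-Real.sin θ) • e3 2 by
    rw [tau, vec3_eq_sum]]
  exact (((Real.hasDerivAt_sin θ).smul_const (e3 0)).add
    ((hasDerivAt_const θ (0:ℝ)).smul_const (e3 1))).add
    ((Real.hasDerivAt_cos θ).smul_const (e3 2))

lemma e30_decomp (θ : ℝ) : e3 0 = Real.sin θ • gam θ + Real.cos θ • tau θ := by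
  apply E3_ext <;> simp [gam, tau] <;> nlinarith [Real.sin_sq_add_cos_sq θ]

lemma e32_decomp (θ : ℝ) : e3 2 = Real.cos θ • gam θ - Real.sin θ • tau θ := by
  apply E3_ext <;> simp [gam, tau] <;> nlinarith [Real.sin_sq_add_cos_sq θ]

lemma omg_gam (θ : ℝ) : omg (gam θ) = Real.sin θ • e3 1 := by
  apply E3_ext <;> simp [gam, omg]

@[simp] lemma omg_apply0 (v : E3) : omg v 0 = -(v 1) := rfl
@[simp] lemma omg_apply1 (v : E3) : omg v 1 = v 0 := rfl
@[simp] lemma omg_apply2 (v : E3) : omg v 2 = 0 := rfl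

section
variable {V : E3 → E3} {P : E3 → ℝ}

/-- derivative of the restriction of `V` to the meridian -/
lemma hasDerivAt_Vgam (h : IsHomogEuler 2 V P) (θ : ℝ) :
    HasDerivAt (fun t => V (gam t)) (fderiv ℝ V (gam θ) (tau θ)) θ := by
  have h2 : HasFDerivAt V (fderiv ℝ V (gam θ)) (gam θ) :=
    (diffV_s11 h.contV (gam_ne_zero θ)).hasFDerivAt
  exact h2.comp_hasDerivAt θ (hasDerivAt_gam θ)

lemma hasDerivAt_Vgam_comp (h : IsHomogEuler 2 V P) (θ : ℝ) (i : Fin 3) :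
    HasDerivAt (fun t => V (gam t) i) (fderiv ℝ V (gam θ) (tau θ) i) θ := by
  have := (EuclideanSpace.proj (𝕜 := ℝ) (ι := Fin 3) i).hasFDerivAt.comp_hasDerivAt θ
    (hasDerivAt_Vgam h θ)
  exact this

lemma hasDerivAt_Pgam (h : IsHomogEuler 2 V P) (θ : ℝ) :
    HasDerivAt (fun t => P (gam t)) (fderiv ℝ P (gam θ) (tau θ)) θ := by
  have h2 : HasFDerivAt P (fderiv ℝ P (gam θ)) (gam θ) :=
    (diffP_s11 h.contP (gam_ne_zero θ)).hasFDerivAt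
  exact h2.comp_hasDerivAt θ (hasDerivAt_gam θ)

/-- the divergence-free condition on the meridian -/
lemma divEq (h : IsHomogEuler 2 V P) (haxi : IsAxisymmetric V P) {θ : ℝ}
    (hs : Real.sin θ ≠ 0) :
    Real.sin θ * (-2 * V (gam θ) 0) + Real.cos θ * fderiv ℝ V (gam θ) (tau θ) 0
      + (Real.sin θ)⁻¹ * V (gam θ) 0
      + (Real.cos θ * (-2 * V (gam θ) 2) - Real.sin θ * fderiv ℝ V (gam θ) (tau θ) 2) = 0 := by
  have hx := gam_ne_zero θ
  have hdiv := h.divFree (gam θ) hx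
  rw [div3, Fin.sum_univ_three] at hdiv
  set D := fderiv ℝ V (gam θ) with hD
  have hrad : D (gam θ) = (-2 : ℝ) • V (gam θ) := radV h hx
  have haxV : D (omg (gam θ)) = omg (V (gam θ)) := axiV h haxi hx
  have h0 : D (e3 0) = Real.sin θ • D (gam θ) + Real.cos θ • D (tau θ) := by
    rw [e30_decomp θ, D.map_add, D.map_smul, D.map_smul]
  have h2 : D (e3 2) = Real.cos θ • D (gam θ) - Real.sin θ • D (tau θ) := by
    rw [e32_decomp θ, D.map_sub, D.map_smul, D.map_smul]
  have h1 : D (e3 1) = (Real.sin θ)⁻¹ • omg (V (gam θ)) := by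
    have : omg (gam θ) = Real.sin θ • e3 1 := omg_gam θ
    have h1' : e3 1 = (Real.sin θ)⁻¹ • omg (gam θ) := by
      rw [this, smul_smul, inv_mul_cancel₀ hs, one_smul]
    rw [h1', D.map_smul, haxV]
  rw [h0, h1, h2, hrad] at hdiv
  simp only [E3_add_apply, E3_smul_apply, E3_sub_apply, omg_apply1] at hdiv
  linarith [hdiv]

end

lemma const_of_hasDerivAt_zero {f : ℝ → ℝ} {a b : ℝ}
    (hf : ∀ x ∈ Set.Ioo a b, HasDerivAt f 0 x) :
    ∀ x ∈ Set.Ioo a b, ∀ y ∈ Set.Ioo a b, f x = f y := by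
  intro x hx y hy
  refine (convex_Ioo a b).is_const_of_fderivWithin_eq_zero
    (fun z hz => ((hf z hz).differentiableAt).differentiableWithinAt)
    (fun z hz => ?_) hx hy
  rw [fderivWithin_of_isOpen isOpen_Ioo hz, (hf z hz).hasFDerivAt.fderiv]
  ext t
  simp

lemma nebot_Ioo_zero : (nhdsWithin (0:ℝ) (Set.Ioo 0 Real.pi)).NeBot := by
  rw [← mem_closure_iff_nhdsWithin_neBot, closure_Ioo Real.pi_ne_zero.symm]
  exact ⟨le_refl 0, Real.pi_pos.le⟩

lemma nebot_Ioo_pi : (nhdsWithin Real.pi (Set.Ioo 0 Real.pi)).NeBot := by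
  rw [← mem_closure_iff_nhdsWithin_neBot, closure_Ioo Real.pi_ne_zero.symm]
  exact ⟨Real.pi_pos.le, le_refl _⟩

lemma eq_at_boundary {X : Type*} [TopologicalSpace X] [T2Space X] {f g : ℝ → X}
    {s : Set ℝ} {t : ℝ} (hs : (nhdsWithin t s).NeBot) (hf : ContinuousAt f t)
    (hg : ContinuousAt g t) (heq : ∀ x ∈ s, f x = g x) : f t = g t := by
  have h1 : Filter.Tendsto f (nhdsWithin t s) (nhds (f t)) := hf.continuousWithinAt
  have h2 : Filter.Tendsto g (nhdsWithin t s) (nhds (g t)) := hg.continuousWithinAt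
  have h3 : Filter.Tendsto f (nhdsWithin t s) (nhds (g t)) := by
    refine h2.congr' ?_
    filter_upwards [self_mem_nhdsWithin] with x hx
    exact (heq x hx).symm
  exact tendsto_nhds_unique h1 h3

lemma pihalf_mem : Real.pi / 2 ∈ Set.Ioo 0 Real.pi :=
  ⟨Real.pi_div_two_pos, div_lt_self Real.pi_pos (by norm_num)⟩

section
variable {V : E3 → E3} {P : E3 → ℝ}

lemma cont_Vgam (h : IsHomogEuler 2 V P) : Continuous (fun t => V (gam t)) :=
  continuous_iff_continuousAt.2 fun θ =>
    (contAtV h.contV (gam_ne_zero θ)).comp (hasDerivAt_gam θ).continuousAt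

lemma cont_Pgam (h : IsHomogEuler 2 V P) : Continuous (fun t => P (gam t)) :=
  continuous_iff_continuousAt.2 fun θ =>
    (diffP_s11 h.contP (gam_ne_zero θ)).continuousAt.comp (hasDerivAt_gam θ).continuousAt

/-- the angular component vanishes on the open meridian -/
lemma bZero (h : IsHomogEuler 2 V P) (haxi : IsAxisymmetric V P) :
    ∀ θ ∈ Set.Ioo 0 Real.pi,
      Real.cos θ * V (gam θ) 0 - Real.sin θ * V (gam θ) 2 = 0 := by
  set b : ℝ → ℝ := fun t => Real.cos t * V (gam t) 0 - Real.sin t * V (gam t) 2 with hb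
  set SB : ℝ → ℝ := fun t => Real.sin t * b t with hSB
  have hderiv : ∀ θ ∈ Set.Ioo 0 Real.pi, HasDerivAt SB 0 θ := by
    intro θ hθ
    have hs : Real.sin θ ≠ 0 := (Real.sin_pos_of_pos_of_lt_pi hθ.1 hθ.2).ne'
    have hbd : HasDerivAt b
        ((-Real.sin θ * V (gam θ) 0 + Real.cos θ * fderiv ℝ V (gam θ) (tau θ) 0)
          - (Real.cos θ * V (gam θ) 2 + Real.sin θ * fderiv ℝ V (gam θ) (tau θ) 2)) θ :=
      ((Real.hasDerivAt_cos θ).mul (hasDerivAt_Vgam_comp h θ 0)).sub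
        ((Real.hasDerivAt_sin θ).mul (hasDerivAt_Vgam_comp h θ 2))
    have hsb := (Real.hasDerivAt_sin θ).mul hbd
    have hdiv := divEq h haxi hs
    have hsc := Real.sin_sq_add_cos_sq θ
    have hval : Real.cos θ * b θ + Real.sin θ *
        ((-Real.sin θ * V (gam θ) 0 + Real.cos θ * fderiv ℝ V (gam θ) (tau θ) 0)
          - (Real.cos θ * V (gam θ) 2 + Real.sin θ * fderiv ℝ V (gam θ) (tau θ) 2)) = 0 := by
      simp only [hb]
      field_simp at hdiv
      linear_combination hdiv + V (gam θ) 0 * hsc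
    rwa [hval] at hsb
  have hconst := const_of_hasDerivAt_zero hderiv
  have hcont : Continuous SB := by
    apply Real.continuous_sin.mul
    exact (Real.continuous_cos.mul ((PiLp.continuous_apply 2 _ _).comp (cont_Vgam h))).sub
      (Real.continuous_sin.mul ((PiLp.continuous_apply 2 _ _).comp (cont_Vgam h)))
  intro θ hθ
  have hs : Real.sin θ ≠ 0 := (Real.sin_pos_of_pos_of_lt_pi hθ.1 hθ.2).ne'
  have hK : SB 0 = SB θ :=
    eq_at_boundary (f := SB) (g := fun _ => SB θ) nebot_Ioo_zero
      hcont.continuousAt continuousAt_const (fun x hx => hconst x hx θ hθ)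
  have h0 : SB 0 = 0 := by simp [hSB]
  have hθ0 : Real.sin θ * b θ = 0 := by
    have : SB θ = 0 := by rw [← hK, h0]
    exact this
  exact (mul_eq_zero.1 hθ0).resolve_left hs

end

def aF (V : E3 → E3) (θ : ℝ) : ℝ := Real.sin θ * V (gam θ) 0 + Real.cos θ * V (gam θ) 2
def cF (V : E3 → E3) (θ : ℝ) : ℝ := V (gam θ) 1
def qF (P : E3 → ℝ) (θ : ℝ) : ℝ := P (gam θ)
def dqF (P : E3 → ℝ) (θ : ℝ) : ℝ := fderiv ℝ P (gam θ) (tau θ)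

section
variable {V : E3 → E3} {P : E3 → ℝ}

lemma F0_eq (h : IsHomogEuler 2 V P) (haxi : IsAxisymmetric V P) {θ : ℝ}
    (hθ : θ ∈ Set.Ioo 0 Real.pi) : V (gam θ) 0 = aF V θ * Real.sin θ := by
  have hb := bZero h haxi θ hθ
  have hsc := Real.sin_sq_add_cos_sq θ
  rw [aF]
  linear_combination Real.cos θ * hb - V (gam θ) 0 * hsc

lemma F2_eq (h : IsHomogEuler 2 V P) (haxi : IsAxisymmetric V P) {θ : ℝ}
    (hθ : θ ∈ Set.Ioo 0 Real.pi) : V (gam θ) 2 = aF V θ * Real.cos θ := by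
  have hb := bZero h haxi θ hθ
  have hsc := Real.sin_sq_add_cos_sq θ
  rw [aF]
  linear_combination (-Real.sin θ) * hb - V (gam θ) 2 * hsc

lemma eulerMeridian (h : IsHomogEuler 2 V P) (haxi : IsAxisymmetric V P) {θ : ℝ}
    (hθ : θ ∈ Set.Ioo 0 Real.pi) :
    aF V θ * cF V θ = 0 ∧
    2 * aF V θ ^ 2 + cF V θ ^ 2 + 4 * qF P θ = 0 ∧
    Real.sin θ * dqF P θ = cF V θ ^ 2 * Real.cos θ := by
  have hx := gam_ne_zero θ
  have hs : Real.sin θ ≠ 0 := (Real.sin_pos_of_pos_of_lt_pi hθ.1 hθ.2).ne'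
  have hsc := Real.sin_sq_add_cos_sq θ
  have hF0 := F0_eq h haxi hθ
  have hF2 := F2_eq h haxi hθ
  have hF1 : V (gam θ) 1 = cF V θ := rfl
  -- decomposition of V (gam θ)
  have hdecomp : V (gam θ) = aF V θ • gam θ + cF V θ • e3 1 := by
    apply E3_ext
    · simp [hF0]
    · simp [← hF1]
    · simp [hF2]
  -- derivative of V in direction V
  have hDe1 : fderiv ℝ V (gam θ) (e3 1) = (Real.sin θ)⁻¹ • omg (V (gam θ)) := by
    have h1' : e3 1 = (Real.sin θ)⁻¹ • omg (gam θ) := by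
      rw [omg_gam θ, smul_smul, inv_mul_cancel₀ hs, one_smul]
    rw [h1', (fderiv ℝ V (gam θ)).map_smul, axiV h haxi hx]
  have hDV : fderiv ℝ V (gam θ) (V (gam θ)) =
      aF V θ • ((-2:ℝ) • V (gam θ)) + cF V θ • ((Real.sin θ)⁻¹ • omg (V (gam θ))) := by
    nth_rewrite 1 [hdecomp]
    rw [(fderiv ℝ V (gam θ)).map_add, (fderiv ℝ V (gam θ)).map_smul,
      (fderiv ℝ V (gam θ)).map_smul, radV h hx, hDe1]
  -- gradient components
  have hg0 : gradient P (gam θ) 0 = Real.sin θ * (-4 * qF P θ) + Real.cos θ * dqF P θ := by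
    rw [gradient_apply, e30_decomp θ, (fderiv ℝ P (gam θ)).map_add,
      (fderiv ℝ P (gam θ)).map_smul, (fderiv ℝ P (gam θ)).map_smul, radP h hx]
    simp only [qF, dqF, smul_eq_mul]
    try ring
  have hg1 : gradient P (gam θ) 1 = 0 := by
    have h1' : e3 1 = (Real.sin θ)⁻¹ • omg (gam θ) := by
      rw [omg_gam θ, smul_smul, inv_mul_cancel₀ hs, one_smul]
    rw [gradient_apply, h1', (fderiv ℝ P (gam θ)).map_smul, axiP h haxi hx]
    simp
  have hg2 : gradient P (gam θ) 2 = Real.cos θ * (-4 * qF P θ) - Real.sin θ * dqF P θ := by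
    rw [gradient_apply, e32_decomp θ, (fderiv ℝ P (gam θ)).map_sub,
      (fderiv ℝ P (gam θ)).map_smul, (fderiv ℝ P (gam θ)).map_smul, radP h hx]
    simp only [qF, dqF, smul_eq_mul]
    try ring
  -- euler components
  have hE := h.euler (gam θ) hx
  have hEi : ∀ i, fderiv ℝ V (gam θ) (V (gam θ)) i + gradient P (gam θ) i = 0 := by
    intro i
    rw [← E3_add_apply, hE]
    rfl
  have hE0 := hEi 0
  have hE1 := hEi 1
  have hE2 := hEi 2
  rw [hDV, hg0] at hE0
  rw [hDV, hg1] at hE1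
  rw [hDV, hg2] at hE2
  simp only [E3_add_apply, E3_smul_apply, omg_apply0, omg_apply1, omg_apply2,
    hF0, hF1, hF2, add_zero, mul_zero] at hE0 hE1 hE2
  have key1 : aF V θ * cF V θ = 0 := by
    field_simp at hE1
    linarith [hE1]
  have hE0' : -2 * aF V θ^2 * Real.sin θ^2 - cF V θ^2 - 4 * qF P θ * Real.sin θ^2
      + Real.cos θ * dqF P θ * Real.sin θ = 0 := by
    field_simp at hE0
    linarith [hE0]
  have hE2' : -2 * aF V θ^2 * Real.cos θ - 4 * qF P θ * Real.cos θ
      - Real.sin θ * dqF P θ = 0 := by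
    linarith [hE2]
  refine ⟨key1, ?_, ?_⟩
  · linear_combination -hE0' - Real.cos θ * hE2' - (2 * aF V θ^2 + 4 * qF P θ) * hsc
  · linear_combination Real.cos θ * hE0' - Real.sin θ^2 * hE2'
      - Real.sin θ * dqF P θ * hsc
end

section
variable {V : E3 → E3} {P : E3 → ℝ}

lemma cont_gam : Continuous gam :=
  continuous_iff_continuousAt.2 fun θ => (hasDerivAt_gam θ).continuousAt

lemma cont_aF (h : IsHomogEuler 2 V P) : Continuous (aF V) :=
  (Real.continuous_sin.mul ((PiLp.continuous_apply 2 _ (0 : Fin 3)).comp (cont_Vgam h))).add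
    (Real.continuous_cos.mul ((PiLp.continuous_apply 2 _ (2 : Fin 3)).comp (cont_Vgam h)))

lemma cont_cF (h : IsHomogEuler 2 V P) : Continuous (cF V) :=
  (PiLp.continuous_apply 2 _ (1 : Fin 3)).comp (cont_Vgam h)

lemma hasDerivAt_aF (h : IsHomogEuler 2 V P) (θ : ℝ) :
    HasDerivAt (aF V) (deriv (aF V) θ) θ := by
  have hd : HasDerivAt (aF V)
      ((Real.cos θ * V (gam θ) 0 + Real.sin θ * fderiv ℝ V (gam θ) (tau θ) 0) +
       (-Real.sin θ * V (gam θ) 2 + Real.cos θ * fderiv ℝ V (gam θ) (tau θ) 2)) θ :=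
    ((Real.hasDerivAt_sin θ).mul (hasDerivAt_Vgam_comp h θ 0)).add
      ((Real.hasDerivAt_cos θ).mul (hasDerivAt_Vgam_comp h θ 2))
  exact hd.differentiableAt.hasDerivAt

lemma hasDerivAt_cF (h : IsHomogEuler 2 V P) (θ : ℝ) :
    HasDerivAt (cF V) (deriv (cF V) θ) θ :=
  (hasDerivAt_Vgam_comp h θ 1).differentiableAt.hasDerivAt

lemma hasDerivAt_qF (h : IsHomogEuler 2 V P) (θ : ℝ) :
    HasDerivAt (qF P) (dqF P θ) θ := hasDerivAt_Pgam h θ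

/-- the azimuthal component vanishes -/
lemma cZero (h : IsHomogEuler 2 V P) (haxi : IsAxisymmetric V P) :
    ∀ θ ∈ Set.Ioo 0 Real.pi, cF V θ = 0 := by
  have hW : ∀ θ ∈ Set.Ioo 0 Real.pi,
      4 * aF V θ * deriv (aF V) θ + 2 * cF V θ * deriv (cF V) θ + 4 * dqF P θ = 0 := by
    intro θ hθ
    have hWd : HasDerivAt (fun t => 2 * aF V t ^ 2 + cF V t ^ 2 + 4 * qF P t)
        (4 * aF V θ * deriv (aF V) θ + 2 * cF V θ * deriv (cF V) θ + 4 * dqF P θ) θ := by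
      have h1 := (((hasDerivAt_aF h θ).pow 2).const_mul (2:ℝ)).add
        ((hasDerivAt_cF h θ).pow 2)
      have h2 := h1.add ((hasDerivAt_qF h θ).const_mul (4:ℝ))
      exact h2.congr_deriv (by norm_num <;> ring)
    have hev : (fun t => 2 * aF V t ^ 2 + cF V t ^ 2 + 4 * qF P t) =ᶠ[nhds θ]
        (fun _ => (0:ℝ)) := by
      filter_upwards [isOpen_Ioo.mem_nhds hθ] with t ht
      exact (eulerMeridian h haxi ht).2.1
    have h0 : HasDerivAt (fun t => 2 * aF V t ^ 2 + cF V t ^ 2 + 4 * qF P t) 0 θ :=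
      (hasDerivAt_const θ (0:ℝ)).congr_of_eventuallyEq hev
    exact hWd.unique h0
  have hu : ∀ θ ∈ Set.Ioo 0 Real.pi,
      HasDerivAt (fun t => cF V t ^ 2 * Real.sin t ^ 4) 0 θ := by
    intro θ hθ
    have hsin4 : HasDerivAt (fun t => Real.sin t ^ 4)
        (4 * Real.sin θ ^ 3 * Real.cos θ) θ := by
      have := (Real.hasDerivAt_sin θ).pow 4
      exact this.congr_deriv (by norm_num <;> ring)
    have hud := ((hasDerivAt_cF h θ).pow 2).mul hsin4
    have hval : 2 * cF V θ * deriv (cF V) θ * Real.sin θ ^ 4 +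
        cF V θ ^ 2 * (4 * Real.sin θ ^ 3 * Real.cos θ) = 0 := by
      by_cases hc : cF V θ = 0
      · simp [hc]
      · have hopen : {t | cF V t ≠ 0} ∩ Set.Ioo 0 Real.pi ∈ nhds θ :=
          ((isOpen_ne_fun (cont_cF h) continuous_const).inter isOpen_Ioo).mem_nhds ⟨hc, hθ⟩
        have haev : (aF V) =ᶠ[nhds θ] (fun _ => (0:ℝ)) := by
          filter_upwards [hopen] with t ht
          exact (mul_eq_zero.1 (eulerMeridian h haxi ht.2).1).resolve_right ht.1
        have ha0 : aF V θ = 0 := haev.eq_of_nhds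
        have hda : deriv (aF V) θ = 0 := by
          rw [haev.deriv_eq]
          simp
        have hWθ := hW θ hθ
        rw [ha0, hda] at hWθ
        have h2cdc : 2 * cF V θ * deriv (cF V) θ = -4 * dqF P θ := by linarith
        have hdq := (eulerMeridian h haxi hθ).2.2
        have : 2 * cF V θ * deriv (cF V) θ * Real.sin θ ^ 4 +
            cF V θ ^ 2 * (4 * Real.sin θ ^ 3 * Real.cos θ) = 0 := by
          linear_combination Real.sin θ ^ 4 * h2cdc + (-4 * Real.sin θ ^ 3) * hdq
        linarith [this]
    refine hud.congr_deriv ?_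
    simp only [Pi.pow_apply]
    push_cast
    ring_nf
    ring_nf at hval
    linarith [hval]
  have huconst := const_of_hasDerivAt_zero hu
  intro θ hθ
  have hcont : Continuous (fun t => cF V t ^ 2 * Real.sin t ^ 4) :=
    ((cont_cF h).pow 2).mul (Real.continuous_sin.pow 4)
  have hK : cF V 0 ^ 2 * Real.sin 0 ^ 4 = cF V θ ^ 2 * Real.sin θ ^ 4 :=
    eq_at_boundary nebot_Ioo_zero hcont.continuousAt continuousAt_const
      (fun x hx => huconst x hx θ hθ)
  have hzero : cF V θ ^ 2 * Real.sin θ ^ 4 = 0 := by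
    rw [← hK]
    simp
  have hs : Real.sin θ ≠ 0 := (Real.sin_pos_of_pos_of_lt_pi hθ.1 hθ.2).ne'
  rcases mul_eq_zero.1 hzero with hcc | hss
  · exact pow_eq_zero_iff (by norm_num) |>.1 hcc
  · exact absurd (pow_eq_zero_iff (by norm_num) |>.1 hss) hs

/-- `q` is constant on the meridian -/
lemma qConst (h : IsHomogEuler 2 V P) (haxi : IsAxisymmetric V P) :
    ∀ θ ∈ Set.Ioo 0 Real.pi, qF P θ = qF P (Real.pi / 2) := by
  have hq0 : ∀ θ ∈ Set.Ioo 0 Real.pi, HasDerivAt (qF P) 0 θ := by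
    intro θ hθ
    have hs : Real.sin θ ≠ 0 := (Real.sin_pos_of_pos_of_lt_pi hθ.1 hθ.2).ne'
    have hdq := (eulerMeridian h haxi hθ).2.2
    rw [cZero h haxi θ hθ] at hdq
    have : dqF P θ = 0 := by
      rcases mul_eq_zero.1 (by linarith [hdq] : Real.sin θ * dqF P θ = 0) with hh | hh
      · exact absurd hh hs
      · exact hh
    have h1 := hasDerivAt_qF h θ
    rwa [this] at h1
  exact fun θ hθ => const_of_hasDerivAt_zero hq0 θ hθ _ pihalf_mem

/-- `a` is constant on the meridian -/
lemma aConst (h : IsHomogEuler 2 V P) (haxi : IsAxisymmetric V P) :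
    ∀ θ ∈ Set.Ioo 0 Real.pi, aF V θ = aF V (Real.pi / 2) := by
  have hsq : ∀ θ ∈ Set.Ioo 0 Real.pi, aF V θ ^ 2 = aF V (Real.pi / 2) ^ 2 := by
    intro θ hθ
    have e1 := (eulerMeridian h haxi hθ).2.1
    have e2 := (eulerMeridian h haxi pihalf_mem).2.1
    rw [cZero h haxi θ hθ] at e1
    rw [cZero h haxi _ pihalf_mem] at e2
    have hqq := qConst h haxi θ hθ
    nlinarith [e1, e2, hqq]
  intro θ hθ
  by_contra hne
  have hmm : aF V θ = -aF V (Real.pi / 2) := by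
    have h1 : aF V θ * aF V θ = aF V (Real.pi / 2) * aF V (Real.pi / 2) := by
      have := hsq θ hθ
      nlinarith [this]
    rcases mul_self_eq_mul_self_iff.1 h1 with hh | hh
    · exact absurd hh hne
    · exact hh
  have hk0 : aF V (Real.pi / 2) ≠ 0 := by
    intro hc
    apply hne
    rw [hmm, hc]
    ring
  have hsub : Set.uIcc θ (Real.pi / 2) ⊆ Set.Ioo 0 Real.pi :=
    (Set.ordConnected_Ioo).uIcc_subset hθ pihalf_mem
  have h0mem : (0:ℝ) ∈ Set.uIcc (aF V θ) (aF V (Real.pi / 2)) := by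
    rw [hmm, Set.mem_uIcc]
    rcases le_or_gt 0 (aF V (Real.pi / 2)) with hh | hh
    · left; constructor <;> linarith
    · right; constructor <;> linarith
  obtain ⟨t, ht, hat⟩ := intermediate_value_uIcc ((cont_aF h).continuousOn) h0mem
  have htsq := hsq t (hsub ht)
  rw [hat] at htsq
  have hfin : aF V (Real.pi / 2) ^ 2 = 0 := by rw [← htsq]; norm_num
  exact hk0 (pow_eq_zero_iff (two_ne_zero) |>.1 hfin)

/-- values of `V` and `P` on the closed meridian -/
lemma VgamIcc (h : IsHomogEuler 2 V P) (haxi : IsAxisymmetric V P) :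
    ∀ θ ∈ Set.Icc 0 Real.pi, V (gam θ) = aF V (Real.pi / 2) • gam θ ∧
      P (gam θ) = -(aF V (Real.pi / 2)) ^ 2 / 2 := by
  have hIoo : ∀ θ ∈ Set.Ioo 0 Real.pi, V (gam θ) = aF V (Real.pi / 2) • gam θ := by
    intro θ hθ
    have hF0 := F0_eq h haxi hθ
    have hF2 := F2_eq h haxi hθ
    have hc := cZero h haxi θ hθ
    have ha := aConst h haxi θ hθ
    apply E3_ext
    · simp [hF0, ha, mul_comm]
    · rw [show V (gam θ) 1 = cF V θ from rfl, hc]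
      simp
    · simp [hF2, ha, mul_comm]
  have hqIoo : ∀ θ ∈ Set.Ioo 0 Real.pi, P (gam θ) = -(aF V (Real.pi / 2)) ^ 2 / 2 := by
    intro θ hθ
    have e1 := (eulerMeridian h haxi hθ).2.1
    rw [cZero h haxi θ hθ, aConst h haxi θ hθ] at e1
    have : P (gam θ) = qF P θ := rfl
    rw [this]
    nlinarith [e1]
  intro θ hθ
  rcases eq_or_lt_of_le hθ.1 with h0 | h0
  · constructor
    · exact eq_at_boundary (f := fun t => V (gam t)) (g := fun t => aF V (Real.pi/2) • gam t)
        (h0 ▸ nebot_Ioo_zero) (cont_Vgam h).continuousAt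
        (show Continuous (fun t => aF V (Real.pi/2) • gam t) by have hc := cont_gam; fun_prop).continuousAt hIoo
    · exact eq_at_boundary (f := fun t => P (gam t)) (g := fun _ => -(aF V (Real.pi/2))^2/2)
        (h0 ▸ nebot_Ioo_zero) (cont_Pgam h).continuousAt continuousAt_const hqIoo
  rcases eq_or_lt_of_le hθ.2 with hpi | hpi
  · constructor
    · exact eq_at_boundary (f := fun t => V (gam t)) (g := fun t => aF V (Real.pi/2) • gam t)
        (hpi ▸ nebot_Ioo_pi) (cont_Vgam h).continuousAt
        (show Continuous (fun t => aF V (Real.pi/2) • gam t) by have hc := cont_gam; fun_prop).continuousAt hIoo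
    · exact eq_at_boundary (f := fun t => P (gam t)) (g := fun _ => -(aF V (Real.pi/2))^2/2)
        (hpi ▸ nebot_Ioo_pi) (cont_Pgam h).continuousAt continuousAt_const hqIoo
  · exact ⟨hIoo θ ⟨h0, hpi⟩, hqIoo θ ⟨h0, hpi⟩⟩

end

/-- for `α = 2`, every axisymmetric `C¹` homogeneous solution
is the radial one. -/
theorem stmt11 (V : E3 → E3) (P : E3 → ℝ) (h : IsHomogEuler 2 V P)
    (haxi : IsAxisymmetric V P) :
    ∃ κ : ℝ, ∀ x : E3, x ≠ 0 →
      V x = (κ / ‖x‖ ^ 3) • x ∧ P x = -κ ^ 2 / (2 * ‖x‖ ^ 4) := by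
  refine ⟨aF V (Real.pi / 2), fun x hx => ?_⟩
  have hr : (0:ℝ) < ‖x‖ := norm_pos_iff.2 hx
  set r := ‖x‖ with hrdef
  set y : E3 := r⁻¹ • x with hydef
  have hy : y ≠ 0 := smul_ne_zero (inv_ne_zero hr.ne') hx
  have hny : ‖y‖ = 1 := by
    rw [hydef, norm_smul, norm_inv, norm_norm, ← hrdef, inv_mul_cancel₀ hr.ne']
  have hysum : y 0 ^ 2 + y 1 ^ 2 + y 2 ^ 2 = 1 := by
    have h1 := E3_norm_sq y
    rw [hny] at h1
    linarith [h1]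
  have hy2le : -1 ≤ y 2 ∧ y 2 ≤ 1 := by
    constructor <;> nlinarith [sq_nonneg (y 0), sq_nonneg (y 1)]
  set θ := Real.arccos (y 2) with hθdef
  have hθIcc : θ ∈ Set.Icc 0 Real.pi := ⟨Real.arccos_nonneg _, Real.arccos_le_pi _⟩
  set z : ℂ := Complex.ofReal (y 0) + Complex.ofReal (y 1) * Complex.I with hzdef
  have hzre : z.re = y 0 := by simp [hzdef]
  have hzim : z.im = y 1 := by simp [hzdef]
  set φ := Complex.arg z with hφdef
  have habs2 : ‖z‖ ^ 2 = y 0 ^ 2 + y 1 ^ 2 := by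
    rw [Complex.sq_norm, Complex.normSq_apply, hzre, hzim]
    ring
  have hcos : Real.cos θ = y 2 := Real.cos_arccos hy2le.1 hy2le.2
  have hsin : Real.sin θ = ‖z‖ := by
    rw [hθdef, Real.sin_arccos, show 1 - y 2 ^ 2 = ‖z‖ ^ 2 by
      rw [habs2]; linarith [hysum]]
    exact Real.sqrt_sq (norm_nonneg z)
  have hre : ‖z‖ * Real.cos φ = y 0 := by
    rw [hφdef, Complex.norm_mul_cos_arg, hzre]
  have him : ‖z‖ * Real.sin φ = y 1 := by
    rw [hφdef, Complex.norm_mul_sin_arg, hzim]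
  have hxy : rotZ φ (gam θ) = y := by
    apply E3_ext
    · rw [rotZ]
      simp only [vec3_apply0, gam_apply0, gam_apply1]
      rw [hsin, mul_zero, sub_zero, mul_comm]
      exact hre
    · rw [rotZ]
      simp only [vec3_apply1, gam_apply0, gam_apply1]
      rw [hsin, mul_zero, add_zero, mul_comm, him]
    · rw [rotZ]
      simp only [vec3_apply2, gam_apply2]
      exact hcos
  have hmer := VgamIcc h haxi θ hθIcc
  have hVy : V y = aF V (Real.pi / 2) • y := by
    rw [← hxy, (haxi φ (gam θ) (gam_ne_zero θ)).1, hmer.1, rotZ_smul]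
  have hPy : P y = -(aF V (Real.pi / 2)) ^ 2 / 2 := by
    rw [← hxy, (haxi φ (gam θ) (gam_ne_zero θ)).2, hmer.2]
  have hxr : x = r • y := by
    rw [hydef, smul_inv_smul₀ hr.ne']
  have hrpow2 : r ^ (-(2:ℝ)) = (r ^ 2)⁻¹ := by
    rw [Real.rpow_neg hr.le, show ((2:ℝ)) = ((2:ℕ):ℝ) by norm_num, Real.rpow_natCast]
  have hrpow4 : r ^ (-(2 * (2:ℝ))) = (r ^ 4)⁻¹ := by
    rw [Real.rpow_neg hr.le, show ((2 * (2:ℝ))) = ((4:ℕ):ℝ) by norm_num, Real.rpow_natCast]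
  have hV1 : V x = V (r • y) := by rw [← hxr]
  rw [h.homV r hr y hy, hVy, hrpow2] at hV1
  have hP1 : P x = P (r • y) := by rw [← hxr]
  rw [h.homP r hr y hy, hPy, hrpow4] at hP1
  constructor
  · rw [hV1, hydef, smul_smul, smul_smul]
    congr 1
    field_simp
  · rw [hP1]
    field_simp
end
end

section
/- Let α ∈ ℝ with α ≠ 2 and let I ⊆ (0, π) be an open interval. Suppose f, a, b : I → ℝ are differentiable, a(φ) b(φ) ≠ 0 for all φ ∈ I, and for all φ ∈ I: (2−α) f(φ) + a′(φ) + a(φ) cot φ = 0 and (1−α) f(φ) b(φ) + a(φ) b′(φ) + a(φ) b(φ) cot φ = 0. Then the function φ ↦ |b(φ)|^{2−α} · |a(φ)|^{α−1} · sin φ is constant on I. -/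
noncomputable section

open Real MeasureTheory Metric

/-- the first integral `|b|^{2-α} |a|^{α-1} sin φ` of the
axisymmetric meridional equations is constant. -/
theorem stmt17 (α : ℝ) (hα : α ≠ 2) (s t : ℝ)
    (hI : Set.Ioo s t ⊆ Set.Ioo 0 π)
    (f a b a' b' : ℝ → ℝ)
    (hf : ∀ φ ∈ Set.Ioo s t, DifferentiableAt ℝ f φ)
    (ha : ∀ φ ∈ Set.Ioo s t, HasDerivAt a (a' φ) φ)
    (hb : ∀ φ ∈ Set.Ioo s t, HasDerivAt b (b' φ) φ)
    (hab : ∀ φ ∈ Set.Ioo s t, a φ * b φ ≠ 0)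
    (heq1 : ∀ φ ∈ Set.Ioo s t,
      (2 - α) * f φ + a' φ + a φ * (Real.cos φ / Real.sin φ) = 0)
    (heq4 : ∀ φ ∈ Set.Ioo s t,
      (1 - α) * f φ * b φ + a φ * b' φ
        + a φ * b φ * (Real.cos φ / Real.sin φ) = 0) :
    ∀ φ₁ ∈ Set.Ioo s t, ∀ φ₂ ∈ Set.Ioo s t,
      |b φ₁| ^ (2 - α) * |a φ₁| ^ (α - 1) * Real.sin φ₁ =
      |b φ₂| ^ (2 - α) * |a φ₂| ^ (α - 1) * Real.sin φ₂ := by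
  set F : ℝ → ℝ := fun φ => (b φ ^ 2) ^ ((2 - α) / 2) * (a φ ^ 2) ^ ((α - 1) / 2) * Real.sin φ
    with hFdef
  have habs : ∀ φ, |b φ| ^ (2 - α) * |a φ| ^ (α - 1) * Real.sin φ = F φ := by
    intro φ
    have h1 : (b φ ^ 2 : ℝ) ^ ((2 - α) / 2) = |b φ| ^ (2 - α) := by
      rw [← sq_abs, ← Real.rpow_natCast |b φ| 2, ← Real.rpow_mul (abs_nonneg _)]
      norm_num
      congr 1
      ring
    have h2 : (a φ ^ 2 : ℝ) ^ ((α - 1) / 2) = |a φ| ^ (α - 1) := by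
      rw [← sq_abs, ← Real.rpow_natCast |a φ| 2, ← Real.rpow_mul (abs_nonneg _)]
      norm_num
      congr 1
      ring
    rw [hFdef]; simp only [h1, h2]
  have hF0 : ∀ φ ∈ Set.Ioo s t, HasDerivAt F 0 φ := by
    intro φ hφ
    have ha0 : a φ ≠ 0 := fun h => hab φ hφ (by rw [h]; ring)
    have hb0 : b φ ≠ 0 := fun h => hab φ hφ (by rw [h]; ring)
    have hsin : 0 < Real.sin φ := Real.sin_pos_of_pos_of_lt_pi (hI hφ).1 (hI hφ).2
    have hb2 : HasDerivAt (fun x => b x ^ 2) (2 * b φ * b' φ) φ := by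
      have := (hb φ hφ).fun_pow 2; simpa [mul_comm] using this
    have ha2 : HasDerivAt (fun x => a x ^ 2) (2 * a φ * a' φ) φ := by
      have := (ha φ hφ).fun_pow 2; simpa [mul_comm] using this
    have hB : HasDerivAt (fun x => (b x ^ 2) ^ ((2 - α) / 2))
        (2 * b φ * b' φ * ((2 - α) / 2) * (b φ ^ 2) ^ ((2 - α) / 2 - 1)) φ :=
      hb2.rpow_const (Or.inl (pow_ne_zero 2 hb0))
    have hA : HasDerivAt (fun x => (a x ^ 2) ^ ((α - 1) / 2))
        (2 * a φ * a' φ * ((α - 1) / 2) * (a φ ^ 2) ^ ((α - 1) / 2 - 1)) φ :=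
      ha2.rpow_const (Or.inl (pow_ne_zero 2 ha0))
    have hF' := (hB.mul hA).mul (Real.hasDerivAt_sin φ)
    have hzero :
        (2 * b φ * b' φ * ((2 - α) / 2) * (b φ ^ 2) ^ ((2 - α) / 2 - 1) *
              (a φ ^ 2) ^ ((α - 1) / 2) +
            (b φ ^ 2) ^ ((2 - α) / 2) *
              (2 * a φ * a' φ * ((α - 1) / 2) * (a φ ^ 2) ^ ((α - 1) / 2 - 1))) *
            Real.sin φ +
          (b φ ^ 2) ^ ((2 - α) / 2) * (a φ ^ 2) ^ ((α - 1) / 2) * Real.cos φ = 0 := by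
      rw [Real.rpow_sub_one (pow_ne_zero 2 hb0), Real.rpow_sub_one (pow_ne_zero 2 ha0)]
      have hE1 := heq1 φ hφ
      have hE4 := heq4 φ hφ
      have hs : Real.sin φ ≠ 0 := ne_of_gt hsin
      have hE1s : (2 - α) * f φ * Real.sin φ + a' φ * Real.sin φ + a φ * Real.cos φ = 0 := by
        field_simp at hE1
        linear_combination hE1
      have hE4s : (1 - α) * f φ * b φ * Real.sin φ + a φ * b' φ * Real.sin φ
          + a φ * b φ * Real.cos φ = 0 := by
        field_simp at hE4
        linear_combination hE4
      have hW : (2 - α) * (a φ * b' φ) * Real.sin φ + (α - 1) * (b φ * a' φ) * Real.sin φ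
          + a φ * b φ * Real.cos φ = 0 := by
        linear_combination (2 - α) * hE4s + (α - 1) * (b φ) * hE1s
      set B := (b φ ^ 2) ^ ((2 - α) / 2) with hBdef
      set A := (a φ ^ 2) ^ ((α - 1) / 2) with hAdef
      have hfac : (2 * b φ * b' φ * ((2 - α) / 2) * (B / b φ ^ 2) * A
            + B * (2 * a φ * a' φ * ((α - 1) / 2) * (A / a φ ^ 2))) * Real.sin φ
            + B * A * Real.cos φ
          = A * B / (a φ * b φ) *
            ((2 - α) * (a φ * b' φ) * Real.sin φ
              + (α - 1) * (b φ * a' φ) * Real.sin φ + a φ * b φ * Real.cos φ) := by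
        field_simp
      rw [hfac, hW, mul_zero]
    exact hzero ▸ hF'
  have key : ∀ φ₁ ∈ Set.Ioo s t, ∀ φ₂ ∈ Set.Ioo s t, φ₁ ≤ φ₂ → F φ₂ = F φ₁ := by
    intro φ₁ hφ₁ φ₂ hφ₂ hle
    have hsub : Set.Icc φ₁ φ₂ ⊆ Set.Ioo s t := Set.Icc_subset_Ioo hφ₁.1 hφ₂.2
    exact constant_of_has_deriv_right_zero
      (fun x hx => (hF0 x (hsub hx)).continuousAt.continuousWithinAt)
      (fun x hx => (hF0 x (hsub (Set.mem_Icc_of_Ico hx))).hasDerivWithinAt)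
      φ₂ (Set.mem_Icc.2 ⟨hle, le_refl _⟩)
  intro φ₁ hφ₁ φ₂ hφ₂
  rw [habs, habs]
  rcases le_total φ₁ φ₂ with h | h
  · exact (key φ₁ hφ₁ φ₂ hφ₂ h).symm
  · exact key φ₂ hφ₂ φ₁ hφ₁ h
end
end

section
/- Let α = 2/3 (the Onsager-critical scaling) and let (V, P) be a C¹ homogeneous solution of degree −2/3 of the stationary Euler equations on ℝ³ ∖ {0}. Then the anomalous energy flux through the unit sphere vanishes: ∫_{S²} ((1/2)|V(σ)|² + P(σ)) (V(σ)·σ) dσ = 0, where the integral is with respect to the surface measure on the unit sphere S². -/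
noncomputable section

open Real MeasureTheory Metric Filter

lemma expand_basis (u : E3) : u = ∑ i, u i • e3 i := by
  ext j
  simp only [PiLp.ext_iff] at *
  rw [show ((∑ i, u i • e3 i) j) = ∑ i, (u i • e3 i) j from by rw [WithLp.ofLp_sum]; exact Finset.sum_apply j Finset.univ _]
  simp [e3, EuclideanSpace.single_apply]

lemma clm_sum_eval (L : E3 →L[ℝ] ℝ) (u : E3) : ∑ i, L (e3 i) * u i = L u := by
  conv_rhs => rw [expand_basis u, map_sum]
  simp [mul_comm]

/-- Integral of a directional derivative of a `C¹` compactly supported function vanishes. -/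
lemma integral_fderiv_eq_zero (h : E3 → ℝ) (hh : ContDiff ℝ 1 h)
    (hsupp : HasCompactSupport h) (v : E3) :
    ∫ x, fderiv ℝ h x v = 0 := by
  obtain ⟨R0, hR0⟩ : ∃ R, tsupport h ⊆ closedBall 0 R :=
    hsupp.isCompact.isBounded.subset_closedBall 0
  set R : ℝ := max R0 0 with hRdef
  have hR : tsupport h ⊆ closedBall 0 R :=
    hR0.trans (closedBall_subset_closedBall (le_max_left _ _))
  have hRpos : (0:ℝ) ≤ R := le_max_right _ _
  set b : ContDiffBump (0 : E3) := ⟨R + 1, R + 2, by linarith, by linarith⟩ with hb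
  have hφcd : ContDiff ℝ 1 (fun x => b x) := b.contDiff
  have hφ1 : ∀ x ∈ closedBall (0:E3) (R+1), b x = 1 := fun x hx => b.one_of_mem_closedBall hx
  have hφd0 : ∀ x ∈ ball (0:E3) (R+1), fderiv ℝ (fun y => b y) x = 0 := by
    intro x hx
    have : (fun y => b y) =ᶠ[nhds x] (fun _ => 1) := by
      filter_upwards [isOpen_ball.mem_nhds hx] with y hy
      exact hφ1 y (ball_subset_closedBall hy)
    rw [this.fderiv_eq, fderiv_fun_const]
    rfl
  have hts : tsupport h ⊆ ball (0:E3) (R+1) :=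
    hR.trans (closedBall_subset_ball (by linarith))
  have hdh0 : ∀ x, x ∉ tsupport h → fderiv ℝ h x = 0 := by
    intro x hx
    have : h =ᶠ[nhds x] (fun _ => 0) := by
      filter_upwards [(isOpen_compl_iff.2 (isClosed_tsupport h)).mem_nhds hx] with y hy
      exact image_eq_zero_of_notMem_tsupport hy
    rw [this.fderiv_eq, fderiv_fun_const]
    rfl
  have hcontdh : Continuous fun x => fderiv ℝ h x v :=
    ((hh.continuous_fderiv one_ne_zero).clm_apply continuous_const)
  have key : ∫ x, (fun y => b y) x * fderiv ℝ h x v =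
      - ∫ x, fderiv ℝ (fun y => b y) x v * h x := by
    apply integral_mul_fderiv_eq_neg_fderiv_mul_of_integrable
    · apply Continuous.integrable_of_hasCompactSupport
      · exact ((hφcd.continuous_fderiv one_ne_zero).clm_apply continuous_const).mul hh.continuous
      · apply HasCompactSupport.mul_left hsupp
    · apply Continuous.integrable_of_hasCompactSupport
      · exact (hφcd.continuous).mul hcontdh
      · exact (HasCompactSupport.intro hsupp.isCompact
          (fun x hx => by rw [hdh0 x hx]; rfl)).mul_left
    · apply Continuous.integrable_of_hasCompactSupport
      · exact (hφcd.continuous).mul hh.continuous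
      · exact hsupp.mul_left
    · exact fun x _ => hφcd.differentiable one_ne_zero x
    · exact fun x _ => hh.differentiable one_ne_zero x
  have e1 : ∀ x, (fun y => b y) x * fderiv ℝ h x v = fderiv ℝ h x v := by
    intro x
    show (b x) * (fderiv ℝ h x v) = fderiv ℝ h x v
    by_cases hx : x ∈ tsupport h
    · rw [hφ1 x (ball_subset_closedBall (hts hx)), one_mul]
    · rw [hdh0 x hx]; simp
  have e2 : ∀ x, fderiv ℝ (fun y => b y) x v * h x = 0 := by
    intro x
    by_cases hx : x ∈ tsupport h
    · rw [hφd0 x (hts hx)]; simp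
    · rw [image_eq_zero_of_notMem_tsupport hx, mul_zero]
  simp only [e1, e2] at key
  simpa using key

/-- The integral of the divergence of a `C¹` compactly supported vector field vanishes. -/
lemma integral_div3_eq_zero (G : E3 → E3) (hG : ContDiff ℝ 1 G)
    (hsupp : HasCompactSupport G) :
    ∫ x, div3 G x = 0 := by
  have hcomp : ∀ i : Fin 3, (fun x => G x i) = fun x => (EuclideanSpace.proj (𝕜 := ℝ) i) (G x) :=
    fun i => rfl
  have hcd : ∀ i : Fin 3, ContDiff ℝ 1 (fun x => G x i) := by
    intro i; rw [hcomp i]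
    exact (EuclideanSpace.proj (𝕜 := ℝ) i).contDiff.comp hG
  have hsup : ∀ i : Fin 3, HasCompactSupport (fun x => G x i) := by
    intro i; rw [hcomp i]
    exact hsupp.comp_left (g := fun u : E3 => (EuclideanSpace.proj (𝕜 := ℝ) i) u) (map_zero _)
  have hfd : ∀ (i : Fin 3) x, fderiv ℝ G x (e3 i) i = fderiv ℝ (fun x => G x i) x (e3 i) := by
    intro i x
    change _ = fderiv ℝ (⇑(EuclideanSpace.proj (𝕜 := ℝ) i) ∘ G) x (e3 i)
    rw [fderiv_comp x (ContinuousLinearMap.differentiableAt _)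
      ((hG.differentiable one_ne_zero) x)]
    rw [ContinuousLinearMap.fderiv]
    simp
  have : ∀ x, div3 G x = ∑ i, fderiv ℝ (fun x => G x i) x (e3 i) := by
    intro x; unfold div3; exact Finset.sum_congr rfl fun i _ => hfd i x
  simp only [this]
  rw [integral_finset_sum]
  · exact Finset.sum_eq_zero fun i _ => integral_fderiv_eq_zero _ (hcd i) (hsup i) _
  · intro i _
    apply Continuous.integrable_of_hasCompactSupport
    · exact ((hcd i).continuous_fderiv one_ne_zero).clm_apply continuous_const
    · apply HasCompactSupport.intro (hsup i).isCompact
      intro x hx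
      have : (fun y => G y i) =ᶠ[nhds x] (fun _ => 0) := by
        filter_upwards [(isOpen_compl_iff.2 (isClosed_tsupport _)).mem_nhds hx] with y hy
        exact image_eq_zero_of_notMem_tsupport (f := fun x => G x i) hy
      rw [this.fderiv_eq, fderiv_fun_const]
      rfl


def psi (s t : ℝ) : ℝ := t * |t| ^ s

lemma abs_hasDerivAt {t : ℝ} (ht : t ≠ 0) :
    HasDerivAt (fun t : ℝ => |t|) (SignType.sign t : ℝ) t := by
  rcases ht.lt_or_gt with h | h
  · simpa [abs_of_neg h, h] using (hasDerivAt_id t).neg.congr_of_eventuallyEq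
      (by filter_upwards [eventually_lt_nhds h] with y hy using (abs_of_neg hy))
  · simpa [abs_of_pos h, h] using (hasDerivAt_id t).congr_of_eventuallyEq
      (by filter_upwards [eventually_gt_nhds h] with y hy using (abs_of_pos hy))

lemma psi_hasDerivAt {s : ℝ} (hs : 0 < s) (t : ℝ) :
    HasDerivAt (psi s) ((1 + s) * |t| ^ s) t := by
  rcases eq_or_ne t 0 with rfl | ht
  · have h0 : (1 + s) * |(0:ℝ)| ^ s = 0 := by
      rw [abs_zero, Real.zero_rpow hs.ne', mul_zero]
    rw [h0, hasDerivAt_iff_tendsto_slope]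
    have hcong : ∀ h : ℝ, h ≠ 0 → slope (psi s) 0 h = |h| ^ s := by
      intro h hh
      rw [slope_def_field, psi]
      have : psi s 0 = 0 := by simp [psi]
      rw [this, sub_zero, sub_zero, mul_div_cancel_left₀ _ hh]
    have htend : Filter.Tendsto (fun h : ℝ => |h| ^ s) (nhds 0) (nhds 0) := by
      have habs : Filter.Tendsto (fun h : ℝ => |h|) (nhds 0) (nhds 0) := by
        simpa using continuous_abs.tendsto (0:ℝ)
      have := (Real.continuousAt_rpow_const 0 s (Or.inr hs.le)).tendsto
      simpa [Real.zero_rpow hs.ne', Function.comp_def] using this.comp habs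
    apply (htend.mono_left nhdsWithin_le_nhds).congr'
    filter_upwards [self_mem_nhdsWithin] with h hh using (hcong h hh).symm
  · have habs' : |t| ≠ 0 := abs_ne_zero.mpr ht
    have hrpow : HasDerivAt (fun u : ℝ => u ^ s) (s * |t| ^ (s - 1)) |t| :=
      Real.hasDerivAt_rpow_const (Or.inl habs')
    have hcomp : HasDerivAt (fun t : ℝ => |t| ^ s)
        (s * |t| ^ (s - 1) * (SignType.sign t : ℝ)) t := hrpow.comp t (abs_hasDerivAt ht)
    have hmul := (hasDerivAt_id t).mul hcomp
    have hts : t * (SignType.sign t : ℝ) = |t| := by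
      rcases ht.lt_or_gt with h | h
      · simp [h, abs_of_neg h]
      · simp [h, abs_of_pos h]
    have hpow : |t| ^ (s - 1) * |t| = |t| ^ s := by
      rw [Real.rpow_sub_one habs']
      field_simp
    have key : 1 * |t| ^ s + id t * (s * |t| ^ (s - 1) * (SignType.sign t : ℝ))
        = (1 + s) * |t| ^ s := by
      simp only [id, one_mul]
      calc |t| ^ s + t * (s * |t| ^ (s - 1) * (SignType.sign t : ℝ))
          = |t| ^ s + s * (|t| ^ (s-1) * (t * (SignType.sign t : ℝ))) := by ring
        _ = (1 + s) * |t| ^ s := by rw [hts, hpow]; ring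
    rw [← key]
    exact hmul.congr_of_eventuallyEq (by filter_upwards with y; simp [psi])

lemma psi_contDiff {s : ℝ} (hs : 0 < s) : ContDiff ℝ 1 (psi s) := by
  rw [contDiff_one_iff_deriv]
  constructor
  · exact fun t => (psi_hasDerivAt hs t).differentiableAt
  · have : deriv (psi s) = fun t => (1 + s) * |t| ^ s := by
      funext t; exact (psi_hasDerivAt hs t).deriv
    rw [this]
    apply Continuous.mul continuous_const
    have : ∀ t : ℝ, ContinuousAt (fun t : ℝ => |t| ^ s) t := by
      intro t
      exact (Real.continuousAt_rpow_const _ s (Or.inr hs.le)).comp continuous_abs.continuousAt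
    exact continuous_iff_continuousAt.mpr this

lemma psi_homog {s : ℝ} (hs : 0 ≤ s) {c : ℝ} (hc : 0 < c) (t : ℝ) :
    psi s (c * t) = c ^ (1 + s) * psi s t := by
  unfold psi
  rw [abs_mul, abs_of_pos hc, Real.mul_rpow hc.le (abs_nonneg t),
    Real.rpow_add hc, Real.rpow_one]
  ring

lemma psi_abs_le {s : ℝ} (hs : 0 ≤ s) (hs1 : s ≤ 1) (t : ℝ) :
    |psi s t| ≤ |t| + |t| * |t| := by
  unfold psi
  rw [abs_mul, abs_of_nonneg (Real.rpow_nonneg (abs_nonneg t) s)]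
  rcases le_or_gt (|t|) 1 with h | h
  · have : |t| ^ s ≤ 1 := Real.rpow_le_one (abs_nonneg t) h hs
    nlinarith [abs_nonneg t]
  · have : |t| ^ s ≤ |t| ^ (1:ℝ) := Real.rpow_le_rpow_left_iff h |>.mpr hs1
    rw [Real.rpow_one] at this
    nlinarith [abs_nonneg t]

lemma psi_tendsto (t : ℝ) :
    Filter.Tendsto (fun n : ℕ => psi (1 / (n + 1)) t) atTop (nhds t) := by
  rcases eq_or_ne t 0 with rfl | ht
  · simpa [psi] using tendsto_const_nhds
  · have habs : (0:ℝ) < |t| := abs_pos.mpr ht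
    have h1 : Filter.Tendsto (fun n : ℕ => (1:ℝ) / (n + 1)) atTop (nhds 0) :=
      tendsto_one_div_add_atTop_nhds_zero_nat
    have h2 : Filter.Tendsto (fun n : ℕ => |t| ^ ((1:ℝ) / (n + 1))) atTop (nhds 1) := by
      have hcont : ContinuousAt (fun y : ℝ => |t| ^ y) 0 :=
        (Real.continuousAt_const_rpow habs.ne')
      have := hcont.tendsto.comp h1
      simpa [Real.rpow_zero, Function.comp_def] using this
    have := h2.const_mul t
    simpa [psi, mul_comm] using this


def chi : ContDiffBump ((5:ℝ)/2) := ⟨1, 2, one_pos, one_lt_two⟩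

lemma chi_deriv_zero {t : ℝ} (ht : t ∉ Set.Icc (1/2 : ℝ) (9/2)) :
    deriv (fun t => chi t) t = 0 := by
  have : (fun t => chi t) =ᶠ[nhds t] (fun _ => 0) := by
    have hopen : IsOpen ((Set.Icc (1/2:ℝ) (9/2))ᶜ) := isClosed_Icc.isOpen_compl
    filter_upwards [hopen.mem_nhds ht] with y hy
    apply chi.zero_of_le_dist
    show (2:ℝ) ≤ dist y (5/2)
    simp only [Set.mem_compl_iff, Set.mem_Icc, not_and_or, not_le] at hy
    rw [Real.dist_eq]
    rcases hy with hy | hy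
    · exact le_abs.mpr (Or.inr (by linarith))
    · exact le_abs.mpr (Or.inl (by linarith))
  rw [this.deriv_eq, deriv_const]

-- norm sq derivative
lemma normsq_hasFDerivAt (x : E3) :
    HasFDerivAt (fun y : E3 => ‖y‖^2) ((2:ℝ) • (innerSL ℝ x)) x := by
  have h1 : (fun y : E3 => ‖y‖^2) = fun y : E3 => (inner ℝ y y : ℝ) := by
    funext y; rw [real_inner_self_eq_norm_sq]
  rw [h1]
  have := ((differentiable_id (𝕜 := ℝ) (E := E3)).differentiableAt (x := x)).hasFDerivAt
  rw [← h1]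
  exact (hasStrictFDerivAt_norm_sq x).hasFDerivAt.congr_fderiv (by rw [two_smul, two_smul])


variable {V : E3 → E3} {P : E3 → ℝ}

section
variable (V P)
def Hb : E3 → ℝ := fun x => (1 / 2) * ‖V x‖ ^ 2 + P x
end



namespace HE
variable (h : IsHomogEuler (2/3) V P)
include h

lemma hVd {x : E3} (hx : x ≠ 0) : DifferentiableAt ℝ V x :=
  (h.contV.contDiffAt ((isOpen_compl_singleton).mem_nhds hx)).differentiableAt one_ne_zero

lemma hPd {x : E3} (hx : x ≠ 0) : DifferentiableAt ℝ P x :=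
  (h.contP.contDiffAt ((isOpen_compl_singleton).mem_nhds hx)).differentiableAt one_ne_zero

omit h in
lemma Hb_eq : Hb V P = fun x => (1/2) * (inner ℝ (V x) (V x) : ℝ) + P x := by
  funext x
  rw [Hb, real_inner_self_eq_norm_sq]

lemma hHd {x : E3} (hx : x ≠ 0) : DifferentiableAt ℝ (Hb V P) x := by
  rw [Hb_eq]
  exact (((hVd h hx).inner ℝ (hVd h hx)).const_mul _).add (hPd h hx)

lemma fderiv_Hb {x : E3} (hx : x ≠ 0) (w : E3) :
    fderiv ℝ (Hb V P) x w = (inner ℝ (V x) (fderiv ℝ V x w) : ℝ) + fderiv ℝ P x w := by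
  rw [Hb_eq]
  rw [fderiv_fun_add (((hVd h hx).inner ℝ (hVd h hx)).const_mul _) (hPd h hx)]
  simp only [ContinuousLinearMap.add_apply]
  congr 1
  rw [fderiv_const_mul ((hVd h hx).inner ℝ (hVd h hx))]
  simp only [ContinuousLinearMap.coe_smul', Pi.smul_apply, smul_eq_mul]
  rw [fderiv_inner_apply ℝ (hVd h hx) (hVd h hx) w]
  rw [real_inner_comm (fderiv ℝ V x w) (V x)]
  ring

lemma bernoulli {x : E3} (hx : x ≠ 0) : fderiv ℝ (Hb V P) x (V x) = 0 := by
  rw [fderiv_Hb h hx]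
  have hgrad : fderiv ℝ P x (V x) = (inner ℝ (gradient P x) (V x) : ℝ) := by
    rw [gradient]
    rw [InnerProductSpace.toDual_symm_apply]
  rw [hgrad, real_inner_comm (V x) (gradient P x), ← inner_add_right, h.euler x hx,
    inner_zero_right]

lemma div3_psi_smul {s : ℝ} (hs : 0 < s) {x : E3} (hx : x ≠ 0) :
    div3 (fun y => psi s (Hb V P y) • V y) x = 0 := by
  set c : E3 → ℝ := fun y => psi s (Hb V P y) with hc
  have hcd : HasFDerivAt c (((1 + s) * |Hb V P x| ^ s) • fderiv ℝ (Hb V P) x) x := by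
    have := (psi_hasDerivAt hs (Hb V P x)).comp_hasFDerivAt x (hHd h hx).hasFDerivAt
    exact this
  have hW : HasFDerivAt (fun y => c y • V y)
      (c x • fderiv ℝ V x + (((1 + s) * |Hb V P x| ^ s) • fderiv ℝ (Hb V P) x).smulRight (V x)) x :=
    hcd.smul (hVd h hx).hasFDerivAt
  unfold div3
  rw [hW.fderiv]
  simp only [ContinuousLinearMap.add_apply, ContinuousLinearMap.coe_smul', Pi.smul_apply,
    ContinuousLinearMap.smulRight_apply, PiLp.add_apply, PiLp.smul_apply, smul_eq_mul]
  rw [Finset.sum_add_distrib]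
  have h1 : ∑ i, c x * fderiv ℝ V x (e3 i) i = c x * div3 V x := by
    rw [div3, Finset.mul_sum]
  have h2 : ∑ i, ((1 + s) * |Hb V P x| ^ s * fderiv ℝ (Hb V P) x (e3 i)) * V x i
      = (1 + s) * |Hb V P x| ^ s * fderiv ℝ (Hb V P) x (V x) := by
    rw [← clm_sum_eval (fderiv ℝ (Hb V P) x) (V x), Finset.mul_sum]
    congr 1
    funext i
    ring
  calc (∑ i, c x * fderiv ℝ V x (e3 i) i) +
        ∑ i, ((1 + s) * |Hb V P x| ^ s * fderiv ℝ (Hb V P) x (e3 i)) * V x i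
      = c x * div3 V x + (1 + s) * |Hb V P x| ^ s * fderiv ℝ (Hb V P) x (V x) := by
        rw [h1, h2]
    _ = 0 := by rw [h.divFree x hx, bernoulli h hx]; ring

end HE


section
variable {V : E3 → E3} {P : E3 → ℝ}

def Wf (V : E3 → E3) (P : E3 → ℝ) (s : ℝ) : E3 → E3 := fun y => psi s (Hb V P y) • V y
def Gf (V : E3 → E3) (P : E3 → ℝ) (s : ℝ) : E3 → E3 := fun x => chi (‖x‖^2) • Wf V P s x
def qf (V : E3 → E3) (P : E3 → ℝ) (s : ℝ) : E3 → ℝ :=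
  fun x => 2 * deriv (fun t => chi t) (‖x‖^2) * (psi s (Hb V P x) * (inner ℝ (V x) x : ℝ))

namespace HE
variable (h : IsHomogEuler (2/3) V P)
include h

lemma Hb_contDiffOn : ContDiffOn ℝ 1 (Hb V P) {(0:E3)}ᶜ := by
  rw [Hb_eq]
  exact (contDiffOn_const.mul (h.contV.inner ℝ h.contV)).add h.contP

lemma W_hasFDerivAt {s : ℝ} (hs : 0 < s) {x : E3} (hx : x ≠ 0) :
    HasFDerivAt (Wf V P s)
      ((psi s (Hb V P x)) • fderiv ℝ V x +
        (((1 + s) * |Hb V P x| ^ s) • fderiv ℝ (Hb V P) x).smulRight (V x)) x := by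
  have hcd : HasFDerivAt (fun y => psi s (Hb V P y))
      (((1 + s) * |Hb V P x| ^ s) • fderiv ℝ (Hb V P) x) x := by
    have := (psi_hasDerivAt hs (Hb V P x)).comp_hasFDerivAt x (hHd h hx).hasFDerivAt
    exact this
  exact hcd.smul (hVd h hx).hasFDerivAt

lemma div3_W {s : ℝ} (hs : 0 < s) {x : E3} (hx : x ≠ 0) : div3 (Wf V P s) x = 0 := by
  unfold div3
  rw [(W_hasFDerivAt h hs hx).fderiv]
  simp only [ContinuousLinearMap.add_apply, ContinuousLinearMap.coe_smul', Pi.smul_apply,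
    ContinuousLinearMap.smulRight_apply, PiLp.add_apply, PiLp.smul_apply, smul_eq_mul]
  rw [Finset.sum_add_distrib]
  have h1 : ∑ i, psi s (Hb V P x) * fderiv ℝ V x (e3 i) i = psi s (Hb V P x) * div3 V x := by
    rw [div3, Finset.mul_sum]
  have h2 : ∑ i, ((1 + s) * |Hb V P x| ^ s * fderiv ℝ (Hb V P) x (e3 i)) * V x i
      = (1 + s) * |Hb V P x| ^ s * fderiv ℝ (Hb V P) x (V x) := by
    rw [← clm_sum_eval (fderiv ℝ (Hb V P) x) (V x), Finset.mul_sum]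
    congr 1
    funext i
    ring
  rw [h1, h2, h.divFree x hx, bernoulli h hx]
  ring

lemma G_contDiff {s : ℝ} (hs : 0 < s) : ContDiff ℝ 1 (Gf V P s) := by
  rw [contDiff_iff_contDiffAt]
  intro x
  rcases eq_or_ne x 0 with rfl | hx
  · have hev : Gf V P s =ᶠ[nhds (0:E3)] (fun _ => 0) := by
      filter_upwards [Metric.ball_mem_nhds (0:E3) (by norm_num : (0:ℝ) < 1/2)] with y hy
      have hy' : ‖y‖ < 1/2 := by simpa using hy
      have hchi : chi (‖y‖^2) = 0 := by
        apply chi.zero_of_le_dist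
        show (2:ℝ) ≤ dist (‖y‖^2) (5/2)
        rw [Real.dist_eq]
        refine le_abs.mpr (Or.inr ?_)
        nlinarith [norm_nonneg y]
      simp [Gf, hchi]
    exact (contDiffAt_const (c := (0:E3))).congr_of_eventuallyEq hev
  · have hopen : {(0:E3)}ᶜ ∈ nhds x := isOpen_compl_singleton.mem_nhds hx
    have hW : ContDiffAt ℝ 1 (Wf V P s) x := by
      have : ContDiffOn ℝ 1 (Wf V P s) {(0:E3)}ᶜ :=
        ((psi_contDiff hs).comp_contDiffOn (Hb_contDiffOn h)).smul h.contV
      exact this.contDiffAt hopen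
    exact ((chi.contDiff.comp (contDiff_norm_sq ℝ)).contDiffAt).smul hW

omit h in
lemma G_compactSupport {s : ℝ} : HasCompactSupport (Gf V P s) := by
  apply HasCompactSupport.intro (isCompact_closedBall (0:E3) 3)
  intro x hx
  have hx' : 3 < ‖x‖ := by simpa [dist_eq_norm] using hx
  have hchi : chi (‖x‖^2) = 0 := by
    apply chi.zero_of_le_dist
    show (2:ℝ) ≤ dist (‖x‖^2) (5/2)
    rw [Real.dist_eq]
    refine le_abs.mpr (Or.inl ?_)
    nlinarith
  simp [Gf, hchi]

lemma div3_G {s : ℝ} (hs : 0 < s) {x : E3} (hx : x ≠ 0) :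
    div3 (Gf V P s) x = qf V P s x := by
  have hchi : HasDerivAt (fun t => chi t) (deriv (fun t => chi t) (‖x‖^2)) (‖x‖^2) :=
    ((chi.contDiff (n := 1)).differentiable one_ne_zero (‖x‖^2)).hasDerivAt
  have hc1 : HasFDerivAt (fun y : E3 => chi (‖y‖^2))
      ((deriv (fun t => chi t) (‖x‖^2)) • ((2:ℝ) • (innerSL ℝ x))) x :=
    HasDerivAt.comp_hasFDerivAt (f := fun y : E3 => ‖y‖^2) x hchi (normsq_hasFDerivAt x)
  have hG : HasFDerivAt (Gf V P s)
      (chi (‖x‖^2) • (fderiv ℝ (Wf V P s) x) +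
        ((deriv (fun t => chi t) (‖x‖^2)) • ((2:ℝ) • (innerSL ℝ x))).smulRight (Wf V P s x)) x := by
    have := hc1.smul (W_hasFDerivAt h hs hx)
    rwa [(W_hasFDerivAt h hs hx).fderiv]
  unfold div3
  rw [hG.fderiv]
  simp only [ContinuousLinearMap.add_apply, ContinuousLinearMap.coe_smul', Pi.smul_apply,
    ContinuousLinearMap.smulRight_apply, PiLp.add_apply, PiLp.smul_apply, smul_eq_mul,
    innerSL_apply_apply]
  rw [Finset.sum_add_distrib]
  have h1 : ∑ i, chi (‖x‖^2) * fderiv ℝ (Wf V P s) x (e3 i) i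
      = chi (‖x‖^2) * div3 (Wf V P s) x := by rw [div3, Finset.mul_sum]
  have hinner : ∑ i, (inner ℝ x (e3 i) : ℝ) * Wf V P s x i = (inner ℝ x (Wf V P s x) : ℝ) := by
    simpa using clm_sum_eval (innerSL ℝ x) (Wf V P s x)
  have h2 : ∑ i, deriv (fun t => chi t) (‖x‖^2) * (2 * (inner ℝ x (e3 i) : ℝ)) * Wf V P s x i
      = (2 * deriv (fun t => chi t) (‖x‖^2)) * (inner ℝ x (Wf V P s x) : ℝ) := by
    rw [← hinner, Finset.mul_sum]
    exact Finset.sum_congr rfl fun i _ => by ring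
  rw [h1, h2, div3_W h hs hx]
  unfold qf Wf
  rw [real_inner_smul_right, real_inner_comm]
  ring

lemma integral_qf_eq_zero {s : ℝ} (hs : 0 < s) : ∫ x : E3, qf V P s x = 0 := by
  have h0 : ∀ᵐ (x : E3) ∂(volume : Measure E3), x ≠ 0 := by
    refine ae_iff.mpr ?_
    have : {x : E3 | ¬ x ≠ 0} = {0} := by ext x; simp
    rw [this]
    exact measure_singleton 0
  have hcongr : qf V P s =ᵐ[(volume : Measure E3)] div3 (Gf V P s) := by
    filter_upwards [h0] with x hx
    exact (div3_G h hs hx).symm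
  rw [integral_congr_ae hcongr]
  exact integral_div3_eq_zero _ (G_contDiff h hs) G_compactSupport

end HE
end
section
variable {V : E3 → E3} {P : E3 → ℝ}
namespace HE
variable (h : IsHomogEuler (2/3) V P)
include h

lemma qf_homog {s : ℝ} (hs : 0 < s) {r : ℝ} (hr : 0 < r) {σ : E3} (hσ : ‖σ‖ = 1) :
    qf V P s (r • σ) = (psi s (Hb V P σ) * (inner ℝ (V σ) σ : ℝ)) *
      (2 * deriv (fun t => chi t) (r^2) *
        r ^ ((-(4/3:ℝ))*(1+s) + (1 + -(2/3:ℝ)))) := by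
  have hσ0 : σ ≠ 0 := fun hc => by simp [hc] at hσ
  have hnorm : ‖r • σ‖^2 = r^2 := by
    rw [norm_smul, hσ, mul_one, Real.norm_eq_abs, sq_abs]
  have hV : V (r • σ) = (r ^ (-(2/3):ℝ)) • V σ := h.homV r hr σ hσ0
  have hP : P (r • σ) = (r ^ (-(4/3):ℝ)) * P σ := by
    have h' := h.homP r hr σ hσ0
    rw [show (-(2*(2/3:ℝ))) = (-(4/3):ℝ) by norm_num] at h'
    exact h'
  have hrp : (0:ℝ) < r ^ (-(2/3):ℝ) := Real.rpow_pos_of_pos hr _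
  have hsq : (r ^ (-(2/3):ℝ))^2 = r ^ (-(4/3):ℝ) := by
    rw [sq, ← Real.rpow_add hr]
    try norm_num
  have hHb : Hb V P (r • σ) = (r ^ (-(4/3):ℝ)) * Hb V P σ := by
    unfold Hb
    rw [hV, hP, norm_smul, Real.norm_eq_abs, abs_of_pos hrp, mul_pow, hsq]
    ring
  have hpsi : psi s (Hb V P (r • σ)) = r ^ ((-(4/3:ℝ))*(1+s)) * psi s (Hb V P σ) := by
    rw [hHb, psi_homog hs.le (Real.rpow_pos_of_pos hr _), Real.rpow_mul hr.le]
  have hin : (inner ℝ (V (r • σ)) (r • σ) : ℝ) = r ^ (1 + -(2/3:ℝ)) * (inner ℝ (V σ) σ : ℝ) := by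
    rw [hV, real_inner_smul_left, real_inner_smul_right, Real.rpow_add hr, Real.rpow_one]
    ring
  unfold qf
  rw [hnorm, hpsi, hin, Real.rpow_add hr ((-(4/3:ℝ))*(1+s)) (1 + -(2/3:ℝ))]
  ring

lemma flux_eq_zero {s : ℝ} (hs : 0 < s) :
    ∫ σ : sphere (0:E3) 1, psi s (Hb V P σ) * (inner ℝ (V σ) (σ:E3) : ℝ)
      ∂((volume : Measure E3).toSphere) = 0 := by
  classical
  set a : ℝ := (-(4/3:ℝ))*(1+s) + (1 + -(2/3:ℝ)) with ha
  set m : ℝ := 4*s/3 with hm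
  have hmpos : 0 < m := by positivity
  set K : sphere (0:E3) 1 → ℝ := fun σ => psi s (Hb V P σ) * (inner ℝ (V σ) (σ:E3) : ℝ) with hK
  set Gr : ℝ → ℝ := fun r => 2 * deriv (fun t => chi t) (r^2) * r ^ a with hGr
  -- step 1 : the full-space integral as a product
  have step1 : (∫ σ : sphere (0:E3) 1, K σ ∂((volume : Measure E3).toSphere)) *
      (∫ p : Set.Ioi (0:ℝ), Gr p ∂(Measure.volumeIoiPow 2)) = 0 := by
    have hfin : Module.finrank ℝ E3 - 1 = 2 := by
      simp [finrank_euclideanSpace_fin]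
    have h2 := (Measure.measurePreserving_homeomorphUnitSphereProd
        (volume : Measure E3)).integral_comp (Homeomorph.measurableEmbedding _)
        (fun p : sphere (0:E3) 1 × Set.Ioi (0:ℝ) => qf V P s ((p.2 : ℝ) • (p.1 : E3)))
    rw [hfin] at h2
    have h3 : (fun x : ({(0:E3)}ᶜ : Set E3) =>
        qf V P s (((homeomorphUnitSphereProd E3 x).2 : ℝ) •
          ((homeomorphUnitSphereProd E3 x).1 : E3)))
        = fun x : ({(0:E3)}ᶜ : Set E3) => qf V P s (x : E3) := by
      funext x
      have hx0 : (x : E3) ≠ 0 := x.2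
      simp [homeomorphUnitSphereProd, smul_inv_smul₀ (norm_ne_zero_iff.2 hx0)]
    rw [h3] at h2
    have h4 : ∫ x : ({(0:E3)}ᶜ : Set E3), qf V P s x
        ∂((volume : Measure E3).comap Subtype.val) = ∫ x : E3, qf V P s x := by
      rw [integral_subtype_comap (measurableSet_singleton _).compl,
        MeasureTheory.restrict_compl_singleton]
    rw [h4, integral_qf_eq_zero h hs] at h2
    have h5 : (fun p : sphere (0:E3) 1 × Set.Ioi (0:ℝ) =>
        qf V P s ((p.2 : ℝ) • (p.1 : E3))) = fun p => K p.1 * Gr (p.2 : ℝ) := by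
      funext p
      exact qf_homog h hs p.2.2 (mem_sphere_zero_iff_norm.mp p.1.2)
    rw [h5] at h2
    have h6 := MeasureTheory.integral_prod_mul (μ := (volume : Measure E3).toSphere)
      (ν := Measure.volumeIoiPow 2) (f := K) (g := fun p : Set.Ioi (0:ℝ) => Gr p)
    rw [← h6]
    exact h2.symm
  -- step 2 : radial integral as a set integral
  have step2 : ∫ p : Set.Ioi (0:ℝ), Gr p ∂(Measure.volumeIoiPow 2)
      = ∫ r in Set.Ioi (0:ℝ), r^2 * Gr r := by
    rw [Measure.volumeIoiPow]
    simp only [ENNReal.ofReal]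
    rw [integral_withDensity_eq_integral_smul
      (by exact (measurable_subtype_coe.pow_const 2).real_toNNReal)]
    rw [integral_subtype_comap measurableSet_Ioi
      (fun r : ℝ => (Real.toNNReal (r^2)) • Gr r)]
    refine setIntegral_congr_fun measurableSet_Ioi fun r hr => ?_
    have : (0:ℝ) ≤ r^2 := sq_nonneg r
    simp [NNReal.smul_def, Real.coe_toNNReal _ this]
  -- step 3 : one-dimensional analysis of the radial integral
  set I : ℝ := ∫ r in (1/2:ℝ)..3, chi (r^2) * r ^ (-m-1) with hI
  set D : ℝ → ℝ := fun r =>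
    2 * deriv (fun t => chi t) (r^2) * r ^ (1-m) - m * (chi (r^2) * r ^ (-m-1)) with hD
  have huIcc : Set.uIcc (1/2:ℝ) 3 = Set.Icc (1/2:ℝ) 3 := Set.uIcc_of_le (by norm_num)
  have hpos_mem : ∀ r ∈ Set.uIcc (1/2:ℝ) 3, (0:ℝ) < r := by
    intro r hr
    rw [huIcc] at hr
    linarith [hr.1]
  have hrpowc : ∀ (c : ℝ), ContinuousOn (fun r : ℝ => r ^ c) (Set.uIcc (1/2:ℝ) 3) := by
    intro c r hr
    exact (Real.continuousAt_rpow_const r c (Or.inl (hpos_mem r hr).ne')).continuousWithinAt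
  have hchic : Continuous (fun r : ℝ => (chi (r^2) : ℝ)) :=
    chi.continuous.comp (continuous_pow 2)
  have hderivc : Continuous (deriv (fun t => chi t)) :=
    (chi.contDiff (n := (2:ℕ∞))).continuous_deriv one_le_two
  have hchic' : Continuous (fun r : ℝ => deriv (fun t => chi t) (r^2)) :=
    hderivc.comp (continuous_pow 2)
  have hcont2 : ContinuousOn (fun r : ℝ => chi (r^2) * r ^ (-m-1)) (Set.uIcc (1/2:ℝ) 3) :=
    hchic.continuousOn.mul (hrpowc _)
  have hcontD : ContinuousOn D (Set.uIcc (1/2:ℝ) 3) := by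
    refine ContinuousOn.sub ?_ (continuousOn_const.mul hcont2)
    exact (continuous_const.mul hchic').continuousOn.mul (hrpowc _)
  have hint2 : IntervalIntegrable (fun r : ℝ => chi (r^2) * r ^ (-m-1)) volume (1/2:ℝ) 3 :=
    hcont2.intervalIntegrable
  have hintD : IntervalIntegrable D volume (1/2:ℝ) 3 := hcontD.intervalIntegrable
  -- f1 agrees with D + m * (chi (r^2) * r ^ (-m-1)) on the interval
  have hf1eq : ∀ r ∈ Set.uIcc (1/2:ℝ) 3,
      r^2 * Gr r = D r + m * (chi (r^2) * r ^ (-m-1)) := by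
    intro r hr
    have hr0 : (0:ℝ) < r := hpos_mem r hr
    have h2a : (r:ℝ)^2 * r ^ a = r ^ (1-m) := by
      rw [show ((r:ℝ)^2 : ℝ) = r ^ ((2:ℕ):ℝ) from (Real.rpow_natCast r 2).symm,
        ← Real.rpow_add hr0]
      congr 1
      rw [ha, hm]
      push_cast
      ring
    simp only [hGr, hD]
    rw [← h2a]
    ring
  -- derivative of Φ
  set Φ : ℝ → ℝ := fun r => chi (r^2) * r ^ (-m) with hΦ
  have hΦd : ∀ r ∈ Set.uIcc (1/2:ℝ) 3, HasDerivAt Φ (D r) r := by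
    intro r hr
    have hr0 : (0:ℝ) < r := hpos_mem r hr
    have hchid : HasDerivAt (fun r : ℝ => (chi (r^2) : ℝ))
        (deriv (fun t => chi t) (r^2) * (2*r)) r := by
      have h1 : HasDerivAt (fun t => chi t) (deriv (fun t => chi t) (r^2)) (r^2) :=
        ((chi.contDiff (n := 1)).differentiable one_ne_zero (r^2)).hasDerivAt
      have hpow : HasDerivAt (fun y : ℝ => y ^ 2) (2 * r) r := by
        simpa using hasDerivAt_pow 2 r
      have hcomp : HasDerivAt ((fun t => (chi t : ℝ)) ∘ (fun y : ℝ => y ^ 2))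
          (deriv (fun t => chi t) (r ^ 2) * (2 * r)) r := HasDerivAt.comp r h1 hpow
      exact hcomp
    have hrd : HasDerivAt (fun r : ℝ => r ^ (-m)) ((-m) * r ^ (-m-1)) r :=
      Real.hasDerivAt_rpow_const (Or.inl hr0.ne')
    have := hchid.fun_mul hrd
    have hexp : r * r ^ (-m) = r ^ (1-m) := by
      rw [show (1-m : ℝ) = 1 + (-m) by ring, Real.rpow_add hr0, Real.rpow_one]
    refine this.congr_deriv ?_
    show _ = 2 * deriv (fun t => chi t) (r^2) * r ^ (1-m) - m * (chi (r^2) * r ^ (-m-1))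
    rw [← hexp]
    ring
  have hΦ3 : Φ 3 = 0 := by
    have : chi ((3:ℝ)^2) = 0 := by
      apply chi.zero_of_le_dist
      show (2:ℝ) ≤ dist ((3:ℝ)^2) (5/2)
      rw [Real.dist_eq]
      refine le_abs.mpr (Or.inl (by norm_num))
    simp [hΦ, this]
  have hΦhalf : Φ (1/2:ℝ) = 0 := by
    have h0 : chi (((1:ℝ)/2)^2) = 0 := by
      apply chi.zero_of_le_dist
      show (2:ℝ) ≤ dist (((1:ℝ)/2)^2) (5/2)
      rw [Real.dist_eq]
      refine le_abs.mpr (Or.inr (by norm_num))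
    show chi (((1:ℝ)/2)^2) * ((1:ℝ)/2) ^ (-m) = 0
    rw [h0, zero_mul]
  have hDint0 : ∫ r in (1/2:ℝ)..3, D r = 0 := by
    rw [intervalIntegral.integral_eq_sub_of_hasDerivAt hΦd hintD, hΦ3, hΦhalf, sub_zero]
  -- evaluate the radial integral
  have hIoc : ∫ r in Set.Ioi (0:ℝ), r^2 * Gr r = ∫ r in Set.Ioc (1/2:ℝ) 3, r^2 * Gr r := by
    apply setIntegral_eq_of_subset_of_forall_diff_eq_zero measurableSet_Ioi
    · intro r hr
      exact Set.mem_Ioi.mpr (lt_trans (by norm_num) hr.1)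
    · intro r hr
      obtain ⟨hr0, hrn⟩ := hr
      rw [Set.mem_Ioi] at hr0
      have hd0 : deriv (fun t => chi t) (r^2) = 0 := by
        apply chi_deriv_zero
        intro hmem
        rw [Set.mem_Icc] at hmem
        simp only [Set.mem_Ioc, not_and_or, not_lt, not_le] at hrn
        rcases hrn with hle | hgt
        · nlinarith
        · nlinarith
      simp [hGr, hd0]
  have hIocI : ∫ r in Set.Ioc (1/2:ℝ) 3, r^2 * Gr r = m * I := by
    rw [← intervalIntegral.integral_of_le (by norm_num : (1/2:ℝ) ≤ 3)]
    rw [intervalIntegral.integral_congr hf1eq]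
    rw [intervalIntegral.integral_add hintD (hint2.const_mul m), hDint0, zero_add,
      intervalIntegral.integral_const_mul]
  -- positivity of I
  have hIpos : 0 < I := by
    rw [hI, intervalIntegral.integral_of_le (by norm_num : (1/2:ℝ) ≤ 3)]
    refine (setIntegral_pos_iff_support_of_nonneg_ae ?_ ?_).mpr ?_
    · rw [Filter.EventuallyLE, ae_restrict_iff' measurableSet_Ioc]
      refine Filter.Eventually.of_forall fun r hr => ?_
      have hr0 : (0:ℝ) < r := lt_trans (by norm_num) hr.1
      simpa using mul_nonneg chi.nonneg (Real.rpow_nonneg hr0.le (-m-1))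
    · have hicc : IntegrableOn (fun r : ℝ => chi (r^2) * r ^ (-m-1))
          (Set.Icc (1/2:ℝ) 3) volume := by
        apply ContinuousOn.integrableOn_compact isCompact_Icc
        rw [huIcc] at hcont2
        exact hcont2
      exact hicc.mono_set Set.Ioc_subset_Icc_self
    · have hsub : Set.Ioo (13/10:ℝ) (18/10) ⊆
          Function.support (fun r : ℝ => chi (r^2) * r ^ (-m-1)) ∩ Set.Ioc (1/2:ℝ) 3 := by
        intro r hr
        rw [Set.mem_Ioo] at hr
        have hr0 : (0:ℝ) < r := by linarith
        constructor
        · apply Function.mem_support.mpr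
          have hone : chi (r^2) = 1 := by
            apply chi.one_of_mem_closedBall
            rw [Metric.mem_closedBall, Real.dist_eq, abs_le]
            have hrIn : chi.rIn = (1:ℝ) := rfl
            rw [hrIn]
            constructor <;> nlinarith
          rw [hone, one_mul]
          exact (Real.rpow_pos_of_pos hr0 _).ne'
        · exact Set.mem_Ioc.mpr ⟨by linarith, by linarith⟩
      refine lt_of_lt_of_le ?_ (measure_mono hsub)
      rw [Real.volume_Ioo]
      rw [show (18/10 : ℝ) - 13/10 = 1/2 by norm_num]
      simp [ENNReal.ofReal_pos]
  -- conclusion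
  have hprod := step1
  rw [step2, hIoc, hIocI] at hprod
  rcases mul_eq_zero.mp hprod with hzero | hbad
  · exact hzero
  · exfalso
    have : m * I ≠ 0 := ne_of_gt (mul_pos hmpos hIpos)
    exact this hbad

end HE
end
section
variable {V : E3 → E3} {P : E3 → ℝ}

lemma integrable_sphere (f : sphere (0:E3) 1 → ℝ) (hf : Continuous f) :
    Integrable f ((volume : Measure E3).toSphere) := by
  apply hf.integrable_of_hasCompactSupport
  show IsCompact (tsupport f)
  exact IsCompact.of_isClosed_subset isCompact_univ (isClosed_tsupport f) (Set.subset_univ _)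

namespace HE
variable (h : IsHomogEuler (2/3) V P)
include h

lemma cont_sphere_V : Continuous (fun σ : sphere (0:E3) 1 => V (σ : E3)) :=
  h.contV.continuousOn.comp_continuous continuous_subtype_val
    (fun σ => Set.mem_compl_singleton_iff.mpr (ne_of_mem_sphere σ.2 one_ne_zero))

lemma cont_sphere_Hb : Continuous (fun σ : sphere (0:E3) 1 => Hb V P (σ : E3)) :=
  (Hb_contDiffOn h).continuousOn.comp_continuous continuous_subtype_val
    (fun σ => Set.mem_compl_singleton_iff.mpr (ne_of_mem_sphere σ.2 one_ne_zero))

lemma cont_sphere_inn :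
    Continuous (fun σ : sphere (0:E3) 1 => (inner ℝ (V (σ:E3)) (σ:E3) : ℝ)) :=
  (cont_sphere_V h).inner continuous_subtype_val

theorem main_result :
    ∫ σ : sphere (0 : E3) 1,
      ((1 / 2) * ‖V (σ : E3)‖ ^ 2 + P σ) * (inner ℝ (V σ) (σ : E3) : ℝ)
      ∂((volume : Measure E3).toSphere) = 0 := by
  set μ := (volume : Measure E3).toSphere with hμ
  set inn : sphere (0:E3) 1 → ℝ := fun σ => (inner ℝ (V (σ:E3)) (σ:E3) : ℝ) with hinn
  set F : ℕ → sphere (0:E3) 1 → ℝ :=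
    fun n σ => psi (1 / ((n:ℝ) + 1)) (Hb V P (σ:E3)) * inn σ with hF
  set bound : sphere (0:E3) 1 → ℝ :=
    fun σ => (|Hb V P (σ:E3)| + |Hb V P (σ:E3)| * |Hb V P (σ:E3)|) * |inn σ| with hbound
  have hspos : ∀ n : ℕ, (0:ℝ) < 1 / ((n:ℝ) + 1) := fun n => by positivity
  have hsle : ∀ n : ℕ, (1:ℝ) / ((n:ℝ) + 1) ≤ 1 := fun n => by
    rw [div_le_one (by positivity)]
    simp
  have hkey : ∀ n : ℕ, ∫ σ, F n σ ∂μ = 0 := fun n => flux_eq_zero h (hspos n)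
  have hFm : ∀ n : ℕ, AEStronglyMeasurable (F n) μ := by
    intro n
    apply Continuous.aestronglyMeasurable
    exact (((psi_contDiff (hspos n)).continuous).comp (cont_sphere_Hb h)).mul (cont_sphere_inn h)
  have hbi : Integrable bound μ := by
    apply integrable_sphere
    exact (((cont_sphere_Hb h).abs.add ((cont_sphere_Hb h).abs.mul
      (cont_sphere_Hb h).abs))).mul (cont_sphere_inn h).abs
  have hb : ∀ n : ℕ, ∀ᵐ σ ∂μ, ‖F n σ‖ ≤ bound σ := by
    intro n
    refine Filter.Eventually.of_forall fun σ => ?_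
    rw [hF, Real.norm_eq_abs]
    simp only
    rw [abs_mul]
    apply mul_le_mul_of_nonneg_right _ (abs_nonneg _)
    have := psi_abs_le (hspos n).le (hsle n) (Hb V P (σ:E3))
    exact this
  have hl : ∀ᵐ σ ∂μ, Filter.Tendsto (fun n : ℕ => F n σ) Filter.atTop
      (nhds (Hb V P (σ:E3) * inn σ)) := by
    refine Filter.Eventually.of_forall fun σ => ?_
    exact (psi_tendsto (Hb V P (σ:E3))).mul_const (inn σ)
  have hlim := MeasureTheory.tendsto_integral_of_dominated_convergence bound hFm hbi hb hl
  have hzero : Filter.Tendsto (fun n : ℕ => ∫ σ, F n σ ∂μ) Filter.atTop (nhds 0) := by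
    simp only [hkey]
    exact tendsto_const_nhds
  have := tendsto_nhds_unique hlim hzero
  exact this

end HE
end

/-- in the Onsager-critical case `α = 2/3` the energy flux
through the unit sphere vanishes. -/
theorem stmt18 (V : E3 → E3) (P : E3 → ℝ) (h : IsHomogEuler (2 / 3) V P) :
    ∫ σ : sphere (0 : E3) 1,
      ((1 / 2) * ‖V (σ : E3)‖ ^ 2 + P σ) * (inner ℝ (V σ) (σ : E3) : ℝ)
      ∂((volume : Measure E3).toSphere) = 0 :=
  HE.main_result h
end
end

section
/- Let (V, P) be a C¹ homogeneous solution of degree −α of the stationary Euler equations on ℝ³ ∖ {0} that is radial, i.e. V(x) × x = 0 for all x ≠ 0. If V is not identically zero, then α = 2 and there is a nonzero constant κ ∈ ℝ such that V(x) = κ x/|x|³ and P(x) = −κ²/(2|x|⁴) for all x ≠ 0. -/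
noncomputable section

open Real MeasureTheory Metric

/- ### auxiliary lemmas -/

lemma aux_const_of_hasFDerivAt_zero {E : Type*} [NormedAddCommGroup E] [NormedSpace ℝ E]
    {s : Set E} (hs : IsOpen s) (hsc : IsPreconnected s) {f : E → ℝ}
    (hf : ∀ x ∈ s, HasFDerivAt f (0 : E →L[ℝ] ℝ) x) {x y : E} (hx : x ∈ s) (hy : y ∈ s) :
    f x = f y := by
  have loc : ∀ z ∈ s, ∃ ε > 0, ball z ε ⊆ s ∧ ∀ w ∈ ball z ε, f w = f z := by
    intro z hz
    obtain ⟨ε, εpos, hball⟩ := Metric.isOpen_iff.1 hs z hz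
    refine ⟨ε, εpos, hball, fun w hw => ?_⟩
    refine (convex_ball z ε).is_const_of_fderivWithin_eq_zero
      (fun u hu => ((hf u (hball hu)).differentiableAt).differentiableWithinAt)
      (fun u hu => ?_) hw (mem_ball_self εpos)
    rw [fderivWithin_of_isOpen isOpen_ball hu, (hf u (hball hu)).fderiv]
  set U : Set E := {z | z ∈ s ∧ f z = f y} with hU
  set W : Set E := {z | z ∈ s ∧ f z ≠ f y} with hW
  have hUo : IsOpen U := by
    rw [Metric.isOpen_iff]
    rintro z ⟨hz, hfz⟩
    obtain ⟨ε, εpos, hball, hconst⟩ := loc z hz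
    exact ⟨ε, εpos, fun w hw => ⟨hball hw, (hconst w hw).trans hfz⟩⟩
  have hWo : IsOpen W := by
    rw [Metric.isOpen_iff]
    rintro z ⟨hz, hfz⟩
    obtain ⟨ε, εpos, hball, hconst⟩ := loc z hz
    exact ⟨ε, εpos, fun w hw => ⟨hball hw, (hconst w hw).trans_ne hfz⟩⟩
  by_contra hne
  obtain ⟨w, hws, hwU, hwW⟩ := hsc U W hUo hWo
    (fun z hz => by by_cases hfz : f z = f y
                    · exact Or.inl ⟨hz, hfz⟩
                    · exact Or.inr ⟨hz, hfz⟩)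
    ⟨y, hy, hy, rfl⟩ ⟨x, hx, hx, hne⟩
  exact hwW.2 hwU.2

lemma aux_inner_eq (u v : E3) : (inner ℝ u v : ℝ) = ∑ i, u i * v i := by
  simp [PiLp.inner_apply, RCLike.inner_apply, mul_comm]

lemma aux_norm_sq_eq (x : E3) : ‖x‖ ^ 2 = ∑ i, x i ^ 2 := by
  rw [← real_inner_self_eq_norm_sq, aux_inner_eq]; simp [sq]

lemma aux_radial_decomp (u x : E3) (hx : x ≠ 0) (hc : cross3 u x = 0) :
    u = ((inner ℝ u x : ℝ) / ‖x‖ ^ 2) • x := by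
  have h01 : u 0 * x 1 = u 1 * x 0 := by
    have := congrFun (congrArg (WithLp.equiv 2 (Fin 3 → ℝ)) hc) 2
    simpa [cross3, vec3, sub_eq_zero] using this
  have h02 : u 0 * x 2 = u 2 * x 0 := by
    have := congrFun (congrArg (WithLp.equiv 2 (Fin 3 → ℝ)) hc) 1
    simp [cross3, vec3, sub_eq_zero] at this
    linarith
  have h12 : u 1 * x 2 = u 2 * x 1 := by
    have := congrFun (congrArg (WithLp.equiv 2 (Fin 3 → ℝ)) hc) 0
    simpa [cross3, vec3, sub_eq_zero] using this
  have hns : ‖x‖ ^ 2 ≠ 0 := pow_ne_zero 2 (norm_ne_zero_iff.2 hx)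
  have key : ∀ i : Fin 3, u i * ‖x‖ ^ 2 = (inner ℝ u x : ℝ) * x i := by
    intro i
    rw [aux_norm_sq_eq, aux_inner_eq, Fin.sum_univ_three, Fin.sum_univ_three]
    fin_cases i
    · show u 0 * _ = _ * x 0; linear_combination x 1 * h01 + x 2 * h02
    · show u 1 * _ = _ * x 1; linear_combination (- x 0) * h01 + x 2 * h12
    · show u 2 * _ = _ * x 2; linear_combination (- x 0) * h02 - x 1 * h12
  ext i
  have : ((((inner ℝ u x : ℝ) / ‖x‖ ^ 2)) • x) i = (inner ℝ u x : ℝ) / ‖x‖ ^ 2 * x i := rfl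
  rw [this, div_mul_eq_mul_div, eq_div_iff hns, key i]

lemma aux_fderiv_hom {F : Type*} [NormedAddCommGroup F] [NormedSpace ℝ F]
    (W : E3 → F) (β : ℝ) (x : E3)
    (hdiff : DifferentiableAt ℝ W x)
    (hom : ∀ l : ℝ, 0 < l → W (l • x) = l ^ (-β) • W x) :
    fderiv ℝ W x x = (-β) • W x := by
  have h1 : HasDerivAt (fun l : ℝ => l • x) x 1 := by
    simpa using (hasDerivAt_id (1 : ℝ)).smul_const x
  have h2 : HasDerivAt (fun l : ℝ => W (l • x)) (fderiv ℝ W x x) 1 := by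
    have hW : HasFDerivAt W (fderiv ℝ W x) ((1 : ℝ) • x) := by
      rw [one_smul]; exact hdiff.hasFDerivAt
    exact hW.comp_hasDerivAt 1 h1
  have h3 : HasDerivAt (fun l : ℝ => l ^ (-β) • W x) ((-β) • W x) 1 := by
    have hr : HasDerivAt (fun l : ℝ => l ^ (-β)) (-β * (1 : ℝ) ^ (-β - 1)) 1 :=
      Real.hasDerivAt_rpow_const (Or.inl one_ne_zero)
    simpa [Real.one_rpow] using hr.smul_const (W x)
  have heq : (fun l : ℝ => l ^ (-β) • W x) =ᶠ[nhds 1] fun l : ℝ => W (l • x) := by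
    filter_upwards [eventually_gt_nhds zero_lt_one] with l hl
    exact (hom l hl).symm
  exact h2.unique ((h3.congr_of_eventuallyEq heq.symm))

lemma aux_alg (k n : ℝ) (hn : n ≠ 0) :
    -((k / n ^ 3) ^ 2 * n ^ 2) / 2 = -k ^ 2 / (2 * n ^ 4) := by
  field_simp

lemma aux_sum_coord (x : E3) : (∑ i, x i • e3 i) = x := by
  have := (EuclideanSpace.basisFun (Fin 3) ℝ).sum_repr x
  simpa [e3, EuclideanSpace.basisFun_apply, EuclideanSpace.basisFun_repr] using this


/-- a nontrivial radial homogeneous solution exists only for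
`α = 2` and is given by the explicit point-source formula. -/
theorem stmt19 (α : ℝ) (V : E3 → E3) (P : E3 → ℝ) (h : IsHomogEuler α V P)
    (hrad : ∀ x : E3, x ≠ 0 → cross3 (V x) x = 0)
    (hne : ∃ x : E3, x ≠ 0 ∧ V x ≠ 0) :
    α = 2 ∧ ∃ κ : ℝ, κ ≠ 0 ∧ ∀ x : E3, x ≠ 0 →
      V x = (κ / ‖x‖ ^ 3) • x ∧ P x = -κ ^ 2 / (2 * ‖x‖ ^ 4) := by
  obtain ⟨x₀, hx₀, hV₀⟩ := hne
  set S : Set E3 := {(0 : E3)}ᶜ with hS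
  have hmem : ∀ {x : E3}, x ≠ 0 → x ∈ S := fun hx => by simpa [hS] using hx
  have hSo : IsOpen S := isOpen_compl_singleton
  have hSc : IsPreconnected S := by
    refine (isConnected_compl_singleton_of_one_lt_rank ?_ 0).isPreconnected
    rw [← Module.finrank_eq_rank, finrank_euclideanSpace_fin]
    exact_mod_cast (by norm_num : (1:ℕ) < 3)
  -- differentiability
  have hVd : ∀ x : E3, x ≠ 0 → DifferentiableAt ℝ V x := fun x hx =>
    (h.contV.differentiableOn one_ne_zero).differentiableAt (hSo.mem_nhds (hmem hx))
  have hPd : ∀ x : E3, x ≠ 0 → DifferentiableAt ℝ P x := fun x hx =>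
    (h.contP.differentiableOn one_ne_zero).differentiableAt (hSo.mem_nhds (hmem hx))
  -- the radial profile
  set f : E3 → ℝ := fun y => (inner ℝ (V y) y : ℝ) / (inner ℝ y y : ℝ) with hf
  have hVf : ∀ x : E3, x ≠ 0 → V x = f x • x := by
    intro x hx
    have := aux_radial_decomp (V x) x hx (hrad x hx)
    rw [this]
    congr 2
    rw [real_inner_self_eq_norm_sq]
  have hfd : ∀ x : E3, x ≠ 0 → DifferentiableAt ℝ f x := by
    intro x hx
    have h1 : DifferentiableAt ℝ (fun y : E3 => (inner ℝ (V y) y : ℝ)) x :=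
      (hVd x hx).inner ℝ differentiableAt_fun_id
    have h2 : DifferentiableAt ℝ (fun y : E3 => (inner ℝ y y : ℝ)) x :=
      differentiableAt_fun_id.inner ℝ differentiableAt_fun_id
    have h3 : DifferentiableAt ℝ (fun y : E3 => (inner ℝ (V y) y : ℝ) * ((inner ℝ y y : ℝ))⁻¹) x :=
      h1.mul (h2.inv ((inner_self_ne_zero (𝕜 := ℝ) (x := x)).2 hx))
    simpa [hf, div_eq_mul_inv] using h3
  -- derivative of V in terms of f
  have hDV : ∀ x : E3, x ≠ 0 → fderiv ℝ V x =
      f x • ContinuousLinearMap.id ℝ E3 + (fderiv ℝ f x).smulRight x := by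
    intro x hx
    have hsm : HasFDerivAt (fun y => f y • y)
        (f x • ContinuousLinearMap.id ℝ E3 + (fderiv ℝ f x).smulRight x) x :=
      (hfd x hx).hasFDerivAt.smul (hasFDerivAt_id x)
    have hev : V =ᶠ[nhds x] fun y => f y • y := by
      filter_upwards [hSo.mem_nhds (hmem hx)] with y hy
      exact hVf y (by simpa [hS] using hy)
    rw [hev.fderiv_eq, hsm.fderiv]
  -- Euler identity for V
  have hVxx : ∀ x : E3, x ≠ 0 → fderiv ℝ V x x = (-α) • V x := fun x hx =>
    aux_fderiv_hom V α x (hVd x hx) (fun l hl => h.homV l hl x hx)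
  -- radial derivative of f
  have hLx : ∀ x : E3, x ≠ 0 → fderiv ℝ f x x = -((1 + α) * f x) := by
    intro x hx
    have e1 : f x • x + (fderiv ℝ f x x) • x = (-α * f x) • x := by
      have e0 := hVxx x hx
      rw [hDV x hx] at e0
      simpa [ContinuousLinearMap.add_apply, ContinuousLinearMap.smul_apply,
        ContinuousLinearMap.smulRight_apply, ContinuousLinearMap.coe_id',
        hVf x hx, smul_smul] using e0
    have e2 : (f x + fderiv ℝ f x x - (-α * f x)) • x = 0 := by
      rw [sub_smul, add_smul, e1, sub_self]
    rcases smul_eq_zero.1 e2 with h' | h'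
    · linarith
    · exact absurd h' hx
  -- divergence computation
  have hdiv : ∀ x : E3, x ≠ 0 → (2 - α) * f x = 0 := by
    intro x hx
    have hterm : ∀ i : Fin 3, fderiv ℝ V x (e3 i) i
        = f x * (e3 i i) + fderiv ℝ f x (e3 i) * x i := by
      intro i
      rw [hDV x hx]
      simp [ContinuousLinearMap.add_apply, ContinuousLinearMap.smul_apply,
        ContinuousLinearMap.smulRight_apply, ContinuousLinearMap.coe_id',
        PiLp.add_apply, PiLp.smul_apply, smul_eq_mul]
    have he3 : ∀ i : Fin 3, e3 i i = (1 : ℝ) := by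
      intro i; simp [e3, EuclideanSpace.single_apply]
    have hLsum : fderiv ℝ f x x = ∑ i, fderiv ℝ f x (e3 i) * x i := by
      have e0 : fderiv ℝ f x x = fderiv ℝ f x (∑ i, x i • e3 i) := by
        rw [aux_sum_coord]
      rw [e0, map_sum]
      refine Finset.sum_congr rfl fun i _ => ?_
      rw [ContinuousLinearMap.map_smul, smul_eq_mul, mul_comm]
    have hd0 := h.divFree x hx
    rw [div3] at hd0
    have hsum3 : ∑ i : Fin 3, ((fderiv ℝ V x) (e3 i)) i
        = 3 * f x + ∑ i : Fin 3, fderiv ℝ f x (e3 i) * x i := by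
      rw [Fin.sum_univ_three, Fin.sum_univ_three, hterm 0, hterm 1, hterm 2,
        he3 0, he3 1, he3 2]
      ring
    have key : (0 : ℝ) = 3 * f x + fderiv ℝ f x x := by
      rw [hLsum, ← hd0, hsum3]
    have := hLx x hx
    nlinarith [this]
  -- f is nonzero at x₀, hence α = 2
  have hfx₀ : f x₀ ≠ 0 := by
    intro h0
    exact hV₀ (by rw [hVf x₀ hx₀, h0, zero_smul])
  have hα : α = 2 := by
    have := hdiv x₀ hx₀
    rcases mul_eq_zero.1 this with h' | h'
    · linarith
    · exact absurd h' hfx₀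
  subst hα
  refine ⟨rfl, ?_⟩
  -- gradient of P
  have hgrad : ∀ x : E3, x ≠ 0 → gradient P x = (2 * f x ^ 2) • x := by
    intro x hx
    have he := h.euler x hx
    have hVV : fderiv ℝ V x (V x) = (-2 * f x ^ 2) • x := by
      conv_lhs => rw [hVf x hx]
      rw [ContinuousLinearMap.map_smul, hVxx x hx, hVf x hx, smul_smul, smul_smul]
      congr 1
      ring
    have : gradient P x = -(fderiv ℝ V x (V x)) := by
      rw [← sub_eq_zero]
      rw [sub_neg_eq_add, add_comm]
      exact he
    rw [this, hVV, ← neg_smul]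
    congr 1
    ring
  have hfP : ∀ (x v : E3), fderiv ℝ P x v = (inner ℝ (gradient P x) v : ℝ) := fun x v =>
    (InnerProductSpace.toDual_symm_apply).symm
  -- pressure formula in terms of f
  have hPx : ∀ x : E3, x ≠ 0 → P x = -(f x ^ 2 * ‖x‖ ^ 2) / 2 := by
    intro x hx
    have hhom : ∀ l : ℝ, 0 < l → P (l • x) = l ^ (-(4:ℝ)) • P x := by
      intro l hl
      rw [h.homP l hl x hx, smul_eq_mul]
      norm_num
    have e1 : fderiv ℝ P x x = (-(4:ℝ)) • P x :=
      aux_fderiv_hom P 4 x (hPd x hx) hhom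
    rw [hfP x x, hgrad x hx, real_inner_smul_left, real_inner_self_eq_norm_sq] at e1
    rw [smul_eq_mul] at e1
    nlinarith [e1]
  -- P * ‖·‖⁴ is constant
  set g : E3 → ℝ := fun y => P y * (‖y‖ ^ 2 * ‖y‖ ^ 2) with hg
  have hg0 : ∀ x ∈ S, HasFDerivAt g (0 : E3 →L[ℝ] ℝ) x := by
    intro x hxS
    have hx : x ≠ 0 := by simpa [hS] using hxS
    have hN : HasFDerivAt (fun y : E3 => ‖y‖ ^ 2) (2 • innerSL ℝ x) x :=
      (hasStrictFDerivAt_norm_sq x).hasFDerivAt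
    have hM : HasFDerivAt (fun y : E3 => ‖y‖ ^ 2 * ‖y‖ ^ 2)
        ((‖x‖ ^ 2) • (2 • innerSL ℝ x) + (‖x‖ ^ 2) • (2 • innerSL ℝ x)) x := hN.mul hN
    have hPfd : HasFDerivAt P (fderiv ℝ P x) x := (hPd x hx).hasFDerivAt
    have hgd := hPfd.mul hM
    have hD : (P x • ((‖x‖ ^ 2) • (2 • innerSL ℝ x) + (‖x‖ ^ 2) • (2 • innerSL ℝ x))
        + (‖x‖ ^ 2 * ‖x‖ ^ 2) • fderiv ℝ P x) = (0 : E3 →L[ℝ] ℝ) := by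
      ext v
      simp only [ContinuousLinearMap.add_apply, ContinuousLinearMap.smul_apply,
        ContinuousLinearMap.zero_apply, smul_eq_mul, innerSL_apply_apply]
      rw [hfP x v, hgrad x hx, real_inner_smul_left, hPx x hx]
      ring
    rw [hD] at hgd
    exact hgd
  have hgc : ∀ x : E3, x ≠ 0 → g x = g x₀ := fun x hx =>
    aux_const_of_hasFDerivAt_zero hSo hSc hg0 (hmem hx) (hmem hx₀)
  -- the function f x * ‖x‖³ is constant
  set q : E3 → ℝ := fun y => f y * ‖y‖ ^ 3 with hq
  have hsq : ∀ x : E3, x ≠ 0 → q x ^ 2 = -2 * g x₀ := by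
    intro x hx
    rw [← hgc x hx, hg]
    show (f x * ‖x‖ ^ 3) ^ 2 = -2 * (P x * (‖x‖ ^ 2 * ‖x‖ ^ 2))
    rw [hPx x hx]
    ring
  have hq₀ : q x₀ ≠ 0 := by
    have : ‖x₀‖ ≠ 0 := norm_ne_zero_iff.2 hx₀
    simp only [hq]
    exact mul_ne_zero hfx₀ (pow_ne_zero 3 this)
  have hqne : ∀ x : E3, x ≠ 0 → q x ≠ 0 := by
    intro x hx h0
    have e1 := hsq x hx
    have e2 := hsq x₀ hx₀
    rw [h0] at e1
    have : q x₀ ^ 2 = 0 := by rw [e2, ← e1]; ring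
    exact hq₀ (pow_eq_zero_iff (by norm_num)|>.1 this)
  have hqcont : ContinuousOn q S := by
    refine ContinuousOn.mul (ContinuousOn.div ?_ ?_ ?_) ((continuous_norm.pow 3).continuousOn)
    · exact h.contV.continuousOn.inner (continuous_id.continuousOn : ContinuousOn (fun y : E3 => y) _)
    · exact (continuous_id.continuousOn : ContinuousOn (fun y : E3 => y) _).inner
        (continuous_id.continuousOn : ContinuousOn (fun y : E3 => y) _)
    · intro y hy
      exact (inner_self_ne_zero (𝕜 := ℝ)).2 (by simpa [hS] using hy)
  -- same sign everywhere
  have hsame : ∀ x : E3, x ≠ 0 → 0 < q x * q x₀ := by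
    intro x hx
    rcases lt_or_gt_of_ne (hqne x hx) with hxneg | hxpos <;>
      rcases lt_or_gt_of_ne hq₀ with h₀neg | h₀pos
    · exact mul_pos_of_neg_of_neg hxneg h₀neg
    · exfalso
      have hsub : Set.Icc (q x) (q x₀) ⊆ q '' S :=
        hSc.intermediate_value (hmem hx) (hmem hx₀) hqcont
      obtain ⟨z, hzS, hz0⟩ := hsub ⟨le_of_lt hxneg, le_of_lt h₀pos⟩
      exact hqne z (by simpa [hS] using hzS) hz0
    · exfalso
      have hsub : Set.Icc (q x₀) (q x) ⊆ q '' S :=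
        hSc.intermediate_value (hmem hx₀) (hmem hx) hqcont
      obtain ⟨z, hzS, hz0⟩ := hsub ⟨le_of_lt h₀neg, le_of_lt hxpos⟩
      exact hqne z (by simpa [hS] using hzS) hz0
    · exact mul_pos hxpos h₀pos
  have hqconst : ∀ x : E3, x ≠ 0 → q x = q x₀ := by
    intro x hx
    have hsqeq : q x ^ 2 = q x₀ ^ 2 := by rw [hsq x hx, hsq x₀ hx₀]
    have hmul : (q x - q x₀) * (q x + q x₀) = 0 := by linear_combination hsqeq
    rcases mul_eq_zero.1 hmul with h' | h'
    · linarith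
    · nlinarith [hsame x hx]
  refine ⟨q x₀, hq₀, fun x hx => ⟨?_, ?_⟩⟩
  · rw [hVf x hx]
    congr 1
    have hn3 : ‖x‖ ^ 3 ≠ 0 := pow_ne_zero 3 (norm_ne_zero_iff.2 hx)
    rw [eq_div_iff hn3, ← hqconst x hx]
  · rw [hPx x hx]
    have hfx : f x = q x₀ / ‖x‖ ^ 3 := by
      have hn3 : ‖x‖ ^ 3 ≠ 0 := pow_ne_zero 3 (norm_ne_zero_iff.2 hx)
      rw [eq_div_iff hn3, ← hqconst x hx]
    rw [hfx]
    exact aux_alg (q x₀) ‖x‖ (norm_ne_zero_iff.2 hx)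
end
end
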